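/- arXiv:0907.4340 — 13 statements merged into one kernel-verified Lean document; each statement's English description precedes it below -/
import Mathlib

section
/- Let ≼ be a Conradian left-invariant order on a group G. For every positive g ∈ G, the set S_g = {f ∈ G : fⁿ ≺ g for all n ∈ ℤ} is a convex subgroup of G. -/
namespace SgConrad

variable {G : Type*} [Group G] [LinearOrder G]

private lemma lmul_lt (hleft : ∀ f a b : G, a ≤ b → f * a ≤ f * b)
    (f : G) {a b : G} (h : a < b) : f * a < f * b :=
  lt_of_le_of_ne (hleft f a b h.le) fun he => h.ne (mul_left_cancel he)

private lemma one_lt_pow'' (hleft : ∀ f a b : G, a ≤ b → f * a ≤ f * b)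
    {a : G} (ha : 1 < a) : ∀ k : ℕ, 1 < a ^ (k + 1) := by
  intro k
  induction k with
  | zero => simpa using ha
  | succ k ih =>
    have h1 : a ^ (k + 1) * 1 ≤ a ^ (k + 1) * a := hleft _ _ _ ha.le
    rw [mul_one] at h1
    calc (1 : G) < a ^ (k + 1) := ih
      _ ≤ a ^ (k + 1) * a := h1
      _ = a ^ (k + 2) := (pow_succ a (k + 1)).symm

private lemma pow_le_one'' (hleft : ∀ f a b : G, a ≤ b → f * a ≤ f * b)
    {a : G} (ha : a ≤ 1) : ∀ k : ℕ, a ^ k ≤ 1 := by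
  intro k
  induction k with
  | zero => simp
  | succ k ih =>
    calc a ^ (k + 1) = a ^ k * a := pow_succ a k
      _ ≤ a ^ k * 1 := hleft _ _ _ ha
      _ = a ^ k := mul_one _
      _ ≤ 1 := ih

/-- The Conradian property implies the `n = 2` form: `g < f * g ^ 2`. -/
private lemma conrad2 (hleft : ∀ f a b : G, a ≤ b → f * a ≤ f * b)
    (hC : ∀ f g : G, 1 < f → 1 < g → ∃ n : ℕ, 0 < n ∧ g < f * g ^ n)
    {f g : G} (hf : 1 < f) (hg : 1 < g) : g < f * g ^ 2 := by
  by_contra hcon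
  push_neg at hcon
  -- hcon : f * g ^ 2 ≤ g
  have hfe : f < f * g := by
    have := lmul_lt hleft f hg
    simpa using this
  have he1 : (1 : G) < f * g := hf.trans hfe
  have heg : (f * g) * g ≤ g := by
    have : (f * g) * g = f * g ^ 2 := by rw [mul_assoc, ← pow_two]
    rw [this]; exact hcon
  have hkg : ∀ k : ℕ, (f * g) ^ (k + 1) * g ≤ g := by
    intro k
    induction k with
    | zero => simpa using heg
    | succ k ih =>
      have h2 : (f * g) ^ (k + 2) * g = (f * g) * ((f * g) ^ (k + 1) * g) := by
        rw [pow_succ' (f * g) (k + 1), mul_assoc]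
      rw [h2]
      calc (f * g) * ((f * g) ^ (k + 1) * g) ≤ (f * g) * g := hleft _ _ _ ih
        _ ≤ g := heg
  have hek : ∀ k : ℕ, (f * g) ^ (k + 1) ≤ g := by
    intro k
    calc (f * g) ^ (k + 1) = (f * g) ^ (k + 1) * 1 := (mul_one _).symm
      _ ≤ (f * g) ^ (k + 1) * g := hleft _ _ _ hg.le
      _ ≤ g := hkg k
  obtain ⟨n, hn, hlt⟩ := hC f (f * g) hf he1
  have h2 := lmul_lt hleft f⁻¹ hlt
  have h3 : g < (f * g) ^ n := by simpa [inv_mul_cancel_left] using h2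
  obtain ⟨k, rfl⟩ : ∃ k, n = k + 1 := ⟨n - 1, by omega⟩
  exact absurd h3 (not_lt.2 (hek k))

/-- `u ≤ 1` and `1 < y` imply `u * y < y ^ 2`. -/
private lemma key (hleft : ∀ f a b : G, a ≤ b → f * a ≤ f * b)
    (hC : ∀ f g : G, 1 < f → 1 < g → ∃ n : ℕ, 0 < n ∧ g < f * g ^ n)
    {u y : G} (hu : u ≤ 1) (hy : 1 < y) : u * y < y ^ 2 := by
  rcases hu.lt_or_eq with hu' | rfl
  · have hu1 : (1 : G) < u⁻¹ := by
      have := lmul_lt hleft u⁻¹ hu'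
      simpa using this
    have h1 : y < u⁻¹ * y ^ 2 := conrad2 hleft hC hu1 hy
    have h2 := lmul_lt hleft u h1
    simpa [mul_inv_cancel_left] using h2
  · have : y * 1 < y * y := lmul_lt hleft y hy
    simpa [pow_two] using this

/-- Right multiplication at the cost of squaring: `x ≤ z`, `1 < y` give `x * y < z * y ^ 2`. -/
private lemma step (hleft : ∀ f a b : G, a ≤ b → f * a ≤ f * b)
    (hC : ∀ f g : G, 1 < f → 1 < g → ∃ n : ℕ, 0 < n ∧ g < f * g ^ n)
    {x z y : G} (hxz : x ≤ z) (hy : 1 < y) : x * y < z * y ^ 2 := by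
  have h1 : z⁻¹ * x ≤ 1 := by
    have := hleft z⁻¹ x z hxz
    simpa using this
  have h2 : (z⁻¹ * x) * y < y ^ 2 := key hleft hC h1 hy
  have h3 := lmul_lt hleft z h2
  calc x * y = z * ((z⁻¹ * x) * y) := by group
    _ < z * y ^ 2 := h3

/-- Downward closedness: if `1 ≤ h ≤ a` and all powers of `a` are below `g`,
then so are all powers of `h`. -/
private lemma downward (hleft : ∀ f a b : G, a ≤ b → f * a ≤ f * b)
    (hC : ∀ f g : G, 1 < f → 1 < g → ∃ n : ℕ, 0 < n ∧ g < f * g ^ n)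
    {g a h : G} (hg : 1 < g) (ha : ∀ n : ℕ, 0 < n → a ^ n < g)
    (h1 : 1 ≤ h) (hha : h ≤ a) : ∀ m : ℕ, 0 < m → h ^ m < g := by
  rcases h1.lt_or_eq with hh | rfl
  · have ha1 : 1 < a := lt_of_lt_of_le hh hha
    have main : ∀ m : ℕ, ∃ K : ℕ, h ^ (m + 1) ≤ a ^ (K + 1) := by
      intro m
      induction m with
      | zero => exact ⟨0, by simpa using hha⟩
      | succ m ih =>
        obtain ⟨K, hK⟩ := ih
        have h2 : h ^ (m + 2) = h * h ^ (m + 1) := pow_succ' h (m + 1)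
        have h3 : h * h ^ (m + 1) ≤ h * a ^ (K + 1) := hleft _ _ _ hK
        have h4 : h * a ^ (K + 1) < a * (a ^ (K + 1)) ^ 2 :=
          step hleft hC hha (one_lt_pow'' hleft ha1 K)
        have h5 : a * (a ^ (K + 1)) ^ 2 = a ^ (2 * (K + 1) + 1) := by
          rw [← pow_mul, ← pow_succ']
          ring_nf
        refine ⟨2 * (K + 1), ?_⟩
        have : (2 * (K + 1)) + 1 = 2 * (K + 1) + 1 := rfl
        rw [h2]
        exact le_of_lt (calc h * h ^ (m + 1) ≤ h * a ^ (K + 1) := h3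
          _ < a ^ (2 * (K + 1) + 1) := h5 ▸ h4)
    intro m hm
    obtain ⟨k, rfl⟩ : ∃ k, m = k + 1 := ⟨m - 1, by omega⟩
    obtain ⟨K, hK⟩ := main k
    exact lt_of_le_of_lt hK (ha (K + 1) (by omega))
  · intro m hm; simpa using hg

/-- Product closedness for nonnegative elements. -/
private lemma prodmem (hleft : ∀ f a b : G, a ≤ b → f * a ≤ f * b)
    (hC : ∀ f g : G, 1 < f → 1 < g → ∃ n : ℕ, 0 < n ∧ g < f * g ^ n)
    {g a b : G} (hg : 1 < g) (ha1 : 1 ≤ a) (hb1 : 1 ≤ b)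
    (ha : ∀ n : ℕ, 0 < n → a ^ n < g) (hb : ∀ n : ℕ, 0 < n → b ^ n < g) :
    ∀ m : ℕ, 0 < m → (a * b) ^ m < g := by
  set c := max a b with hc
  have hac : a ≤ c := le_max_left a b
  have hbc : b ≤ c := le_max_right a b
  have hc1 : 1 ≤ c := le_trans ha1 hac
  have hcpow : ∀ n : ℕ, 0 < n → c ^ n < g := by
    rcases max_cases a b with ⟨h1, _⟩ | ⟨h1, _⟩ <;> rw [hc, h1] <;> assumption
  rcases hc1.lt_or_eq with hc2 | hc2
  · -- 1 < c
    have base : a * b < c ^ 3 := by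
      have h1 : a * b ≤ a * c := hleft _ _ _ hbc
      have h2 : a * c < c * c ^ 2 := step hleft hC hac hc2
      have h3 : c * c ^ 2 = c ^ 3 := (pow_succ' c 2).symm
      exact lt_of_le_of_lt h1 (h3 ▸ h2)
    have main : ∀ m : ℕ, ∃ K : ℕ, (a * b) ^ (m + 1) ≤ c ^ (K + 1) := by
      intro m
      induction m with
      | zero => exact ⟨2, by simpa using base.le⟩
      | succ m ih =>
        obtain ⟨K, hK⟩ := ih
        have h2 : (a * b) ^ (m + 2) = (a * b) * (a * b) ^ (m + 1) := pow_succ' _ _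
        have h3 : (a * b) * (a * b) ^ (m + 1) ≤ (a * b) * c ^ (K + 1) := hleft _ _ _ hK
        have h4 : (a * b) * c ^ (K + 1) < c ^ 3 * (c ^ (K + 1)) ^ 2 :=
          step hleft hC base.le (one_lt_pow'' hleft hc2 K)
        have h5 : c ^ 3 * (c ^ (K + 1)) ^ 2 = c ^ ((2 * (K + 1) + 2) + 1) := by
          rw [← pow_mul, ← pow_add]
          ring_nf
        exact ⟨2 * (K + 1) + 2, by rw [h2]; exact le_of_lt (lt_of_le_of_lt h3 (h5 ▸ h4))⟩
    intro m hm
    obtain ⟨k, rfl⟩ : ∃ k, m = k + 1 := ⟨m - 1, by omega⟩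
    obtain ⟨K, hK⟩ := main k
    exact lt_of_le_of_lt hK (hcpow (K + 1) (by omega))
  · -- c = 1, so a = b = 1
    have haeq : a = 1 := le_antisymm (hc2 ▸ hac) ha1
    have hbeq : b = 1 := le_antisymm (hc2 ▸ hbc) hb1
    intro m hm
    simp [haeq, hbeq, hg]

/-- From bounded natural powers (for a nonnegative element) to bounded integer powers. -/
private lemma natpows (hleft : ∀ f a b : G, a ≤ b → f * a ≤ f * b)
    {g f : G} (hg : 1 < g) (hf : 1 ≤ f)
    (h : ∀ n : ℕ, 0 < n → f ^ n < g) : ∀ n : ℤ, f ^ n < g := by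
  intro n
  obtain m | m := n
  · rcases Nat.eq_zero_or_pos m with h0 | h0
    · simp [h0, hg]
    · simpa using h m h0
  · rw [zpow_negSucc]
    have hinv : f⁻¹ ≤ 1 := by
      have := hleft f⁻¹ 1 f hf
      simpa using this
    have h2 : (f⁻¹) ^ (m + 1) ≤ 1 := pow_le_one'' hleft hinv (m + 1)
    calc (f ^ (m + 1))⁻¹ = (f⁻¹) ^ (m + 1) := (inv_pow f (m + 1)).symm
      _ ≤ 1 := h2
      _ < g := hg

private lemma natextract {g f : G} (h : ∀ n : ℤ, f ^ n < g) :
    ∀ n : ℕ, 0 < n → f ^ n < g := fun n _ => by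
  simpa using h (n : ℤ)

private lemma smem_inv {g x : G} (hx : ∀ n : ℤ, x ^ n < g) :
    ∀ n : ℤ, (x⁻¹) ^ n < g := fun n => by
  simpa [inv_zpow, zpow_neg] using hx (-n)

private lemma smem_of_inv {g x : G} (hx : ∀ n : ℤ, (x⁻¹) ^ n < g) :
    ∀ n : ℤ, x ^ n < g := by
  have := smem_inv hx
  simpa using this

private lemma sqpows {g x : G} (hx : ∀ n : ℕ, 0 < n → x ^ n < g) :
    ∀ n : ℕ, 0 < n → (x ^ 2) ^ n < g := fun n hn => by
  rw [← pow_mul]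
  exact hx (2 * n) (by omega)

/-- Multiplicative closure of `S_g`. -/
private lemma smul_closed (hleft : ∀ f a b : G, a ≤ b → f * a ≤ f * b)
    (hC : ∀ f g : G, 1 < f → 1 < g → ∃ n : ℕ, 0 < n ∧ g < f * g ^ n)
    {g : G} (hg : 1 < g) :
    ∀ a b : G, (∀ n : ℤ, a ^ n < g) → (∀ n : ℤ, b ^ n < g) →
      ∀ n : ℤ, (a * b) ^ n < g := by
  intro a b ha hb
  have one_le_inv' : ∀ {x : G}, x ≤ 1 → 1 ≤ x⁻¹ := by
    intro x hx
    have := hleft x⁻¹ x 1 hx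
    simpa using this
  have inv_le_one' : ∀ {x : G}, 1 ≤ x → x⁻¹ ≤ 1 := by
    intro x hx
    have := hleft x⁻¹ 1 x hx
    simpa using this
  rcases le_total 1 a with ha1 | ha1 <;> rcases le_total 1 b with hb1 | hb1
  · -- 1 ≤ a, 1 ≤ b
    have hab1 : 1 ≤ a * b := by
      have := hleft a 1 b hb1
      calc (1 : G) ≤ a := ha1
        _ = a * 1 := (mul_one a).symm
        _ ≤ a * b := hleft a 1 b hb1
    exact natpows hleft hg hab1
      (prodmem hleft hC hg ha1 hb1 (natextract ha) (natextract hb))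
  · -- 1 ≤ a, b ≤ 1
    rcases le_total 1 (a * b) with hab | hab
    · -- 1 ≤ a * b ≤ a
      have hba : a * b ≤ a := by
        have := hleft a b 1 hb1
        simpa using this
      exact natpows hleft hg hab
        (downward hleft hC hg (natextract ha) hab hba)
    · -- a * b ≤ 1 : use the inverse
      apply smem_of_inv
      have hinv1 : 1 ≤ (a * b)⁻¹ := one_le_inv' hab
      have hbnd : (a * b)⁻¹ ≤ b⁻¹ := by
        rw [mul_inv_rev]
        have := hleft b⁻¹ a⁻¹ 1 (inv_le_one' ha1)
        simpa using this
      exact natpows hleft hg hinv1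
        (downward hleft hC hg (natextract (smem_inv hb)) hinv1 hbnd)
  · -- a ≤ 1, 1 ≤ b
    rcases le_total 1 (a * b) with hab | hab
    · rcases hb1.lt_or_eq with hb2 | rfl
      · -- 1 < b : a * b < b ^ 2
        have hbnd : a * b < b ^ 2 := key hleft hC ha1 hb2
        exact natpows hleft hg hab
          (downward hleft hC hg (sqpows (natextract hb)) hab hbnd.le)
      · simpa using ha
    · -- a * b ≤ 1
      apply smem_of_inv
      have hinv1 : 1 ≤ (a * b)⁻¹ := one_le_inv' hab
      rcases ha1.lt_or_eq with ha2 | rfl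
      · have hai : (1 : G) < a⁻¹ := by
          have := lmul_lt hleft a⁻¹ ha2
          simpa using this
        have hbnd : (a * b)⁻¹ < (a⁻¹) ^ 2 := by
          rw [mul_inv_rev]
          exact key hleft hC (inv_le_one' hb1) hai
        exact natpows hleft hg hinv1
          (downward hleft hC hg (sqpows (natextract (smem_inv ha))) hinv1 hbnd.le)
      · simpa using smem_inv hb
  · -- a ≤ 1, b ≤ 1 : use inverses, both nonnegative
    apply smem_of_inv
    have h1 : 1 ≤ b⁻¹ := one_le_inv' hb1
    have h2 : 1 ≤ a⁻¹ := one_le_inv' ha1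
    have h3 : ∀ n : ℤ, (b⁻¹ * a⁻¹) ^ n < g := by
      have h4 : 1 ≤ b⁻¹ * a⁻¹ := by
        calc (1 : G) ≤ b⁻¹ := h1
          _ = b⁻¹ * 1 := (mul_one _).symm
          _ ≤ b⁻¹ * a⁻¹ := hleft _ _ _ h2
      exact natpows hleft hg h4
        (prodmem hleft hC hg h1 h2 (natextract (smem_inv hb)) (natextract (smem_inv ha)))
    intro n
    rw [mul_inv_rev]
    exact h3 n

/-- Convexity of `S_g`. -/
private lemma convex_aux (hleft : ∀ f a b : G, a ≤ b → f * a ≤ f * b)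
    (hC : ∀ f g : G, 1 < f → 1 < g → ∃ n : ℕ, 0 < n ∧ g < f * g ^ n)
    {g : G} (hg : 1 < g) {f₁ f₂ h : G}
    (h1 : ∀ n : ℤ, f₁ ^ n < g) (h2 : ∀ n : ℤ, f₂ ^ n < g)
    (hl : f₁ < h) (hr : h < f₂) : ∀ n : ℤ, h ^ n < g := by
  rcases le_total 1 h with hh | hh
  · exact natpows hleft hg hh (downward hleft hC hg (natextract h2) hh hr.le)
  · -- h ≤ 1 : bound h⁻¹ by (f₁⁻¹) ^ 2
    apply smem_of_inv
    have hinv1 : 1 ≤ h⁻¹ := by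
      have := hleft h⁻¹ h 1 hh
      simpa using this
    have hf1 : f₁ < 1 := lt_of_lt_of_le hl hh
    have hf1i : (1 : G) < f₁⁻¹ := by
      have := lmul_lt hleft f₁⁻¹ hf1
      simpa using this
    have hu : h⁻¹ * f₁ ≤ 1 := by
      have := lmul_lt hleft h⁻¹ hl
      simpa using this.le
    have hbnd : h⁻¹ < (f₁⁻¹) ^ 2 := by
      have := key hleft hC hu hf1i
      simpa [mul_assoc] using this
    exact natpows hleft hg hinv1
      (downward hleft hC hg (sqpows (natextract (smem_inv h1))) hinv1 hbnd.le)

end SgConrad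

/-- For a Conradian left-invariant order ≼ on G and any positive g,
the set S_g = {f : fⁿ ≺ g for all n ∈ ℤ} is a convex subgroup. -/
theorem Sg_convex_subgroup {G : Type*} [Group G] [LinearOrder G]
    (hleft : ∀ f a b : G, a ≤ b → f * a ≤ f * b)
    (hC : ∀ f g : G, 1 < f → 1 < g → ∃ n : ℕ, 0 < n ∧ g < f * g ^ n)
    (g : G) (hg : 1 < g) :
    ∃ H : Subgroup G, ((H : Set G) = {f : G | ∀ n : ℤ, f ^ n < g}) ∧
      (∀ f₁ f₂ h : G, f₁ ∈ H → f₂ ∈ H → f₁ < h → h < f₂ → h ∈ H) := by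
  refine ⟨{ carrier := {f : G | ∀ n : ℤ, f ^ n < g},
            one_mem' := fun n => by simpa using hg,
            mul_mem' := fun {a b} ha hb => SgConrad.smul_closed hleft hC hg a b ha hb,
            inv_mem' := fun {x} hx => SgConrad.smem_inv hx }, rfl, ?_⟩
  intro f₁ f₂ h hf₁ hf₂ hlt₁ hlt₂
  exact SgConrad.convex_aux hleft hC hg hf₁ hf₂ hlt₁ hlt₂
end

section
/- Let ≼ be a Conradian left-invariant order on a group G and suppose 1 ≺ g ≺ f. Then there exists n ∈ ℕ such that g⁻¹·fⁿ·g ≻ f. -/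
/-- If ≼ is Conradian and 1 ≺ g ≺ f, then g⁻¹·fⁿ·g ≻ f for some n ∈ ℕ. -/
theorem conradian_conjugate {G : Type*} [Group G] [LinearOrder G]
    (hleft : ∀ f a b : G, a ≤ b → f * a ≤ f * b)
    (hC : ∀ f g : G, 1 < f → 1 < g → ∃ n : ℕ, 0 < n ∧ g < f * g ^ n)
    (f g : G) (h1 : 1 < g) (h2 : g < f) :
    ∃ n : ℕ, 0 < n ∧ f < g⁻¹ * f ^ n * g := by
  have hlt : ∀ c a b : G, a < b → c * a < c * b := by
    intro c a b h
    exact lt_of_le_of_ne (hleft c a b h.le) (fun e => h.ne (mul_left_cancel e))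
  have hgf : (1 : G) < g⁻¹ * f := by
    have := hlt g⁻¹ g f h2
    simpa using this
  obtain ⟨n, hn, h⟩ := hC (g⁻¹ * f) f hgf (h1.trans h2)
  refine ⟨n + 1, Nat.succ_pos _, ?_⟩
  have h' : f < g⁻¹ * f ^ (n + 1) := by
    have : g⁻¹ * f * f ^ n = g⁻¹ * f ^ (n + 1) := by
      rw [pow_succ']; group
    rwa [this] at h
  have h2' : g⁻¹ * f ^ (n + 1) < g⁻¹ * f ^ (n + 1) * g := by
    have := hlt (g⁻¹ * f ^ (n + 1)) 1 g h1
    simpa using this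
  exact h'.trans h2'
end

section
/- Let ≼ be a Conradian left-invariant order on a group G, and let H ⊆ K be convex subgroups of G such that the pair (H, K) is a convex jump (H is the maximal convex subgroup not containing some element g, and K is the minimal convex subgroup containing g). Then H is normal in K. -/
/-- A subgroup is convex for the order if whenever f₁ ≺ h ≺ f₂ with f₁, f₂ ∈ H, then h ∈ H. -/
def IsConvexSubgroup {G : Type*} [Group G] [LinearOrder G] (H : Subgroup G) : Prop :=
  ∀ f₁ f₂ h : G, f₁ ∈ H → f₂ ∈ H → f₁ < h → h < f₂ → h ∈ H

section CJAux

variable {G : Type*} [Group G] [LinearOrder G]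

private lemma cj_lmul (hleft : ∀ f a b : G, a ≤ b → f * a ≤ f * b)
    (f : G) {a b : G} (h : a < b) : f * a < f * b := by
  rcases (hleft f a b h.le).lt_or_eq with h' | h'
  · exact h'
  · exact absurd (mul_left_cancel h') h.ne

private lemma cj_inv_lt_one (hleft : ∀ f a b : G, a ≤ b → f * a ≤ f * b)
    {a : G} (h : 1 < a) : a⁻¹ < 1 := by
  have := cj_lmul hleft a⁻¹ h
  simpa using this

private lemma cj_one_lt_inv (hleft : ∀ f a b : G, a ≤ b → f * a ≤ f * b)
    {a : G} (h : a < 1) : 1 < a⁻¹ := by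
  have := cj_lmul hleft a⁻¹ h
  simpa using this

private lemma cj_one_lt_pow (hleft : ∀ f a b : G, a ≤ b → f * a ≤ f * b)
    {s : G} (hs : 1 < s) : ∀ n : ℕ, 0 < n → 1 < s ^ n := by
  intro n hn
  induction n with
  | zero => exact absurd hn (lt_irrefl 0)
  | succ k ih =>
    rcases Nat.eq_zero_or_pos k with hk | hk
    · subst hk; simpa using hs
    · have h1 : 1 < s ^ k := ih hk
      have h2 : s ^ k * 1 < s ^ k * s := cj_lmul hleft _ hs
      rw [mul_one] at h2
      calc (1:G) < s ^ k := h1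
        _ < s ^ k * s := h2
        _ = s ^ (k+1) := (pow_succ s k).symm

/-- K1 : for a > 1 and c > 1, every power of `c` is exceeded by `a * c^M` for suitable M. -/
private lemma cj_K1 (hleft : ∀ f a b : G, a ≤ b → f * a ≤ f * b)
    (hC : ∀ f g : G, 1 < f → 1 < g → ∃ n : ℕ, 0 < n ∧ g < f * g ^ n)
    {c a : G} (hc : 1 < c) (ha : 1 < a) :
    ∀ q : ℕ, ∃ M : ℕ, c ^ q < a * c ^ M := by
  intro q
  induction q with
  | zero => exact ⟨0, by simpa using ha⟩
  | succ k ih =>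
    obtain ⟨M, hM⟩ := ih
    have hb : 1 < (c ^ k)⁻¹ * (a * c ^ M) := by
      have := cj_lmul hleft (c ^ k)⁻¹ hM
      simpa using this
    obtain ⟨n, hn0, hn⟩ := hC _ c hb hc
    refine ⟨M + n, ?_⟩
    have h2 := cj_lmul hleft (c ^ k) hn
    calc c ^ (k+1) = c ^ k * c := pow_succ c k
      _ < c ^ k * ((c ^ k)⁻¹ * (a * c ^ M) * c ^ n) := h2
      _ = a * c ^ (M + n) := by
          rw [pow_add]
          simp [mul_assoc]

/-- K0' : the key lemma.  For c, s > 1 there is P with c^P * s * c⁻¹ > 1. -/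
private lemma cj_K0' (hleft : ∀ f a b : G, a ≤ b → f * a ≤ f * b)
    (hC : ∀ f g : G, 1 < f → 1 < g → ∃ n : ℕ, 0 < n ∧ g < f * g ^ n)
    {c s : G} (hc : 1 < c) (hs : 1 < s) :
    ∃ P : ℕ, 1 < c ^ P * s * c⁻¹ := by
  by_contra hcon
  push_neg at hcon
  -- ρ₁ = c * s⁻¹ * c⁻¹ > 1
  have hr1 : 1 < c * s⁻¹ * c⁻¹ := by
    have hne : c ^ 1 * s * c⁻¹ ≠ 1 := by
      intro he
      rw [pow_one] at he
      have h1 : c * s = c := by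
        have := mul_inv_eq_one.mp he
        simpa using this
      have : s = 1 := by
        have := mul_left_cancel (h1.trans (mul_one c).symm)
        exact this
      exact hs.ne' this
    have hlt : c ^ 1 * s * c⁻¹ < 1 := (hcon 1).lt_of_ne hne
    have := cj_one_lt_inv hleft hlt
    have e : (c ^ 1 * s * c⁻¹)⁻¹ = c * s⁻¹ * c⁻¹ := by group
    rwa [e] at this
  -- ρ₃ = c * s⁻¹ * (c^3)⁻¹ > 1
  have hr3 : 1 < c * s⁻¹ * (c ^ 3)⁻¹ := by
    have hne : c ^ 3 * s * c⁻¹ ≠ 1 := by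
      intro he
      have h1 : c ^ 3 * s = c := by
        have := mul_inv_eq_one.mp he
        simpa using this
      -- then 1 < s gives c^3 < c; but c < c^3, contradiction
      have h3 : c ^ 3 * 1 < c ^ 3 * s := cj_lmul hleft _ hs
      rw [mul_one, h1] at h3
      -- h3 : c ^ 3 < c ; but c < c^3
      have h4 : c < c ^ 3 := by
        have : 1 < c ^ 2 := cj_one_lt_pow hleft hc 2 (by norm_num)
        have h5 : c * 1 < c * c ^ 2 := cj_lmul hleft _ this
        rw [mul_one] at h5
        calc c < c * c ^ 2 := h5
          _ = c ^ 3 := by group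
      exact absurd h3 (lt_asymm h4)
    have hlt : c ^ 3 * s * c⁻¹ < 1 := (hcon 3).lt_of_ne hne
    have := cj_one_lt_inv hleft hlt
    have e : (c ^ 3 * s * c⁻¹)⁻¹ = c * s⁻¹ * (c ^ 3)⁻¹ := by group
    rwa [e] at this
  obtain ⟨n, hn0, hn⟩ := hC (c * s⁻¹ * (c ^ 3)⁻¹) (c * s⁻¹ * c⁻¹) hr3 hr1
  -- (c * s⁻¹ * c⁻¹)^n = c * (s^n)⁻¹ * c⁻¹
  have hconj : (c * s⁻¹ * c⁻¹) ^ n = c * (s ^ n)⁻¹ * c⁻¹ := by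
    have : ∀ m : ℕ, (c * s⁻¹ * c⁻¹) ^ m = c * (s⁻¹) ^ m * c⁻¹ := by
      intro m
      induction m with
      | zero => simp
      | succ k ih => rw [pow_succ, ih, pow_succ]; group
    rw [this n, inv_pow]
  rw [hconj] at hn
  have hSn : 1 < s ^ n := cj_one_lt_pow hleft hs n hn0
  have key := cj_lmul hleft (c * s ^ n * c ^ 2 * s * c⁻¹) hn
  rw [show c * s ^ n * c ^ 2 * s * c⁻¹ * (c * s⁻¹ * c⁻¹) = c * s ^ n * c by group,
      show c * s ^ n * c ^ 2 * s * c⁻¹ * (c * s⁻¹ * (c ^ 3)⁻¹ * (c * (s ^ n)⁻¹ * c⁻¹)) = 1 by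
        group] at key
  -- key : c * s^n * c < 1, but it is > 1
  have hpos : 1 < c * s ^ n * c := by
    have h1 : s ^ n * 1 < s ^ n * c := cj_lmul hleft _ hc
    rw [mul_one] at h1
    have h2 : 1 < s ^ n * c := lt_trans hSn h1
    have h3 : c * 1 < c * (s ^ n * c) := cj_lmul hleft _ h2
    rw [mul_one] at h3
    have h4 : c < c * (s ^ n * c) := h3
    rw [← mul_assoc] at h4
    exact lt_trans hc h4
  exact absurd key (lt_asymm hpos)

private lemma cj_K1' (hleft : ∀ f a b : G, a ≤ b → f * a ≤ f * b)
    (hC : ∀ f g : G, 1 < f → 1 < g → ∃ n : ℕ, 0 < n ∧ g < f * g ^ n)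
    {c s : G} (hc : 1 < c) (hs : 1 < s) :
    ∀ m : ℕ, ∃ P : ℕ, 1 < c ^ P * s * (c ^ m)⁻¹ := by
  intro m
  induction m with
  | zero => exact ⟨0, by simpa using hs⟩
  | succ k ih =>
    obtain ⟨P, hP⟩ := ih
    obtain ⟨Q, hQ⟩ := cj_K0' hleft hC hc hP
    refine ⟨Q + P, ?_⟩
    have e : c ^ Q * (c ^ P * s * (c ^ k)⁻¹) * c⁻¹ = c ^ (Q + P) * s * (c ^ (k+1))⁻¹ := by
      rw [pow_add, pow_succ, mul_inv_rev]
      have hcm : c⁻¹ * (c ^ k)⁻¹ = (c ^ k)⁻¹ * c⁻¹ := by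
        rw [← mul_inv_rev, ← mul_inv_rev, ← pow_succ, ← pow_succ']
      rw [hcm]
      simp [mul_assoc]
    rw [← e]
    exact hQ

/-- UB : if x < c^n then x * c^m is bounded above by a power of c. -/
private lemma cj_UB (hleft : ∀ f a b : G, a ≤ b → f * a ≤ f * b)
    (hC : ∀ f g : G, 1 < f → 1 < g → ∃ n : ℕ, 0 < n ∧ g < f * g ^ n)
    {c x : G} (hc : 1 < c) {n : ℕ} (h : x < c ^ n) :
    ∀ m : ℕ, ∃ N : ℕ, x * c ^ m < c ^ N := by
  intro m
  have ha : 1 < x⁻¹ * c ^ n := by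
    have := cj_lmul hleft x⁻¹ h
    simpa using this
  obtain ⟨M, hM⟩ := cj_K1 hleft hC hc ha m
  refine ⟨n + M, ?_⟩
  have h2 := cj_lmul hleft x hM
  calc x * c ^ m < x * (x⁻¹ * c ^ n * c ^ M) := h2
    _ = c ^ (n + M) := by rw [pow_add]; simp [mul_assoc]

/-- LB : if 1 < c^n * x then c^N * x * (c^m)⁻¹ > 1 for suitable N. -/
private lemma cj_LB (hleft : ∀ f a b : G, a ≤ b → f * a ≤ f * b)
    (hC : ∀ f g : G, 1 < f → 1 < g → ∃ n : ℕ, 0 < n ∧ g < f * g ^ n)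
    {c x : G} (hc : 1 < c) {n : ℕ} (h : 1 < c ^ n * x) :
    ∀ m : ℕ, ∃ N : ℕ, 1 < c ^ N * x * (c ^ m)⁻¹ := by
  intro m
  obtain ⟨P, hP⟩ := cj_K1' hleft hC hc h m
  refine ⟨P + n, ?_⟩
  have e : c ^ P * (c ^ n * x) * (c ^ m)⁻¹ = c ^ (P + n) * x * (c ^ m)⁻¹ := by
    rw [pow_add]; simp [mul_assoc]
  rwa [e] at hP

/-- The convex subgroup of elements bounded above (together with inverse) by powers of c. -/
private def cjE (hleft : ∀ f a b : G, a ≤ b → f * a ≤ f * b)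
    (hC : ∀ f g : G, 1 < f → 1 < g → ∃ n : ℕ, 0 < n ∧ g < f * g ^ n)
    (c : G) (hc : 1 < c) : Subgroup G where
  carrier := {x | (∃ n : ℕ, x < c ^ n) ∧ (∃ n : ℕ, x⁻¹ < c ^ n)}
  one_mem' := ⟨⟨1, by simpa using hc⟩, ⟨1, by simpa using hc⟩⟩
  inv_mem' := by
    rintro x ⟨h1, h2⟩
    exact ⟨h2, by simpa using h1⟩
  mul_mem' := by
    rintro x z ⟨⟨nx, hx1⟩, ⟨nx', hx2⟩⟩ ⟨⟨nz, hz1⟩, ⟨nz', hz2⟩⟩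
    constructor
    · obtain ⟨N, hN⟩ := cj_UB hleft hC hc hx1 nz
      exact ⟨N, lt_trans (cj_lmul hleft x hz1) hN⟩
    · obtain ⟨N, hN⟩ := cj_UB hleft hC hc hz2 nx'
      refine ⟨N, ?_⟩
      rw [mul_inv_rev]
      exact lt_trans (cj_lmul hleft z⁻¹ hx2) hN

private lemma cj_mem_E (hleft : ∀ f a b : G, a ≤ b → f * a ≤ f * b)
    (hC : ∀ f g : G, 1 < f → 1 < g → ∃ n : ℕ, 0 < n ∧ g < f * g ^ n)
    (c : G) (hc : 1 < c) (x : G) :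
    x ∈ cjE hleft hC c hc ↔ (∃ n : ℕ, x < c ^ n) ∧ (∃ n : ℕ, x⁻¹ < c ^ n) := Iff.rfl

private lemma cjE_convex (hleft : ∀ f a b : G, a ≤ b → f * a ≤ f * b)
    (hC : ∀ f g : G, 1 < f → 1 < g → ∃ n : ℕ, 0 < n ∧ g < f * g ^ n)
    (c : G) (hc : 1 < c) : IsConvexSubgroup (cjE hleft hC c hc) := by
  intro f₁ f₂ w h₁ h₂ hlt₁ hlt₂
  rw [cj_mem_E] at h₁ h₂ ⊢
  obtain ⟨⟨n₂, hf₂⟩, -⟩ := h₂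
  obtain ⟨-, ⟨m₁, hf₁i⟩⟩ := h₁
  constructor
  · exact ⟨n₂, lt_trans hlt₂ hf₂⟩
  · have ht : 1 < f₁⁻¹ * w := by
      have := cj_lmul hleft f₁⁻¹ hlt₁
      simpa using this
    obtain ⟨M, hM⟩ := cj_K1 hleft hC hc ht m₁
    refine ⟨M, ?_⟩
    have h1 : f₁⁻¹ < f₁⁻¹ * w * c ^ M := lt_trans hf₁i hM
    have h2 := cj_lmul hleft f₁ h1
    have h3 : 1 < w * c ^ M := by
      simpa [mul_assoc] using h2
    have h4 := cj_lmul hleft w⁻¹ h3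
    simpa [mul_assoc] using h4

/-- The convex subgroup of elements bounded below (together with inverse) by inverse powers. -/
private def cjF (hleft : ∀ f a b : G, a ≤ b → f * a ≤ f * b)
    (hC : ∀ f g : G, 1 < f → 1 < g → ∃ n : ℕ, 0 < n ∧ g < f * g ^ n)
    (c : G) (hc : 1 < c) : Subgroup G where
  carrier := {x | (∃ n : ℕ, 1 < c ^ n * x) ∧ (∃ n : ℕ, 1 < c ^ n * x⁻¹)}
  one_mem' := ⟨⟨1, by simpa using hc⟩, ⟨1, by simpa using hc⟩⟩
  inv_mem' := by
    rintro x ⟨h1, h2⟩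
    exact ⟨h2, by simpa using h1⟩
  mul_mem' := by
    rintro x z ⟨⟨nx, hx1⟩, ⟨nx', hx2⟩⟩ ⟨⟨nz, hz1⟩, ⟨nz', hz2⟩⟩
    constructor
    · obtain ⟨N, hN⟩ := cj_LB hleft hC hc hx1 nz
      refine ⟨N, ?_⟩
      have hz' : (c ^ nz)⁻¹ < z := by
        have := cj_lmul hleft (c ^ nz)⁻¹ hz1
        simpa using this
      have h2 := cj_lmul hleft (c ^ N * x) hz'
      rw [← mul_assoc]
      exact lt_trans hN h2
    · obtain ⟨N, hN⟩ := cj_LB hleft hC hc hz2 nx'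
      refine ⟨N, ?_⟩
      have hx' : (c ^ nx')⁻¹ < x⁻¹ := by
        have := cj_lmul hleft (c ^ nx')⁻¹ hx2
        simpa using this
      have h2 := cj_lmul hleft (c ^ N * z⁻¹) hx'
      rw [mul_inv_rev, ← mul_assoc]
      exact lt_trans hN h2

private lemma cj_mem_F (hleft : ∀ f a b : G, a ≤ b → f * a ≤ f * b)
    (hC : ∀ f g : G, 1 < f → 1 < g → ∃ n : ℕ, 0 < n ∧ g < f * g ^ n)
    (c : G) (hc : 1 < c) (x : G) :
    x ∈ cjF hleft hC c hc ↔ (∃ n : ℕ, 1 < c ^ n * x) ∧ (∃ n : ℕ, 1 < c ^ n * x⁻¹) := Iff.rfl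

private lemma cjF_convex (hleft : ∀ f a b : G, a ≤ b → f * a ≤ f * b)
    (hC : ∀ f g : G, 1 < f → 1 < g → ∃ n : ℕ, 0 < n ∧ g < f * g ^ n)
    (c : G) (hc : 1 < c) : IsConvexSubgroup (cjF hleft hC c hc) := by
  intro f₁ f₂ w h₁ h₂ hlt₁ hlt₂
  rw [cj_mem_F] at h₁ h₂ ⊢
  obtain ⟨⟨n₁, hf₁⟩, -⟩ := h₁
  obtain ⟨-, ⟨m₂, hf₂i⟩⟩ := h₂
  constructor
  · exact ⟨n₁, lt_trans hf₁ (cj_lmul hleft (c ^ n₁) hlt₁)⟩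
  · have ht' : 1 < w⁻¹ * f₂ := by
      have := cj_lmul hleft w⁻¹ hlt₂
      simpa using this
    obtain ⟨P, hP⟩ := cj_K1' hleft hC hc ht' m₂
    refine ⟨P, ?_⟩
    have hf₂' : (c ^ m₂)⁻¹ < f₂⁻¹ := by
      have := cj_lmul hleft (c ^ m₂)⁻¹ hf₂i
      simpa using this
    have h6 := cj_lmul hleft (c ^ P * (w⁻¹ * f₂)) hf₂'
    have h7 : 1 < c ^ P * (w⁻¹ * f₂) * f₂⁻¹ := lt_trans hP h6
    have e : c ^ P * (w⁻¹ * f₂) * f₂⁻¹ = c ^ P * w⁻¹ := by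
      rw [mul_assoc, mul_inv_cancel_right]
    rwa [e] at h7

private lemma cj_conv_dom_pos {A : Subgroup G} (hA : IsConvexSubgroup A)
    {w : G} (hw : w ∉ A) (h1 : 1 < w) : ∀ a ∈ A, a < w := by
  intro a ha
  by_contra hna
  rcases (not_lt.1 hna).lt_or_eq with h | h
  · exact hw (hA 1 a w A.one_mem ha h1 h)
  · exact hw (h ▸ ha)

private lemma cj_conv_dom_neg {A : Subgroup G} (hA : IsConvexSubgroup A)
    {w : G} (hw : w ∉ A) (h1 : w < 1) : ∀ a ∈ A, w < a := by
  intro a ha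
  by_contra hna
  rcases (not_lt.1 hna).lt_or_eq with h | h
  · exact hw (hA a 1 w ha A.one_mem h h1)
  · exact hw (h ▸ ha)

private lemma cj_H_le_K (hleft : ∀ f a b : G, a ≤ b → f * a ≤ f * b)
    {H K : Subgroup G} (hHconv : IsConvexSubgroup H) (hKconv : IsConvexSubgroup K)
    {g : G} (hgH : g ∉ H) (hgK : g ∈ K) : H ≤ K := by
  have key : ∀ x ∈ H, 1 < x → x ∈ K := by
    intro x hx hx1
    by_contra hxK
    have hdomK := cj_conv_dom_pos hKconv hxK hx1
    have hg1 : g ≠ 1 := fun he => hgH (he ▸ H.one_mem)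
    rcases lt_trichotomy g 1 with hg | hg | hg
    · have hginv1 : 1 < g⁻¹ := cj_one_lt_inv hleft hg
      have hginvH : g⁻¹ ∉ H := fun hm => hgH (by simpa using H.inv_mem hm)
      have h1 := cj_conv_dom_pos hHconv hginvH hginv1 x hx
      have h2 := hdomK g⁻¹ (K.inv_mem hgK)
      exact absurd h1 (lt_asymm h2)
    · exact hg1 hg
    · have h1 := cj_conv_dom_pos hHconv hgH hg x hx
      exact absurd h1 (lt_asymm (hdomK g hgK))
  intro x hx
  rcases lt_trichotomy x 1 with hx1 | hx1 | hx1
  · have : x⁻¹ ∈ K := key x⁻¹ (H.inv_mem hx) (cj_one_lt_inv hleft hx1)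
    simpa using K.inv_mem this
  · exact hx1 ▸ K.one_mem
  · exact key x hx hx1

/-- conjugation relation is preserved by shifting the conjugator by a power of c. -/
private lemma cj_conj_shift {c y h' : G} (hrel : y⁻¹ * c * y = h') (j : ℕ) :
    (c ^ j * y)⁻¹ * c * (c ^ j * y) = h' := by
  rw [← hrel, mul_inv_rev]
  have hcm : c ^ j * c = c * c ^ j := (pow_succ c j).symm.trans (pow_succ' c j)
  calc y⁻¹ * (c ^ j)⁻¹ * c * (c ^ j * y)
      = y⁻¹ * ((c ^ j)⁻¹ * (c * c ^ j)) * y := by simp [mul_assoc]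
    _ = y⁻¹ * ((c ^ j)⁻¹ * (c ^ j * c)) * y := by rw [hcm]
    _ = y⁻¹ * c * y := by simp [mul_assoc]

private lemma cj_conj_shift_inv {c y h' : G} (hrel : y⁻¹ * c * y = h') (j : ℕ) :
    ((c ^ j)⁻¹ * y)⁻¹ * c * ((c ^ j)⁻¹ * y) = h' := by
  rw [← hrel, mul_inv_rev, inv_inv]
  have hcm : c ^ j * c = c * c ^ j := (pow_succ c j).symm.trans (pow_succ' c j)
  calc y⁻¹ * c ^ j * c * ((c ^ j)⁻¹ * y)
      = y⁻¹ * ((c ^ j * c) * (c ^ j)⁻¹) * y := by simp [mul_assoc]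
    _ = y⁻¹ * ((c * c ^ j) * (c ^ j)⁻¹) * y := by rw [hcm]
    _ = y⁻¹ * c * y := by simp [mul_assoc]

end CJAux

/-- For a Conradian left-invariant order, if (H, K) is the convex jump
associated to an element g (H maximal convex subgroup not containing g, K minimal
convex subgroup containing g), then H is normal in K. -/
theorem convex_jump_normal {G : Type*} [Group G] [LinearOrder G]
    (hleft : ∀ f a b : G, a ≤ b → f * a ≤ f * b)
    (hC : ∀ f g : G, 1 < f → 1 < g → ∃ n : ℕ, 0 < n ∧ g < f * g ^ n)
    (g : G) (H K : Subgroup G)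
    (hHconv : IsConvexSubgroup H) (hKconv : IsConvexSubgroup K)
    (hgH : g ∉ H) (hgK : g ∈ K)
    (hHmax : ∀ C : Subgroup G, IsConvexSubgroup C → g ∉ C → C ≤ H)
    (hKmin : ∀ C : Subgroup G, IsConvexSubgroup C → g ∈ C → K ≤ C) :
    ∀ k ∈ K, ∀ h ∈ H, k * h * k⁻¹ ∈ H := by
  intro k hk h hh
  by_contra hcon
  have hHK : H ≤ K := cj_H_le_K hleft hHconv hKconv hgH hgK
  have hc₀K : k * h * k⁻¹ ∈ K := K.mul_mem (K.mul_mem hk (hHK hh)) (K.inv_mem hk)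
  have hc₀ne : k * h * k⁻¹ ≠ 1 := fun he => hcon (he ▸ H.one_mem)
  have hne : h ≠ 1 := by
    intro he
    exact hc₀ne (by rw [he]; group)
  -- normalize so that the non-member conjugate is > 1
  obtain ⟨c, y, h', hc1, hcH, hcK, hyK, hrel, hh'H, hh'ne⟩ :
      ∃ c y h' : G, 1 < c ∧ c ∉ H ∧ c ∈ K ∧ y ∈ K ∧ y⁻¹ * c * y = h' ∧ h' ∈ H ∧ h' ≠ 1 := by
    rcases lt_trichotomy (k * h * k⁻¹) 1 with hlt | heq | hgt
    · refine ⟨(k * h * k⁻¹)⁻¹, k, h⁻¹, cj_one_lt_inv hleft hlt,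
        fun hmem => hcon (by simpa using H.inv_mem hmem), K.inv_mem hc₀K, hk, by group,
        H.inv_mem hh, fun he => hne (by simpa using he)⟩
    · exact absurd heq hc₀ne
    · exact ⟨k * h * k⁻¹, k, h, hgt, hcon, hc₀K, hk, by group, hh, hne⟩
  -- K is contained in both convex subgroups built from c
  have hEconv := cjE_convex hleft hC c hc1
  have hFconv := cjF_convex hleft hC c hc1
  have hcE : c ∈ cjE hleft hC c hc1 := by
    rw [cj_mem_E]
    constructor
    · refine ⟨2, ?_⟩
      have := cj_lmul hleft c hc1
      rw [mul_one] at this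
      rw [pow_two]
      exact this
    · exact ⟨1, by rw [pow_one]; exact lt_trans (cj_inv_lt_one hleft hc1) hc1⟩
  have hcF : c ∈ cjF hleft hC c hc1 := by
    rw [cj_mem_F]
    constructor
    · refine ⟨1, ?_⟩
      rw [pow_one]
      have := cj_lmul hleft c hc1
      rw [mul_one] at this
      exact lt_trans hc1 this
    · exact ⟨2, by rw [pow_two, mul_inv_cancel_right]; exact hc1⟩
  have hKE : K ≤ cjE hleft hC c hc1 := by
    have hgE : g ∈ cjE hleft hC c hc1 := by
      by_contra hg
      exact hcH (hHmax _ hEconv hg hcE)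
    exact hKmin _ hEconv hgE
  have hKF : K ≤ cjF hleft hC c hc1 := by
    have hgF : g ∈ cjF hleft hC c hc1 := by
      by_contra hg
      exact hcH (hHmax _ hFconv hg hcF)
    exact hKmin _ hFconv hgF
  obtain ⟨⟨m, hym⟩, -⟩ := (cj_mem_E hleft hC c hc1 y).mp (hKE hyK)
  obtain ⟨⟨n, hyn⟩, -⟩ := (cj_mem_F hleft hC c hc1 y).mp (hKF hyK)
  -- the shifted conjugator y' = (c^m)⁻¹ * y
  have hrel' : ((c ^ m)⁻¹ * y)⁻¹ * c * ((c ^ m)⁻¹ * y) = h' := cj_conj_shift_inv hrel m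
  set y' := (c ^ m)⁻¹ * y with hy'
  have hw0 : c ^ 0 * y' < 1 := by
    have h1 := cj_lmul hleft (c ^ m)⁻¹ hym
    rw [inv_mul_cancel] at h1
    rw [pow_zero, one_mul, hy']
    exact h1
  have hwN : 1 < c ^ (m + n) * y' := by
    have e : c ^ (m + n) * y' = c ^ n * y := by
      rw [hy', add_comm, pow_add]
      simp [mul_assoc]
    rw [e]
    exact hyn
  rcases lt_trichotomy h' 1 with hh1 | hh1 | hh1
  · -- h' < 1 : the sequence i ↦ c^i * y' is strictly decreasing, contradiction
    have hstep : c * y' < y' := by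
      have t := cj_lmul hleft y' hh1
      rw [mul_one, ← hrel'] at t
      have e : y' * (y'⁻¹ * c * y') = c * y' := by group
      rwa [e] at t
    have hdec : ∀ i : ℕ, c ^ (i+1) * y' < c ^ i * y' := by
      intro i
      have := cj_lmul hleft (c ^ i) hstep
      calc c ^ (i+1) * y' = c ^ i * (c * y') := by rw [pow_succ, mul_assoc]
        _ < c ^ i * y' := this
    rcases Nat.eq_zero_or_pos (m + n) with h0 | h0
    · rw [h0] at hwN
      exact absurd hwN (lt_asymm hw0)
    · have hchain : ∀ j : ℕ, 0 < j → c ^ j * y' < c ^ 0 * y' := by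
        intro j hj
        induction j with
        | zero => exact absurd hj (lt_irrefl 0)
        | succ i ih =>
          rcases Nat.eq_zero_or_pos i with hi | hi
          · subst hi; exact hdec 0
          · exact lt_trans (hdec i) (ih hi)
      have := hchain _ h0
      exact absurd hwN (lt_asymm (lt_trans this hw0))
  · exact hh'ne hh1
  · -- h' > 1 : the sequence is strictly increasing; find the threshold
    have hno1 : ∀ i : ℕ, c ^ i * y' ≠ 1 := by
      intro i he
      have hy'e : y' = (c ^ i)⁻¹ := (inv_eq_of_mul_eq_one_right he).symm
      have hcr : h' = c := by
        have h2 := cj_conj_shift hrel' i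
        rw [hy'e] at h2
        rw [← h2]
        simp
      exact hcH (hcr ▸ hh'H)
    obtain ⟨i, hwi, hwi1⟩ : ∃ i : ℕ, c ^ i * y' < 1 ∧ 1 < c ^ (i+1) * y' := by
      have haux : ∀ N : ℕ, 1 < c ^ N * y' → ∃ i, c ^ i * y' < 1 ∧ 1 < c ^ (i+1) * y' := by
        intro N
        induction N with
        | zero => intro hN; exact absurd hN (lt_asymm hw0)
        | succ j ih =>
          intro hN
          rcases lt_trichotomy (c ^ j * y') 1 with hlt | heq | hgt
          · exact ⟨j, hlt, hN⟩
          · exact absurd heq (hno1 j)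
          · exact ih hgt
      exact haux (m + n) hwN
    have hvrel : (c ^ (i+1) * y')⁻¹ * c * (c ^ (i+1) * y') = h' := cj_conj_shift hrel' (i+1)
    set v := c ^ (i+1) * y' with hv
    have hv1 : 1 < v := hwi1
    have hvH : v ∉ H := by
      intro hvmem
      have hce : c = v * h' * v⁻¹ := by rw [← hvrel]; group
      exact hcH (hce ▸ H.mul_mem (H.mul_mem hvmem hh'H) (H.inv_mem hvmem))
    have hvinv1 : v⁻¹ < 1 := cj_inv_lt_one hleft hv1
    have hvinvH : v⁻¹ ∉ H := fun hm => hvH (by simpa using H.inv_mem hm)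
    have hdom : v⁻¹ < h'⁻¹ := cj_conv_dom_neg hHconv hvinvH hvinv1 h'⁻¹ (H.inv_mem hh'H)
    have hvc : v < c := by
      have h2 := cj_lmul hleft c hwi
      rw [mul_one] at h2
      have e : c * (c ^ i * y') = v := by
        rw [hv, pow_succ', mul_assoc]
      rwa [e] at h2
    have h8 : 1 < v⁻¹ * c := by
      have := cj_lmul hleft v⁻¹ hvc
      simpa using this
    have e2 : v⁻¹ * c = h' * v⁻¹ := by rw [← hvrel]; group
    rw [e2] at h8
    have h9 : h'⁻¹ < v⁻¹ := by
      have := cj_lmul hleft h'⁻¹ h8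
      simpa [mul_assoc] using this
    exact absurd h9 (lt_asymm hdom)
end

section
/- Let ≼ be a left-invariant total order on a group G with a finite chain of convex subgroups, and let H ◁ K be a convex jump in this chain with H normal in K. Define a new relation ≼' by declaring f ≻' 1 if and only if: (f ≻ 1 and f ∉ K), or (f ≻ 1 and f ∈ H), or (f ≺ 1 and f ∈ K \ H). Then ≼' is a left-invariant total order on G. -/
namespace FlipAux

variable {G : Type*} [Group G] [LinearOrder G]

theorem mul_lt (hleft : ∀ f a b : G, a ≤ b → f * a ≤ f * b)
    (f : G) {a b : G} (h : a < b) : f * a < f * b :=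
  lt_of_le_of_ne (hleft f a b h.le) (fun e => h.ne (mul_left_cancel e))

theorem inv_pos_of (hleft : ∀ f a b : G, a ≤ b → f * a ≤ f * b)
    {x : G} (h : x < 1) : 1 < x⁻¹ := by
  have := mul_lt hleft x⁻¹ h; simpa using this

theorem inv_neg_of (hleft : ∀ f a b : G, a ≤ b → f * a ≤ f * b)
    {x : G} (h : 1 < x) : x⁻¹ < 1 := by
  have := mul_lt hleft x⁻¹ h; simpa using this

theorem conv_gt {L : Subgroup G} (hL : IsConvexSubgroup L) {x : G}
    (hx : x ∉ L) (h1 : 1 < x) {k : G} (hk : k ∈ L) : k < x := by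
  by_contra h
  push_neg at h
  rcases h.lt_or_eq with h' | h'
  · exact hx (hL 1 k x L.one_mem hk h1 h')
  · exact hx (h' ▸ hk)

theorem conv_lt {L : Subgroup G} (hL : IsConvexSubgroup L) {x : G}
    (hx : x ∉ L) (h1 : x < 1) {k : G} (hk : k ∈ L) : x < k := by
  by_contra h
  push_neg at h
  rcases h.lt_or_eq with h' | h'
  · exact hx (hL k 1 x hk L.one_mem h' h1)
  · exact hx (h' ▸ hk)

theorem not_inv_mem {L : Subgroup G} {x : G} (hx : x ∉ L) : x⁻¹ ∉ L :=
  fun h => hx (by simpa using L.inv_mem h)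

theorem pos_mul (hleft : ∀ f a b : G, a ≤ b → f * a ≤ f * b)
    {H K : Subgroup G} (hHc : IsConvexSubgroup H) (hKc : IsConvexSubgroup K)
    (hHK : H ≤ K) {x y : G}
    (hx : (1 < x ∧ x ∉ K) ∨ (1 < x ∧ x ∈ H) ∨ (x < 1 ∧ x ∈ K ∧ x ∉ H))
    (hy : (1 < y ∧ y ∉ K) ∨ (1 < y ∧ y ∈ H) ∨ (y < 1 ∧ y ∈ K ∧ y ∉ H)) :
    (1 < x * y ∧ x * y ∉ K) ∨ (1 < x * y ∧ x * y ∈ H) ∨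
      (x * y < 1 ∧ x * y ∈ K ∧ x * y ∉ H) := by
  have hxy_lt : ∀ {a b : G}, b < 1 → a * b < a := fun {a b} h => by
    have := mul_lt hleft a h; simpa using this
  have hxy_gt : ∀ {a b : G}, 1 < b → a < a * b := fun {a b} h => by
    have := mul_lt hleft a h; simpa using this
  rcases hx with ⟨hx1, hxK⟩ | ⟨hx1, hxH⟩ | ⟨hx1, hxK, hxH⟩ <;>
    rcases hy with ⟨hy1, hyK⟩ | ⟨hy1, hyH⟩ | ⟨hy1, hyK, hyH⟩
  · -- A A
    refine Or.inl ⟨hx1.trans (hxy_gt hy1), fun hm => ?_⟩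
    exact absurd (hxy_gt hy1) (not_lt.mpr (conv_gt hKc hxK hx1 hm).le)
  · -- A B
    refine Or.inl ⟨hx1.trans (hxy_gt hy1), fun hm => ?_⟩
    exact hxK (by simpa using K.mul_mem hm (K.inv_mem (hHK hyH)))
  · -- A C
    refine Or.inl ⟨?_, fun hm => hxK (by simpa [mul_assoc] using K.mul_mem hm (K.inv_mem hyK))⟩
    have h1 : x⁻¹ < y := conv_lt hKc (not_inv_mem hxK) (inv_neg_of hleft hx1) hyK
    have := mul_lt hleft x h1
    simpa using this
  · -- B A
    refine Or.inl ⟨hx1.trans (hxy_gt hy1), fun hm => ?_⟩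
    exact hyK (by simpa [mul_assoc] using K.mul_mem (K.inv_mem (hHK hxH)) hm)
  · -- B B
    exact Or.inr (Or.inl ⟨hx1.trans (hxy_gt hy1), H.mul_mem hxH hyH⟩)
  · -- B C
    refine Or.inr (Or.inr ⟨?_, K.mul_mem (hHK hxH) hyK,
      fun hm => hyH (by simpa [mul_assoc] using H.mul_mem (H.inv_mem hxH) hm)⟩)
    have h1 : y < x⁻¹ := conv_lt hHc hyH hy1 (H.inv_mem hxH)
    have := mul_lt hleft x h1
    simpa using this
  · -- C A
    refine Or.inl ⟨?_, fun hm => hyK (by simpa [mul_assoc] using K.mul_mem (K.inv_mem hxK) hm)⟩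
    have h1 : x⁻¹ < y := conv_gt hKc hyK hy1 (K.inv_mem hxK)
    have := mul_lt hleft x h1
    simpa using this
  · -- C B
    refine Or.inr (Or.inr ⟨?_, K.mul_mem hxK (hHK hyH),
      fun hm => hxH (by simpa [mul_assoc] using H.mul_mem hm (H.inv_mem hyH))⟩)
    have h1 : y < x⁻¹ := conv_gt hHc (not_inv_mem hxH) (inv_pos_of hleft hx1) hyH
    have := mul_lt hleft x h1
    simpa using this
  · -- C C
    have hlt : x * y < x := hxy_lt hy1
    refine Or.inr (Or.inr ⟨hlt.trans hx1, K.mul_mem hxK hyK, fun hm => ?_⟩)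
    exact absurd hlt (not_lt.mpr (conv_lt hHc hxH hx1 hm).le)

end FlipAux

/-- Flipping a left-invariant total order on a convex jump H ◁ K of a
finite chain of convex subgroups (with H normal in K) again yields a left-invariant
total order. -/
theorem flipped_order_is_left_order {G : Type*} [Group G] [LinearOrder G]
    (hleft : ∀ f a b : G, a ≤ b → f * a ≤ f * b)
    (n : ℕ) (C : Fin (n + 1) → Subgroup G)
    (hconv : ∀ i, IsConvexSubgroup (C i)) (hmono : Monotone C)
    (h0 : C 0 = ⊥) (hlast : C (Fin.last n) = ⊤)
    (i : Fin n) (H K : Subgroup G) (hH : H = C i.castSucc) (hK : K = C i.succ)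
    (hjump : ∀ L : Subgroup G, IsConvexSubgroup L → H ≤ L → L ≤ K → L = H ∨ L = K)
    (hnorm : ∀ k ∈ K, ∀ h ∈ H, k * h * k⁻¹ ∈ H) :
    let Pos : G → Prop := fun f =>
      (1 < f ∧ f ∉ K) ∨ (1 < f ∧ f ∈ H) ∨ (f < 1 ∧ f ∈ K ∧ f ∉ H)
    let le' : G → G → Prop := fun f g => f = g ∨ Pos (f⁻¹ * g)
    (∀ a : G, le' a a) ∧ (∀ a b c : G, le' a b → le' b c → le' a c) ∧
    (∀ a b : G, le' a b → le' b a → a = b) ∧ (∀ a b : G, le' a b ∨ le' b a) ∧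
    (∀ f a b : G, le' a b → le' (f * a) (f * b)) := by
  intro Pos le'
  have hHc : IsConvexSubgroup H := hH ▸ hconv _
  have hKc : IsConvexSubgroup K := hK ▸ hconv _
  have hHK : H ≤ K := by
    rw [hH, hK]; exact hmono (Fin.castSucc_lt_succ (i := i)).le
  have hmul : ∀ {x y : G}, Pos x → Pos y → Pos (x * y) := fun {x y} hx hy =>
    FlipAux.pos_mul hleft hHc hKc hHK hx hy
  have hasymm : ∀ {x : G}, Pos x → Pos x⁻¹ → False := by
    intro x hx hx'
    rcases hx with ⟨h1, hm⟩ | ⟨h1, hm⟩ | ⟨h1, hm, hm'⟩ <;>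
      rcases hx' with ⟨h1', hm''⟩ | ⟨h1', hm''⟩ | ⟨h1', hm'', hm'''⟩
    · exact absurd h1' (not_lt.mpr (FlipAux.inv_neg_of hleft h1).le)
    · exact absurd h1' (not_lt.mpr (FlipAux.inv_neg_of hleft h1).le)
    · exact hm (by simpa using K.inv_mem hm'')
    · exact absurd h1' (not_lt.mpr (FlipAux.inv_neg_of hleft h1).le)
    · exact absurd h1' (not_lt.mpr (FlipAux.inv_neg_of hleft h1).le)
    · exact hm''' (H.inv_mem hm)
    · exact hm'' (K.inv_mem hm)
    · exact hm' (by simpa using H.inv_mem hm'')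
    · exact absurd (FlipAux.inv_pos_of hleft h1) (not_lt.mpr h1'.le)
  have htot : ∀ {x : G}, x ≠ 1 → Pos x ∨ Pos x⁻¹ := by
    intro x hx
    rcases lt_trichotomy 1 x with h1 | h1 | h1
    · by_cases hK' : x ∈ K
      · by_cases hH' : x ∈ H
        · exact Or.inl (Or.inr (Or.inl ⟨h1, hH'⟩))
        · exact Or.inr (Or.inr (Or.inr ⟨FlipAux.inv_neg_of hleft h1, K.inv_mem hK',
            FlipAux.not_inv_mem hH'⟩))
      · exact Or.inl (Or.inl ⟨h1, hK'⟩)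
    · exact absurd h1.symm hx
    · by_cases hK' : x ∈ K
      · by_cases hH' : x ∈ H
        · exact Or.inr (Or.inr (Or.inl ⟨FlipAux.inv_pos_of hleft h1, H.inv_mem hH'⟩))
        · exact Or.inl (Or.inr (Or.inr ⟨h1, hK', hH'⟩))
      · exact Or.inr (Or.inl ⟨FlipAux.inv_pos_of hleft h1, FlipAux.not_inv_mem hK'⟩)
  refine ⟨fun a => Or.inl rfl, ?_, ?_, ?_, ?_⟩
  · rintro a b c (rfl | hab) (rfl | hbc)
    · exact Or.inl rfl
    · exact Or.inr hbc
    · exact Or.inr hab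
    · refine Or.inr ?_
      have := hmul hab hbc
      simpa [mul_assoc] using this
  · rintro a b (rfl | hab) (h | hba)
    · rfl
    · rfl
    · exact h.symm
    · exact absurd hba (fun hba => hasymm hab (by simpa [mul_inv_rev] using hba))
  · intro a b
    by_cases h : a = b
    · exact Or.inl (Or.inl h)
    · rcases htot (x := a⁻¹ * b) (fun e => h (inv_mul_eq_one.mp e)) with hp | hp
      · exact Or.inl (Or.inr hp)
      · exact Or.inr (Or.inr (by simpa [mul_inv_rev] using hp))
  · rintro f a b (rfl | hab)
    · exact Or.inl rfl
    · exact Or.inr (by simpa [mul_assoc] using hab)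
end

section
/- A left-invariant total order ≼ on a group G is Conradian if and only if the action of G on itself by left translations (with the ordered set (G, ≼)) admits no crossing. -/
/-- A left-invariant total order on G is Conradian iff the action of G on
itself by left translations (on the ordered set (G, ≼)) admits no crossing. -/
theorem conradian_iff_no_crossing {G : Type*} [Group G] [LinearOrder G]
    (hleft : ∀ f a b : G, a ≤ b → f * a ≤ f * b) :
    (∀ f g : G, 1 < f → 1 < g → ∃ n : ℕ, 0 < n ∧ g < f * g ^ n) ↔
      ¬ ∃ f g u v w : G, (u < w ∧ w < v) ∧
        (∀ n : ℕ, g ^ n * u < v ∧ u < f ^ n * v) ∧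
        (∃ M N : ℕ, f ^ N * v < w ∧ w < g ^ M * u) := by
  have hlt : ∀ c a b : G, a < b → c * a < c * b := fun c a b h =>
    (hleft c a b h.le).lt_of_ne fun he => h.ne (mul_left_cancel he)
  have hcle : ∀ c a b : G, c * a ≤ c * b → a ≤ b := fun c a b h =>
    le_of_not_gt fun hba => absurd h (not_le.2 (hlt c b a hba))
  have hpow1 : ∀ x : G, 1 ≤ x → ∀ n : ℕ, 1 ≤ x ^ n := by
    intro x hx n
    induction n with
    | zero => simp
    | succ k ih =>
        rw [pow_succ]
        exact ih.trans (by simpa using hleft (x ^ k) 1 x hx)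
  constructor
  · -- Conradian → no crossing
    intro hC
    rintro ⟨f, g, u, v, w, ⟨huw, hwv⟩, hii, M, N, hNv, hMu⟩
    set a : G := u⁻¹ * f ^ N * u with ha
    set b : G := u⁻¹ * g ^ M * u with hb
    have conjpow : ∀ (x : G) (n : ℕ), (u⁻¹ * x * u) ^ n = u⁻¹ * x ^ n * u := by
      intro x n
      induction n with
      | zero => simp
      | succ k ih => rw [pow_succ, pow_succ, ih]; group
    have hbn : ∀ n : ℕ, b ^ n < u⁻¹ * v := by
      intro n
      have h1 : g ^ (M * n) * u < v := (hii (M * n)).1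
      have h2 := hlt u⁻¹ _ _ h1
      rw [hb, conjpow]
      calc u⁻¹ * (g ^ M) ^ n * u = u⁻¹ * (g ^ (M * n) * u) := by rw [← pow_mul]; group
        _ < u⁻¹ * v := h2
    have han : ∀ n : ℕ, (1 : G) < a ^ n * (u⁻¹ * v) := by
      intro n
      have h1 : u < f ^ (N * n) * v := (hii (N * n)).2
      have h2 := hlt u⁻¹ _ _ h1
      rw [ha, conjpow]
      calc (1 : G) = u⁻¹ * u := by group
        _ < u⁻¹ * (f ^ (N * n) * v) := h2
        _ = u⁻¹ * (f ^ N) ^ n * u * (u⁻¹ * v) := by rw [← pow_mul]; group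
    have hav1 : a * (u⁻¹ * v) < u⁻¹ * w := by
      have h2 := hlt u⁻¹ _ _ hNv
      calc a * (u⁻¹ * v) = u⁻¹ * (f ^ N * v) := by rw [ha]; group
        _ < u⁻¹ * w := h2
    have hwb : u⁻¹ * w < b := by
      have h2 := hlt u⁻¹ _ _ hMu
      calc u⁻¹ * w < u⁻¹ * (g ^ M * u) := h2
        _ = b := by rw [hb, mul_assoc]
    have h1w : (1 : G) < u⁻¹ * w := by
      have h2 := hlt u⁻¹ _ _ huw
      simpa using h2
    have hb1 : (1 : G) < b := h1w.trans hwb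
    have hvb : u⁻¹ * v < a⁻¹ * b := by
      have h2 : a * (u⁻¹ * v) < b := hav1.trans hwb
      have h3 := hlt a⁻¹ _ _ h2
      simpa [mul_assoc] using h3
    have hab1 : (1 : G) < a * b := by
      have h2 : a⁻¹ * 1 < a⁻¹ * (a ^ 2 * (u⁻¹ * v)) := hlt a⁻¹ _ _ (han 2)
      have h3 : a⁻¹ < a * (u⁻¹ * v) := by
        have h4 : a⁻¹ * (a ^ 2 * (u⁻¹ * v)) = a * (u⁻¹ * v) := by rw [pow_two]; group
        rw [h4, mul_one] at h2
        exact h2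
      have h4 : a⁻¹ < b := h3.trans (hav1.trans hwb)
      have h5 := hlt a _ _ h4
      simpa using h5
    obtain ⟨m, _, hm⟩ := hC (a * b) b hab1 hb1
    have hkey : a * b * b ^ m < b := by
      have h5 : b ^ (m + 1) < a⁻¹ * b := (hbn (m + 1)).trans hvb
      have h6 := hlt a _ _ h5
      calc a * b * b ^ m = a * b ^ (m + 1) := by rw [pow_succ']; group
        _ < a * (a⁻¹ * b) := h6
        _ = b := by group
    exact absurd hm (not_lt.2 hkey.le)
  · -- no crossing → Conradian
    intro hNC f g hf hg
    by_contra hno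
    push_neg at hno
    -- hno : ∀ n, 0 < n → f * g ^ n ≤ g
    have hstrict : ∀ n : ℕ, 0 < n → f * g ^ n < g := by
      intro n hn
      rcases (hno n hn).lt_or_eq with h | h
      · exact h
      · exfalso
        have hgn : g ^ n = f⁻¹ * g := by
          have h2 := congrArg (fun z => f⁻¹ * z) h
          simpa [mul_assoc] using h2
        have h2n : f * g ^ (2 * n) ≤ g := hno (2 * n) (by omega)
        have he : f * g ^ (2 * n) = g * (f⁻¹ * g) := by
          rw [two_mul, pow_add, hgn]; group
        have hle1 : f⁻¹ * g ≤ 1 := by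
          apply hcle g
          rw [mul_one, ← he]
          exact h2n
        have hggn : g ≤ g ^ n := by
          cases n with
          | zero => omega
          | succ k =>
              rw [pow_succ']
              simpa using hleft g 1 (g ^ k) (hpow1 g hg.le k)
        rw [hgn] at hggn
        exact absurd (hggn.trans hle1) (not_le.2 hg)
    have hfg : f * g < g := by simpa using hstrict 1 one_pos
    have hffg : f * (f * g) < f * g := hlt f _ _ hfg
    have hfltg : f < g := by
      have h1 : f < f * g := by simpa using hlt f 1 g hg
      exact h1.trans hfg
    apply hNC
    refine ⟨f, g, 1, f⁻¹ * g, f * g, ⟨?_, ?_⟩, ?_, 1, 3, ?_, ?_⟩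
    · -- 1 < f * g
      have h1 : f < f * g := by simpa using hlt f 1 g hg
      exact hf.trans h1
    · -- f * g < f⁻¹ * g
      have h2 : f * (f * g) < g := hffg.trans hfg
      have h3 := hlt f⁻¹ _ _ h2
      simpa [mul_assoc] using h3
    · intro n
      constructor
      · -- g ^ n * 1 < f⁻¹ * g
        have h3 : f * g ^ n < g := by
          cases n with
          | zero => simpa using hfltg
          | succ k => exact hstrict (k + 1) (Nat.succ_pos k)
        have h4 := hlt f⁻¹ _ _ h3
        simpa [mul_assoc] using h4
      · -- 1 < f ^ n * (f⁻¹ * g)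
        cases n with
        | zero =>
            have h5 := hlt f⁻¹ _ _ hfltg
            simpa using h5
        | succ k =>
            have h4 : f ^ (k + 1) * (f⁻¹ * g) = f ^ k * g := by rw [pow_succ]; group
            rw [h4]
            have h5 : f ^ k < f ^ k * g := by simpa using hlt (f ^ k) 1 g hg
            exact lt_of_le_of_lt (hpow1 f hf.le k) h5
    · -- f ^ 3 * (f⁻¹ * g) < f * g
      have h6 : f ^ 3 * (f⁻¹ * g) = f * (f * g) := by rw [pow_succ, pow_two]; group
      rw [h6]; exact hffg
    · -- f * g < g ^ 1 * 1
      simpa using hfg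
end

section
/- Let G act faithfully by order-preserving bijections on a totally ordered set Ω, and let ≤* be a well-order on Ω. Define ≼ on G by: f ≻ 1 iff f(w_f) > w_f, where w_f is the ≤*-minimal element moved by f. Then ≼ is a left-invariant total order on G. -/
/-- `f` is positive for the order induced from the well-order `r` on Ω: the ≤*-minimal
point `w` moved by `f` is moved upward. -/
def InducedPos {G Ω : Type*} [Group G] [LinearOrder Ω] (ρ : G →* (Ω ≃o Ω))
    (r : Ω → Ω → Prop) (f : G) : Prop :=
  ∃ w : Ω, ρ f w ≠ w ∧ (∀ w' : Ω, r w' w → ρ f w' = w') ∧ w < ρ f w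

section aux
variable {G Ω : Type*} [Group G] [LinearOrder Ω] (ρ : G →* (Ω ≃o Ω))
    (r : Ω → Ω → Prop)

lemma inducedPos_mul (hwo : IsWellOrder Ω r) {f g : G}
    (hf : InducedPos ρ r f) (hg : InducedPos ρ r g) :
    InducedPos ρ r (f * g) := by
  obtain ⟨u, hu1, hu2, hu3⟩ := hf
  obtain ⟨v, hv1, hv2, hv3⟩ := hg
  have hcomp : ∀ x : Ω, ρ (f * g) x = ρ f (ρ g x) := fun x => by simp [map_mul]
  haveI := hwo
  rcases trichotomous_of r u v with h | h | h
  · refine ⟨u, ?_, ?_, ?_⟩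
    · rw [hcomp]
      rw [hv2 u h]; exact hu1
    · intro w' hw'
      rw [hcomp]
      rw [hv2 w' (Trans.trans hw' h), hu2 w' hw']
    · rw [hcomp]
      rw [hv2 u h]; exact hu3
  · subst h
    have key : u < ρ f (ρ g u) :=
      lt_trans hu3 ((ρ f).lt_iff_lt.mpr hv3)
    refine ⟨u, ?_, ?_, ?_⟩
    · rw [hcomp]; exact key.ne'
    · intro w' hw'
      rw [hcomp, hv2 w' hw', hu2 w' hw']
    · rw [hcomp]; exact key
  · have hfv : ρ f v = v := hu2 v h
    have key : v < ρ f (ρ g v) := by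
      have := (ρ f).lt_iff_lt.mpr hv3
      rwa [hfv] at this
    refine ⟨v, ?_, ?_, ?_⟩
    · rw [hcomp]; exact key.ne'
    · intro w' hw'
      rw [hcomp]
      rw [hv2 w' hw', hu2 w' (Trans.trans hw' h)]
    · rw [hcomp]; exact key

lemma inducedPos_not_both (hwo : IsWellOrder Ω r) {f : G}
    (hf : InducedPos ρ r f) (hf' : InducedPos ρ r f⁻¹) : False := by
  obtain ⟨u, hu1, hu2, hu3⟩ := hf
  obtain ⟨v, hv1, hv2, hv3⟩ := hf'
  have hinv : ∀ x : Ω, ρ f⁻¹ (ρ f x) = x := fun x => by simp [← map_mul]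
  have hinv' : ∀ x : Ω, ρ f (ρ f⁻¹ x) = x := fun x => by simp [← map_mul]
  haveI := hwo
  have huv : u = v := by
    rcases trichotomous_of r u v with h | h | h
    · have h2 := congrArg (ρ f) (hv2 u h)
      rw [hinv'] at h2
      exact (hu1 h2.symm).elim
    · exact h
    · have h2 := congrArg (ρ f⁻¹) (hu2 v h)
      rw [hinv] at h2
      exact (hv1 h2.symm).elim
  subst huv
  have h2 : ρ f u < u := by
    have := (ρ f).lt_iff_lt.mpr hv3
    rwa [hinv'] at this
  exact lt_asymm hu3 h2

lemma inducedPos_or (hwo : IsWellOrder Ω r) (hfaith : Function.Injective ρ)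
    {f : G} (hf : f ≠ 1) :
    InducedPos ρ r f ∨ InducedPos ρ r f⁻¹ := by
  have hne : ρ f ≠ 1 := fun h => hf (hfaith (h.trans (map_one ρ).symm))
  have hmov : ∃ x : Ω, ρ f x ≠ x := by
    by_contra h
    push_neg at h
    exact hne (OrderIso.ext (funext fun x => h x))
  have hwf : WellFounded r := hwo.toIsWellFounded.wf
  obtain ⟨w, hwS, hwmin⟩ := hwf.has_min {x | ρ f x ≠ x} hmov
  have hfix : ∀ w' : Ω, r w' w → ρ f w' = w' := fun w' hw' => by
    by_contra h; exact hwmin w' h hw'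
  have hinv : ∀ x : Ω, ρ f⁻¹ (ρ f x) = x := fun x => by simp [← map_mul]
  have hinv' : ∀ x : Ω, ρ f (ρ f⁻¹ x) = x := fun x => by simp [← map_mul]
  have hwmov : ρ f w ≠ w := hwS
  have hwmov' : ρ f⁻¹ w ≠ w := fun h => hwmov (by conv_lhs => rw [← h]; rw [hinv'])
  rcases lt_trichotomy w (ρ f w) with h | h | h
  · exact Or.inl ⟨w, hwmov, hfix, h⟩
  · exact absurd h.symm hwmov
  · refine Or.inr ⟨w, hwmov', fun w' hw' => ?_, ?_⟩
    · have h2 := congrArg (ρ f⁻¹) (hfix w' hw')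
      rw [hinv] at h2
      exact h2.symm
    · have := (ρ f⁻¹).lt_iff_lt.mpr h
      rwa [hinv] at this

end aux

/-- Given a faithful order-preserving action of G on a totally ordered set Ω
and a well-order ≤* on Ω, the relation f ≺ g iff the ≤*-minimal point moved by f⁻¹g is
moved upward defines a left-invariant total order on G. -/
theorem induced_order_is_left_order {G Ω : Type*} [Group G] [LinearOrder Ω]
    (ρ : G →* (Ω ≃o Ω)) (hfaith : Function.Injective ρ)
    (r : Ω → Ω → Prop) (hwo : IsWellOrder Ω r) :
    let le' : G → G → Prop := fun f g => f = g ∨ InducedPos ρ r (f⁻¹ * g)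
    (∀ a : G, le' a a) ∧ (∀ a b c : G, le' a b → le' b c → le' a c) ∧
    (∀ a b : G, le' a b → le' b a → a = b) ∧ (∀ a b : G, le' a b ∨ le' b a) ∧
    (∀ f a b : G, le' a b → le' (f * a) (f * b)) := by
  intro le'
  refine ⟨fun a => Or.inl rfl, ?_, ?_, ?_, ?_⟩
  · rintro a b c (rfl | hab) hbc
    · exact hbc
    · rcases hbc with rfl | hbc
      · exact Or.inr hab
      · refine Or.inr ?_
        have := inducedPos_mul ρ r hwo hab hbc
        rwa [mul_assoc, mul_inv_cancel_left] at this
  · rintro a b (rfl | hab) hba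
    · rfl
    · rcases hba with rfl | hba
      · rfl
      · exact (inducedPos_not_both ρ r hwo hab
          (by rw [mul_inv_rev, inv_inv]; exact hba)).elim
  · intro a b
    by_cases h : a = b
    · exact Or.inl (Or.inl h)
    · have hne : a⁻¹ * b ≠ 1 := fun hh => h (inv_mul_eq_one.mp hh)
      rcases inducedPos_or ρ r hwo hfaith hne with hp | hp
      · exact Or.inl (Or.inr hp)
      · refine Or.inr (Or.inr ?_)
        rwa [mul_inv_rev, inv_inv] at hp
  · rintro f a b (rfl | hab)
    · exact Or.inl rfl
    · refine Or.inr ?_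
      have heq : (f * a)⁻¹ * (f * b) = a⁻¹ * b := by group
      rwa [heq]
end

section
/- Let G act faithfully by order-preserving bijections on a totally ordered set Ω equipped with a well-order ≤*, and suppose the action has no crossing. Then the induced left-invariant order on G (where f ≻ 1 iff f(w_f) > w_f, with w_f the ≤*-minimal element moved by f) is Conradian. -/
/-- If a faithful order-preserving action of G on a totally ordered set Ω
has no crossing, then the left-order induced from any well-order ≤* on Ω is Conradian. -/
theorem induced_order_conradian_of_no_crossing {G Ω : Type*} [Group G] [LinearOrder Ω]
    (ρ : G →* (Ω ≃o Ω)) (hfaith : Function.Injective ρ)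
    (r : Ω → Ω → Prop) (hwo : IsWellOrder Ω r)
    (hnocross : ¬ ∃ (f g : G) (u v w : Ω), (u < w ∧ w < v) ∧
        (∀ n : ℕ, ρ (g ^ n) u < v ∧ u < ρ (f ^ n) v) ∧
        (∃ M N : ℕ, ρ (f ^ N) v < w ∧ w < ρ (g ^ M) u)) :
    ∀ f g : G, InducedPos ρ r f → InducedPos ρ r g →
      ∃ n : ℕ, 0 < n ∧ InducedPos ρ r (g⁻¹ * (f * g ^ n)) := by
  intro f g hf hg
  obtain ⟨wf, hfne, hffix, hfup⟩ := hf
  obtain ⟨wg, hgne, hgfix, hgup⟩ := hg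
  -- value of the candidate element
  have hval : ∀ (n : ℕ) (x : Ω), ρ (g⁻¹ * (f * g ^ n)) x = (ρ g).symm (ρ f ((ρ g ^ n) x)) := by
    intro n x
    rw [map_mul, map_mul, map_inv, map_pow]
    rfl
  have hgpowfix : ∀ (w' : Ω), ρ g w' = w' → ∀ n : ℕ, ((ρ g) ^ n) w' = w' := by
    intro w' hw' n
    induction n with
    | zero => rfl
    | succ k ih => rw [pow_succ']; show ρ g (((ρ g)^k) w') = w'; rw [ih, hw']
  have hsymmfix : ∀ (w' : Ω), ρ g w' = w' → (ρ g).symm w' = w' := by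
    intro w' hw'
    conv_lhs => rw [← hw']
    exact (ρ g).symm_apply_apply w'
  -- positivity constructor
  have mkpos : ∀ (n : ℕ) (w0 : Ω), 0 < n →
      (∀ w', r w' w0 → ρ f w' = w' ∧ ρ g w' = w') →
      ρ g w0 < ρ f (((ρ g) ^ n) w0) →
      ∃ n : ℕ, 0 < n ∧ InducedPos ρ r (g⁻¹ * (f * g ^ n)) := by
    intro n w0 hn hfix hlt
    have hup : w0 < ρ (g⁻¹ * (f * g ^ n)) w0 := by
      rw [hval]
      have h2 : (ρ g).symm (ρ g w0) < (ρ g).symm (ρ f (((ρ g) ^ n) w0)) :=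
        (ρ g).symm.lt_iff_lt.mpr hlt
      rwa [(ρ g).symm_apply_apply] at h2
    refine ⟨n, hn, w0, ne_of_gt hup, ?_, hup⟩
    intro w' hw'
    obtain ⟨hfw', hgw'⟩ := hfix w' hw'
    rw [hval, hgpowfix w' hgw' n, hfw', hsymmfix w' hgw']
  rcases trichotomous_of r wf wg with hcase | hcase | hcase
  · -- r wf wg : g fixes wf, use n = 1
    have hgwf : ρ g wf = wf := hgfix wf hcase
    refine mkpos 1 wf one_pos ?_ ?_
    · intro w' hw'
      exact ⟨hffix w' hw', hgfix w' (trans_of r hw' hcase)⟩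
    · rw [pow_one, hgwf]
      exact hfup
  all_goals {
    -- main case: w = wg, f fixes everything r-below wg, and wg ≤ ρ f wg
    have hfix : ∀ w', r w' wg → ρ f w' = w' ∧ ρ g w' = w' := by
      intro w' hw'
      refine ⟨?_, hgfix w' hw'⟩
      first
        | exact hffix w' (hcase ▸ hw')
        | exact hffix w' (trans_of r hw' hcase)
    have hFw : wg ≤ ρ f wg := by
      first
        | exact le_of_lt (hcase ▸ hfup)
        | exact le_of_eq (hffix wg hcase).symm
    clear hcase hfne hffix hfup hgne
    set x1 := ρ g wg with hx1
    set x2 := ρ g x1 with hx2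
    have hwx1 : wg < x1 := hgup
    have h12 : x1 < x2 := (ρ g).lt_iff_lt.mpr hgup
    have hpow1 : ((ρ g) ^ 1) wg = x1 := by rw [pow_one]
    have hpow2 : ((ρ g) ^ 2) wg = x2 := by
      rw [pow_succ']; show ρ g (((ρ g)^1) wg) = x2; rw [hpow1]
    by_cases h1 : x1 < ρ f x1
    · exact mkpos 1 wg one_pos hfix (by rw [hpow1]; exact h1)
    by_cases h2 : x1 < ρ f x2
    · exact mkpos 2 wg two_pos hfix (by rw [hpow2]; exact h2)
    -- bad case: build a crossing
    exfalso
    push_neg at h1 h2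
    have hFx2lt : ρ f x2 < x2 := lt_of_le_of_lt h2 h12
    obtain ⟨N, hN⟩ : ∃ N : ℕ, ((ρ f) ^ N) x2 < x1 := by
      rcases lt_or_eq_of_le h2 with h2' | h2'
      · exact ⟨1, by rwa [pow_one]⟩
      · refine ⟨2, ?_⟩
        have hne : ρ f x1 ≠ x1 := by
          intro heq
          exact absurd ((ρ f).injective (h2'.trans heq.symm)) (ne_of_gt h12)
        have : ρ f x1 < x1 := lt_of_le_of_ne h1 hne
        rw [pow_succ']
        show ρ f (((ρ f)^1) x2) < x1
        rw [pow_one, h2']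
        exact this
    -- monotone facts
    have hFpow_w : ∀ n : ℕ, wg ≤ ((ρ f) ^ n) wg := by
      intro n
      induction n with
      | zero => exact le_refl _
      | succ k ih =>
        rw [pow_succ']
        show wg ≤ ρ f (((ρ f)^k) wg)
        calc wg ≤ ρ f wg := hFw
          _ ≤ ρ f (((ρ f)^k) wg) := (ρ f).le_iff_le.mpr ih
    have hbval : ∀ x : Ω, ρ (g * f ^ N) x = ρ g (((ρ f) ^ N) x) := by
      intro x; rw [map_mul, map_pow]; rfl
    have hbstep : ∀ y : Ω, y < x2 → ρ (g * f ^ N) y < x2 := by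
      intro y hy
      rw [hbval]
      have h3 : ((ρ f) ^ N) y < ((ρ f) ^ N) x2 := ((ρ f) ^ N).lt_iff_lt.mpr hy
      have h4 : ((ρ f) ^ N) y < x1 := h3.trans hN
      calc ρ g (((ρ f) ^ N) y) < ρ g x1 := (ρ g).lt_iff_lt.mpr h4
        _ = x2 := rfl
    have hborbit : ∀ n : ℕ, ρ ((g * f ^ N) ^ n) wg < x2 := by
      intro n
      induction n with
      | zero => rw [pow_zero, map_one]; exact hwx1.trans h12
      | succ k ih =>
        rw [pow_succ', map_mul]
        exact hbstep _ ih
    apply hnocross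
    refine ⟨f, g * f ^ N, wg, x2, x1, ⟨hwx1, h12⟩, ?_, 2, N, ?_, ?_⟩
    · intro n
      refine ⟨hborbit n, ?_⟩
      rw [map_pow]
      calc wg ≤ ((ρ f) ^ n) wg := hFpow_w n
        _ < ((ρ f) ^ n) x2 := ((ρ f) ^ n).lt_iff_lt.mpr (hwx1.trans h12)
    · rw [map_pow]; exact hN
    · have hbw : x1 ≤ ρ (g * f ^ N) wg := by
        rw [hbval]
        exact (ρ g).le_iff_le.mpr (hFpow_w N)
      have hbw2 : x1 < ρ ((g * f ^ N) ^ 2) wg := by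
        rw [pow_two, map_mul]
        show x1 < ρ (g * f ^ N) (ρ (g * f ^ N) wg)
        rw [hbval]
        have h5 : wg < ρ (g * f ^ N) wg := lt_of_lt_of_le hwx1 hbw
        have h6 : ((ρ f) ^ N) wg < ((ρ f) ^ N) (ρ (g * f ^ N) wg) :=
          ((ρ f) ^ N).lt_iff_lt.mpr h5
        have h7 : wg < ((ρ f) ^ N) (ρ (g * f ^ N) wg) := lt_of_le_of_lt (hFpow_w N) h6
        calc x1 = ρ g wg := rfl
          _ < ρ g (((ρ f) ^ N) (ρ (g * f ^ N) wg)) := (ρ g).lt_iff_lt.mpr h7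
      exact hbw2
  }
end

section
/- Let G act faithfully by order-preserving bijections on a totally ordered set Ω with a well-order ≤*, and let ≼ be the induced left-order (f ≻ 1 iff f(w_f) > w_f). If Ω₀ is an initial segment of (Ω, ≤*), then the pointwise stabilizer of Ω₀ in G is a convex subgroup for ≼. -/
/-- For the induced left-order coming from a faithful order-preserving
action of G on (Ω, ≤) with auxiliary well-order ≤*, the pointwise stabilizer of any
initial segment Ω₀ of (Ω, ≤*) is a convex subgroup. -/
theorem stabilizer_of_initial_segment_convex {G Ω : Type*} [Group G] [LinearOrder Ω]
    (ρ : G →* (Ω ≃o Ω)) (hfaith : Function.Injective ρ)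
    (r : Ω → Ω → Prop) (hwo : IsWellOrder Ω r)
    (Ω₀ : Set Ω) (hinit : ∀ x y : Ω, r x y → y ∈ Ω₀ → x ∈ Ω₀) :
    let Stab : Set G := {g : G | ∀ w ∈ Ω₀, ρ g w = w}
    let lt' : G → G → Prop := fun f g => InducedPos ρ r (f⁻¹ * g)
    (1 : G) ∈ Stab ∧ (∀ a b : G, a ∈ Stab → b ∈ Stab → a * b ∈ Stab) ∧
    (∀ a : G, a ∈ Stab → a⁻¹ ∈ Stab) ∧
    (∀ f₁ f₂ h : G, f₁ ∈ Stab → f₂ ∈ Stab → lt' f₁ h → lt' h f₂ → h ∈ Stab) := by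
  intro Stab lt'
  refine ⟨?_, ?_, ?_, ?_⟩
  · intro w hw; simp
  · intro a b ha hb w hw
    have : (ρ (a * b)) w = ρ a (ρ b w) := by rw [map_mul]; rfl
    rw [this, hb w hw, ha w hw]
  · intro a ha w hw
    have h1 : ρ a w = w := ha w hw
    have : ρ a⁻¹ (ρ a w) = w := by rw [map_inv]; exact (ρ a).symm_apply_apply w
    rwa [h1] at this
  · rintro f₁ f₂ h hf₁ hf₂ ⟨w₁, hw₁ne, hw₁min, hw₁lt⟩ ⟨w₂, hw₂ne, hw₂min, hw₂lt⟩
    intro w₀ hw₀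
    by_contra hmoved
    have inv_eq : ∀ (a : Ω ≃o Ω) (x : Ω), a⁻¹ x = a.symm x := fun a x => rfl
    -- minimal element of Ω₀ moved by h
    obtain ⟨w, ⟨hwΩ, hwne⟩, hwmin⟩ := hwo.wf.has_min {x | x ∈ Ω₀ ∧ ρ h x ≠ x} ⟨w₀, hw₀, hmoved⟩
    -- g₁ = f₁⁻¹ * h acts like h on points of Ω₀ in terms of being moved
    have key₁ : ∀ x ∈ Ω₀, ρ (f₁⁻¹ * h) x = ρ f₁⁻¹ (ρ h x) := by
      intro x hx; rw [map_mul]; rfl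
    have g₁fix : ∀ x ∈ Ω₀, (ρ (f₁⁻¹ * h) x = x ↔ ρ h x = x) := by
      intro x hx
      rw [key₁ x hx, map_inv, inv_eq]
      constructor
      · intro hxx
        have := congrArg (ρ f₁) hxx
        rw [(ρ f₁).apply_symm_apply, hf₁ x hx] at this
        exact this
      · intro hxx; rw [hxx]
        have := congrArg (ρ f₁).symm (hf₁ x hx)
        rw [(ρ f₁).symm_apply_apply] at this
        exact this.symm
    have key₂ : ∀ x ∈ Ω₀, ρ (h⁻¹ * f₂) x = ρ h⁻¹ x := by
      intro x hx
      have : ρ (h⁻¹ * f₂) x = ρ h⁻¹ (ρ f₂ x) := by rw [map_mul]; rfl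
      rw [this, hf₂ x hx]
    have g₂fix : ∀ x ∈ Ω₀, (ρ (h⁻¹ * f₂) x = x ↔ ρ h x = x) := by
      intro x hx
      rw [key₂ x hx, map_inv, inv_eq]
      constructor
      · intro hxx
        have := congrArg (ρ h) hxx
        rw [(ρ h).apply_symm_apply] at this
        exact this.symm
      · intro hxx
        have := congrArg (ρ h).symm hxx
        rw [(ρ h).symm_apply_apply] at this
        exact this.symm
    -- w₁ = w
    have hw₁eq : w₁ = w := by
      have hmoved₁ : ρ (f₁⁻¹ * h) w ≠ w := fun hc => hwne ((g₁fix w hwΩ).mp hc)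
      rcases (or_iff_not_imp_left.mpr fun h1 => or_iff_not_imp_right.mpr fun h2 => hwo.trichotomous w w₁ h1 h2 : r w w₁ ∨ w = w₁ ∨ r w₁ w) with hlt | heq | hgt
      · exact absurd (hw₁min w hlt) hmoved₁
      · exact heq.symm
      · have hw₁Ω : w₁ ∈ Ω₀ := hinit w₁ w hgt hwΩ
        have : ρ h w₁ ≠ w₁ := fun hc => hw₁ne ((g₁fix w₁ hw₁Ω).mpr hc)
        exact absurd hgt (hwmin w₁ ⟨hw₁Ω, this⟩)
    -- w₂ = w
    have hw₂eq : w₂ = w := by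
      have hmoved₂ : ρ (h⁻¹ * f₂) w ≠ w := fun hc => hwne ((g₂fix w hwΩ).mp hc)
      rcases (or_iff_not_imp_left.mpr fun h1 => or_iff_not_imp_right.mpr fun h2 => hwo.trichotomous w w₂ h1 h2 : r w w₂ ∨ w = w₂ ∨ r w₂ w) with hlt | heq | hgt
      · exact absurd (hw₂min w hlt) hmoved₂
      · exact heq.symm
      · have hw₂Ω : w₂ ∈ Ω₀ := hinit w₂ w hgt hwΩ
        have : ρ h w₂ ≠ w₂ := fun hc => hw₂ne ((g₂fix w₂ hw₂Ω).mpr hc)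
        exact absurd hgt (hwmin w₂ ⟨hw₂Ω, this⟩)
    rw [hw₁eq] at hw₁lt
    rw [hw₂eq] at hw₂lt
    -- from hw₁lt : w < ρ (f₁⁻¹ * h) w, deduce w < ρ h w
    have hup : w < ρ h w := by
      rw [key₁ w hwΩ, map_inv, inv_eq] at hw₁lt
      have := (ρ f₁).strictMono hw₁lt
      rwa [(ρ f₁).apply_symm_apply, hf₁ w hwΩ] at this
    -- from hw₂lt : w < ρ (h⁻¹ * f₂) w, deduce ρ h w < w
    have hdown : ρ h w < w := by
      rw [key₂ w hwΩ, map_inv, inv_eq] at hw₂lt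
      have := (ρ h).strictMono hw₂lt
      rwa [(ρ h).apply_symm_apply] at this
    exact absurd hup (not_lt.mpr hdown.le)
end

section
/- In a Conradian-orderable group G, the intersection of any family of C-relatively convex subgroups is C-relatively convex. -/
section
variable {G : Type*} [Group G]

/-- A left-invariant total order on G, given as a relation. -/
def IsLeftTotalOrder (le : G → G → Prop) : Prop :=
  (∀ a, le a a) ∧ (∀ a b c, le a b → le b c → le a c) ∧
  (∀ a b, le a b → le b a → a = b) ∧ (∀ a b, le a b ∨ le b a) ∧
  (∀ f a b, le a b → le (f * a) (f * b))

/-- The strict relation associated to `le`. -/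
def clt (le : G → G → Prop) (a b : G) : Prop := le a b ∧ ¬ le b a

/-- A Conradian (C-)ordering on G. -/
def IsConradianOrder (le : G → G → Prop) : Prop :=
  IsLeftTotalOrder le ∧
  ∀ f g : G, clt le 1 f → clt le 1 g → ∃ n : ℕ, 0 < n ∧ clt le g (f * g ^ n)

/-- `H` is convex for the left-order `le`. -/
def IsConvexFor (le : G → G → Prop) (H : Subgroup G) : Prop :=
  ∀ f₁ f₂ h : G, f₁ ∈ H → f₂ ∈ H → clt le f₁ h → clt le h f₂ → h ∈ H

/-- `H` is C-relatively convex: convex for some Conradian order on G. -/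
def CRelativelyConvex (H : Subgroup G) : Prop :=
  ∃ le : G → G → Prop, IsConradianOrder le ∧ IsConvexFor le H

end

section auxlemmas
variable {G : Type*} [Group G] {le : G → G → Prop}

lemma clt_asymm' {a b : G} (h1 : clt le a b) (h2 : clt le b a) : False := h1.2 h2.1

lemma clt_mul_left' (h : IsLeftTotalOrder le) (f : G) {a b : G} (hab : clt le a b) :
    clt le (f * a) (f * b) := by
  refine ⟨h.2.2.2.2 f a b hab.1, fun hc => hab.2 ?_⟩
  have := h.2.2.2.2 f⁻¹ _ _ hc
  simpa [inv_mul_cancel_left] using this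

lemma clt_trans' (h : IsLeftTotalOrder le) {a b c : G} (h1 : clt le a b) (h2 : clt le b c) :
    clt le a c :=
  ⟨h.2.1 _ _ _ h1.1 h2.1, fun hc => h2.2 (h.2.1 _ _ _ hc h1.1)⟩

lemma clt_total' (h : IsLeftTotalOrder le) {a b : G} (hne : a ≠ b) :
    clt le a b ∨ clt le b a := by
  rcases h.2.2.2.1 a b with hab | hba
  · exact Or.inl ⟨hab, fun hc => hne (h.2.2.1 _ _ hab hc)⟩
  · exact Or.inr ⟨hba, fun hc => hne (h.2.2.1 _ _ hc hba)⟩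

/-- Replace the right representative: if `a ≺ b`, `a⁻¹b ∉ N`, and `c` is in the
coset `bN`, then `a ≺ c`. -/
lemma key1 (h : IsLeftTotalOrder le) {N : Subgroup G} (hconv : IsConvexFor le N)
    {a b c : G} (hab : clt le a b) (hnb : a⁻¹ * b ∉ N) (hbc : b⁻¹ * c ∈ N) :
    clt le a c := by
  by_cases hac : a = c
  · subst hac
    exact absurd (by simpa [mul_inv_rev] using inv_mem hbc) hnb
  rcases clt_total' h hac with h1 | h1
  · exact h1
  · exfalso
    have hcb : clt le c b := clt_trans' h h1 hab
    have h2 : clt le 1 (c⁻¹ * a) := by simpa using clt_mul_left' h c⁻¹ h1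
    have h3 : clt le (c⁻¹ * a) (c⁻¹ * b) := clt_mul_left' h c⁻¹ hab
    have h4 : c⁻¹ * b ∈ N := by simpa [mul_inv_rev] using inv_mem hbc
    have h5 : c⁻¹ * a ∈ N := hconv 1 (c⁻¹ * b) (c⁻¹ * a) (one_mem N) h4 h2 h3
    exact hnb (by
      have := mul_mem (inv_mem h5) h4
      rwa [show (c⁻¹ * a)⁻¹ * (c⁻¹ * b) = a⁻¹ * b by group] at this)

/-- Replace the left representative: if `a ≺ b`, `a⁻¹b ∉ N`, and `c` is in the
coset `aN`, then `c ≺ b`. -/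
lemma key2 (h : IsLeftTotalOrder le) {N : Subgroup G} (hconv : IsConvexFor le N)
    {a b c : G} (hab : clt le a b) (hnb : a⁻¹ * b ∉ N) (hac : a⁻¹ * c ∈ N) :
    clt le c b := by
  by_cases hcb : c = b
  · subst hcb; exact absurd hac hnb
  rcases clt_total' h hcb with h1 | h1
  · exact h1
  · exfalso
    have h2 : clt le 1 (a⁻¹ * b) := by simpa using clt_mul_left' h a⁻¹ hab
    have h3 : clt le (a⁻¹ * b) (a⁻¹ * c) := clt_mul_left' h a⁻¹ h1
    exact hnb (hconv 1 (a⁻¹ * c) (a⁻¹ * b) (one_mem N) hac h2 h3)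

end auxlemmas

/-- In a Conradian-orderable group, the intersection of any family of
C-relatively convex subgroups is C-relatively convex. -/
theorem iInf_CRelativelyConvex {G : Type*} [Group G]
    (hCO : ∃ le : G → G → Prop, IsConradianOrder le)
    {ι : Sort*} (H : ι → Subgroup G) (hH : ∀ i, CRelativelyConvex (H i)) :
    CRelativelyConvex (⨅ i, H i) := by
  classical
  obtain ⟨le₀, hle₀⟩ := hCO
  choose L hL using hH
  -- well-order the (lifted) index type
  let r : PLift ι → PLift ι → Prop := WellOrderingRel
  have rwf : WellFounded r := (WellOrderingRel.isWellOrder (α := PLift ι)).toIsWellFounded.wf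
  have rtri : ∀ j₁ j₂ : PLift ι, r j₁ j₂ ∨ j₁ = j₂ ∨ r j₂ j₁ := fun j₁ j₂ =>
    trichotomous_of (WellOrderingRel (α := PLift ι)) j₁ j₂
  have rtrans : ∀ {j₁ j₂ j₃ : PLift ι}, r j₁ j₂ → r j₂ j₃ → r j₁ j₃ :=
    fun h1 h2 => trans_of (WellOrderingRel (α := PLift ι)) h1 h2
  set M : PLift ι → Subgroup G := fun j => H j.down with hM
  set P : G → Prop := fun x => ∀ i, x ∈ H i with hP
  have hPM : ∀ {x : G}, P x → ∀ j, x ∈ M j := fun hx j => hx j.down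
  have hPmul : ∀ {x y : G}, P x → P y → P (x * y) := fun hx hy i => mul_mem (hx i) (hy i)
  have hPinv : ∀ {x : G}, P x → P x⁻¹ := fun hx i => inv_mem (hx i)
  -- the lexicographic-type order
  set le' : G → G → Prop := fun a b =>
    (P (a⁻¹ * b) ∧ le₀ a b) ∨
    ∃ j, a⁻¹ * b ∉ M j ∧ (∀ i, r i j → a⁻¹ * b ∈ M i) ∧ clt (L j.down) a b with hle'
  have hflip : ∀ a b : G, b⁻¹ * a = (a⁻¹ * b)⁻¹ := by intro a b; group
  have hsplit : ∀ a b c : G, a⁻¹ * c = (a⁻¹ * b) * (b⁻¹ * c) := by intro a b c; group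
  have huniq : ∀ (x : G) (j₁ j₂ : PLift ι), x ∉ M j₁ → (∀ i, r i j₁ → x ∈ M i) →
      x ∉ M j₂ → (∀ i, r i j₂ → x ∈ M i) → j₁ = j₂ := by
    intro x j₁ j₂ h1 h1m h2 h2m
    rcases rtri j₁ j₂ with h | h | h
    · exact absurd (h2m _ h) h1
    · exact h
    · exact absurd (h1m _ h) h2
  -- characterization lemmas
  have hchar : ∀ (a b : G) (j : PLift ι), a⁻¹ * b ∉ M j → (∀ i, r i j → a⁻¹ * b ∈ M i) →
      (le' a b ↔ clt (L j.down) a b) := by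
    intro a b j hj hjm
    constructor
    · rintro (⟨hp, -⟩ | ⟨j', hj', hj'm, hlt⟩)
      · exact absurd (hPM hp j) hj
      · rwa [huniq _ j j' hj hjm hj' hj'm]
    · intro hlt
      exact Or.inr ⟨j, hj, hjm, hlt⟩
  have hcharK : ∀ a b : G, P (a⁻¹ * b) → (le' a b ↔ le₀ a b) := by
    intro a b hp
    constructor
    · rintro (⟨-, h⟩ | ⟨j, hj, -, -⟩)
      · exact h
      · exact absurd (hPM hp j) hj
    · intro h; exact Or.inl ⟨hp, h⟩
  have hcltchar : ∀ (a b : G) (j : PLift ι), a⁻¹ * b ∉ M j → (∀ i, r i j → a⁻¹ * b ∈ M i) →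
      (clt le' a b ↔ clt (L j.down) a b) := by
    intro a b j hj hjm
    have hj' : b⁻¹ * a ∉ M j := by rw [hflip]; exact fun hc => hj (by simpa using inv_mem hc)
    have hjm' : ∀ i, r i j → b⁻¹ * a ∈ M i := fun i hi => by
      rw [hflip]; exact inv_mem (hjm i hi)
    constructor
    · rintro ⟨h1, -⟩
      exact (hchar a b j hj hjm).1 h1
    · intro hlt
      exact ⟨(hchar a b j hj hjm).2 hlt,
        fun hc => clt_asymm' hlt ((hchar b a j hj' hjm').1 hc)⟩
  have hcltcharK : ∀ a b : G, P (a⁻¹ * b) → (clt le' a b ↔ clt le₀ a b) := by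
    intro a b hp
    have hp' : P (b⁻¹ * a) := by rw [hflip]; exact hPinv hp
    constructor
    · rintro ⟨h1, h2⟩
      exact ⟨(hcharK a b hp).1 h1, fun hc => h2 ((hcharK b a hp').2 hc)⟩
    · rintro ⟨h1, h2⟩
      exact ⟨(hcharK a b hp).2 h1, fun hc => h2 ((hcharK b a hp').1 hc)⟩
  -- le' is a left-invariant total order
  have hPorNot : ∀ a b : G, P (a⁻¹ * b) ∨ ∃ j, a⁻¹ * b ∉ M j ∧ ∀ i, r i j → a⁻¹ * b ∈ M i := by
    intro a b
    by_cases hp : P (a⁻¹ * b)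
    · exact Or.inl hp
    · right
      have hne : {j : PLift ι | a⁻¹ * b ∉ M j}.Nonempty := by
        obtain ⟨i, hi⟩ := not_forall.mp (by simpa only [hP] using hp)
        exact ⟨PLift.up i, hi⟩
      obtain ⟨j, hj, hjm⟩ := rwf.has_min _ hne
      exact ⟨j, hj, fun i hi => by by_contra hc; exact hjm i hc hi⟩
  have hlto : IsLeftTotalOrder le' := by
    refine ⟨?_, ?_, ?_, ?_, ?_⟩
    · -- refl
      intro a
      exact Or.inl ⟨by simpa [hP] using fun i => one_mem (H i), hle₀.1.1 a⟩
    · -- trans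
      intro a b c hab hbc
      rcases hab with ⟨hp1, h1⟩ | ⟨j₁, hj₁, hj₁m, hlt₁⟩
      · rcases hbc with ⟨hp2, h2⟩ | ⟨j₂, hj₂, hj₂m, hlt₂⟩
        · exact Or.inl ⟨by rw [hsplit a b c]; exact hPmul hp1 hp2, hle₀.1.2.1 _ _ _ h1 h2⟩
        · refine Or.inr ⟨j₂, ?_, ?_, ?_⟩
          · intro hc
            exact hj₂ (by
              have := mul_mem (inv_mem (hPM hp1 j₂)) hc
              rwa [show (a⁻¹ * b)⁻¹ * (a⁻¹ * c) = b⁻¹ * c by group] at this)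
          · intro i hi
            rw [hsplit a b c]; exact mul_mem (hPM hp1 i) (hj₂m i hi)
          · exact key2 (hL j₂.down).1.1 (hL j₂.down).2 hlt₂ hj₂
              (by rw [hflip]; exact inv_mem (hPM hp1 j₂))
      · rcases hbc with ⟨hp2, h2⟩ | ⟨j₂, hj₂, hj₂m, hlt₂⟩
        · refine Or.inr ⟨j₁, ?_, ?_, ?_⟩
          · intro hc
            exact hj₁ (by
              have := mul_mem hc (inv_mem (hPM hp2 j₁))
              rwa [show (a⁻¹ * c) * (b⁻¹ * c)⁻¹ = a⁻¹ * b by group] at this)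
          · intro i hi
            rw [hsplit a b c]; exact mul_mem (hj₁m i hi) (hPM hp2 i)
          · exact key1 (hL j₁.down).1.1 (hL j₁.down).2 hlt₁ hj₁ (hPM hp2 j₁)
        · rcases rtri j₁ j₂ with hr | hr | hr
          · -- j₁ comes first
            refine Or.inr ⟨j₁, ?_, ?_, ?_⟩
            · intro hc
              exact hj₁ (by
                have := mul_mem hc (inv_mem (hj₂m j₁ hr))
                rwa [show (a⁻¹ * c) * (b⁻¹ * c)⁻¹ = a⁻¹ * b by group] at this)
            · intro i hi
              rw [hsplit a b c]; exact mul_mem (hj₁m i hi) (hj₂m i (rtrans hi hr))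
            · exact key1 (hL j₁.down).1.1 (hL j₁.down).2 hlt₁ hj₁ (hj₂m j₁ hr)
          · -- same index
            subst hr
            refine Or.inr ⟨j₁, ?_, fun i hi => by
              rw [hsplit a b c]; exact mul_mem (hj₁m i hi) (hj₂m i hi), ?_⟩
            · intro hc
              have h2 : clt (L j₁.down) 1 (a⁻¹ * b) := by
                simpa using clt_mul_left' (hL j₁.down).1.1 a⁻¹ hlt₁
              have h3 : clt (L j₁.down) (a⁻¹ * b) (a⁻¹ * c) := by
                have := clt_mul_left' (hL j₁.down).1.1 a⁻¹
                  (clt_trans' (hL j₁.down).1.1 hlt₁ hlt₂)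
                exact clt_mul_left' (hL j₁.down).1.1 a⁻¹ hlt₂
              exact hj₁ ((hL j₁.down).2 1 (a⁻¹ * c) (a⁻¹ * b) (one_mem _) hc h2 h3)
            · exact clt_trans' (hL j₁.down).1.1 hlt₁ hlt₂
          · -- j₂ comes first
            refine Or.inr ⟨j₂, ?_, ?_, ?_⟩
            · intro hc
              exact hj₂ (by
                have := mul_mem (inv_mem (hj₁m j₂ hr)) hc
                rwa [show (a⁻¹ * b)⁻¹ * (a⁻¹ * c) = b⁻¹ * c by group] at this)
            · intro i hi
              rw [hsplit a b c]; exact mul_mem (hj₁m i (rtrans hi hr)) (hj₂m i hi)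
            · exact key2 (hL j₂.down).1.1 (hL j₂.down).2 hlt₂ hj₂
                (by rw [hflip]; exact inv_mem (hj₁m j₂ hr))
    · -- antisymm
      intro a b hab hba
      rcases hab with ⟨hp1, h1⟩ | ⟨j₁, hj₁, hj₁m, hlt₁⟩
      · rcases hba with ⟨hp2, h2⟩ | ⟨j₂, hj₂, hj₂m, hlt₂⟩
        · exact hle₀.1.2.2.1 _ _ h1 h2
        · exact absurd (by rw [hflip]; exact inv_mem (hPM hp1 j₂)) hj₂
      · rcases hba with ⟨hp2, h2⟩ | ⟨j₂, hj₂, hj₂m, hlt₂⟩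
        · exact absurd (by rw [hflip]; exact inv_mem (hPM hp2 j₁)) hj₁
        · exfalso
          have hj₂' : a⁻¹ * b ∉ M j₂ := fun hc => hj₂ (by rw [hflip]; exact inv_mem hc)
          have hj₂m' : ∀ i, r i j₂ → a⁻¹ * b ∈ M i := fun i hi => by
            have := hj₂m i hi
            rw [hflip] at this
            simpa using inv_mem this
          have := huniq _ j₁ j₂ hj₁ hj₁m hj₂' hj₂m'
          subst this
          exact clt_asymm' hlt₁ hlt₂
    · -- total
      intro a b
      by_cases hab : a = b
      · subst hab
        left; exact Or.inl ⟨by simpa [hP] using fun i => one_mem (H i), hle₀.1.1 a⟩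
      rcases hPorNot a b with hp | ⟨j, hj, hjm⟩
      · rcases hle₀.1.2.2.2.1 a b with h | h
        · exact Or.inl (Or.inl ⟨hp, h⟩)
        · exact Or.inr (Or.inl ⟨by rw [hflip]; exact hPinv hp, h⟩)
      · have hj' : b⁻¹ * a ∉ M j := fun hc => hj (by rw [hflip]; simpa using inv_mem hc)
        have hjm' : ∀ i, r i j → b⁻¹ * a ∈ M i := fun i hi => by
          rw [hflip]; exact inv_mem (hjm i hi)
        rcases clt_total' (hL j.down).1.1 hab with h | h
        · exact Or.inl (Or.inr ⟨j, hj, hjm, h⟩)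
        · exact Or.inr (Or.inr ⟨j, hj', hjm', h⟩)
    · -- left invariance
      intro f a b hab
      have hconj : (f * a)⁻¹ * (f * b) = a⁻¹ * b := by group
      rcases hab with ⟨hp, h⟩ | ⟨j, hj, hjm, hlt⟩
      · exact Or.inl ⟨by rw [hconj]; exact hp, hle₀.1.2.2.2.2 f a b h⟩
      · exact Or.inr ⟨j, by rw [hconj]; exact hj, fun i hi => by rw [hconj]; exact hjm i hi,
          clt_mul_left' (hL j.down).1.1 f hlt⟩
  -- le' is Conradian
  have hone : ∀ x : G, (1 : G)⁻¹ * x = x := by intro x; group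
  have hconrad : ∀ f g : G, clt le' 1 f → clt le' 1 g →
      ∃ n : ℕ, 0 < n ∧ clt le' g (f * g ^ n) := by
    intro f g hf hg
    by_cases hS : ∃ j, f ∉ M j ∨ g ∉ M j
    · obtain ⟨j, hj, hjmin⟩ := rwf.has_min {j : PLift ι | f ∉ M j ∨ g ∉ M j} hS
      have hmin : ∀ i, r i j → f ∈ M i ∧ g ∈ M i := by
        intro i hi
        by_contra hc
        exact hjmin i (not_and_or.mp hc) hi
      have lto := (hL j.down).1.1
      have hconv := (hL j.down).2
      have hratio : ∀ (i : PLift ι) (n : ℕ), f ∈ M i → g ∈ M i → g⁻¹ * (f * g ^ n) ∈ M i :=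
        fun i n hfi hgi => mul_mem (inv_mem hgi) (mul_mem hfi (pow_mem hgi n))
      by_cases hgN : g ∈ M j
      · -- subcase B : g ∈ M j, f ∉ M j, use n = 1
        have hfN : f ∉ M j := (hj : f ∉ M j ∨ g ∉ M j).resolve_right (not_not_intro hgN)
        have hfpos : clt (L j.down) 1 f :=
          (hcltchar 1 f j (by rw [hone]; exact hfN)
            (fun i hi => by rw [hone]; exact (hmin i hi).1)).1 hf
        have h1 : clt (L j.down) g f :=
          key2 lto hconv hfpos (by rw [hone]; exact hfN) (by rw [hone]; exact hgN)
        have h2 : clt (L j.down) g (f * g) :=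
          key1 lto hconv h1
            (fun hc => hfN (by have := mul_mem hgN hc; rwa [mul_inv_cancel_left] at this))
            (by rw [inv_mul_cancel_left]; exact hgN)
        refine ⟨1, one_pos, ?_⟩
        rw [pow_one]
        refine (hcltchar g (f * g) j ?_ ?_).2 h2
        · intro hc
          exact hfN (by
            have := mul_mem (mul_mem hgN hc) (inv_mem hgN)
            rwa [show g * (g⁻¹ * (f * g)) * g⁻¹ = f by group] at this)
        · intro i hi
          simpa [pow_one] using hratio i 1 (hmin i hi).1 (hmin i hi).2
      · -- subcase A : g ∉ M j
        have hgpos : clt (L j.down) 1 g :=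
          (hcltchar 1 g j (by rw [hone]; exact hgN)
            (fun i hi => by rw [hone]; exact (hmin i hi).2)).1 hg
        have hgtop : ∀ h' : G, h' ∈ M j → clt (L j.down) h' g := fun h' hh' =>
          key2 lto hconv hgpos (by rw [hone]; exact hgN) (by rw [hone]; exact hh')
        have hFpos : clt (L j.down) 1 (f * g) := by
          by_cases hfN : f ∈ M j
          · have h1 : clt (L j.down) f⁻¹ g := hgtop f⁻¹ (inv_mem hfN)
            have := clt_mul_left' lto f h1
            rwa [mul_inv_cancel] at this
          · have hfpos : clt (L j.down) 1 f :=
              (hcltchar 1 f j (by rw [hone]; exact hfN)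
                (fun i hi => by rw [hone]; exact (hmin i hi).1)).1 hf
            have h1 : clt (L j.down) f (f * g) := by
              have := clt_mul_left' lto f hgpos
              rwa [mul_one] at this
            exact clt_trans' lto hfpos h1
        obtain ⟨m, hm, hlt⟩ := (hL j.down).1.2 (f * g) g hFpos hgpos
        have e1 : (f * g) * g ^ m = f * g ^ (m + 1) := by
          rw [pow_succ', ← mul_assoc]
        rw [e1] at hlt
        have hlt2 : clt (L j.down) g (f * g ^ (m + 2)) := by
          refine clt_trans' lto hlt ?_
          have := clt_mul_left' lto (f * g ^ (m + 1)) hgpos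
          rw [mul_one] at this
          rwa [show f * g ^ (m + 1) * g = f * g ^ (m + 2) by rw [mul_assoc, ← pow_succ]] at this
        by_cases hn1 : g⁻¹ * (f * g ^ (m + 1)) ∈ M j
        · -- use m + 2
          have hn2 : g⁻¹ * (f * g ^ (m + 2)) ∉ M j := by
            intro hc
            apply hgN
            have := mul_mem (inv_mem hn1) hc
            rwa [show (g⁻¹ * (f * g ^ (m + 1)))⁻¹ * (g⁻¹ * (f * g ^ (m + 2))) = g by
              rw [pow_succ g (m + 1)]; group] at this
          exact ⟨m + 2, by omega, (hcltchar g (f * g ^ (m + 2)) j hn2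
            (fun i hi => hratio i (m + 2) (hmin i hi).1 (hmin i hi).2)).2 hlt2⟩
        · exact ⟨m + 1, by omega, (hcltchar g (f * g ^ (m + 1)) j hn1
            (fun i hi => hratio i (m + 1) (hmin i hi).1 (hmin i hi).2)).2 hlt⟩
    · -- both f and g in the intersection
      push_neg at hS
      have hPf : P f := fun i => (hS (PLift.up i)).1
      have hPg : P g := fun i => (hS (PLift.up i)).2
      have hf0 : clt le₀ 1 f := (hcltcharK 1 f (by rw [hone]; exact hPf)).1 hf
      have hg0 : clt le₀ 1 g := (hcltcharK 1 g (by rw [hone]; exact hPg)).1 hg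
      obtain ⟨n, hn, hlt⟩ := hle₀.2 f g hf0 hg0
      refine ⟨n, hn, (hcltcharK g (f * g ^ n) ?_).2 hlt⟩
      intro i
      exact mul_mem (inv_mem (hPg i)) (mul_mem (hPf i) (pow_mem (hPg i) n))
  -- convexity of the intersection
  refine ⟨le', ⟨hlto, hconrad⟩, ?_⟩
  intro f₁ f₂ h hf₁ hf₂ h1 h2
  rw [Subgroup.mem_iInf] at hf₁ hf₂ ⊢
  by_contra hc
  push_neg at hc
  obtain ⟨i₀, hi₀⟩ := hc
  obtain ⟨j, hj, hjmin⟩ := rwf.has_min {j : PLift ι | h ∉ M j} ⟨PLift.up i₀, hi₀⟩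
  have hmin : ∀ i, r i j → h ∈ M i := fun i hi => by by_contra hcc; exact hjmin i hcc hi
  have hr1 : f₁⁻¹ * h ∉ M j := fun hcc => hj (by
    have := mul_mem (hf₁ j.down) hcc
    rwa [mul_inv_cancel_left] at this)
  have hr1m : ∀ i, r i j → f₁⁻¹ * h ∈ M i := fun i hi =>
    mul_mem (inv_mem (hf₁ i.down)) (hmin i hi)
  have hr2 : h⁻¹ * f₂ ∉ M j := fun hcc => hj (by
    have := mul_mem (hf₂ j.down) (inv_mem hcc)
    rwa [show f₂ * (h⁻¹ * f₂)⁻¹ = h by group] at this)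
  have hr2m : ∀ i, r i j → h⁻¹ * f₂ ∈ M i := fun i hi =>
    mul_mem (inv_mem (hmin i hi)) (hf₂ i.down)
  have hlt1 : clt (L j.down) f₁ h := (hcltchar f₁ h j hr1 hr1m).1 h1
  have hlt2 : clt (L j.down) h f₂ := (hcltchar h f₂ j hr2 hr2m).1 h2
  exact hj ((hL j.down).2 f₁ f₂ h (hf₁ j.down) (hf₂ j.down) hlt1 hlt2)
end

section
/- A torsion-free abelian group G admits only finitely many left-invariant total orders if and only if G has rank 1 (i.e., G is nontrivial and embeds in ℚ). -/
set_option linter.unusedSectionVars false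

/-- A translation-invariant total order on an additive group, given as a relation. -/
def IsInvariantTotalOrder {G : Type*} [AddGroup G] (le : G → G → Prop) : Prop :=
  (∀ a, le a a) ∧ (∀ a b c, le a b → le b c → le a c) ∧
  (∀ a b, le a b → le b a → a = b) ∧ (∀ a b, le a b ∨ le b a) ∧
  (∀ f a b, le a b → le (f + a) (f + b))

section Helpers
variable {G : Type*} [AddCommGroup G]

theorem ito_shift {le : G → G → Prop} (h : IsInvariantTotalOrder le) {a b : G} (c : G)
    (hab : le a b) : le (a + c) (b + c) := by
  rw [add_comm a c, add_comm b c]; exact h.2.2.2.2 c a b hab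

theorem ito_sub {le : G → G → Prop} (h : IsInvariantTotalOrder le) {a b : G} (hab : le a b) :
    le 0 (b - a) := by
  have := ito_shift h (-a) hab
  simpa [sub_eq_add_neg, add_comm] using this

theorem ito_of_sub {le : G → G → Prop} (h : IsInvariantTotalOrder le) {a b : G}
    (hab : le 0 (b - a)) : le a b := by
  have := ito_shift h a hab
  simpa using this

theorem ito_nsmul_nonneg {le : G → G → Prop} (h : IsInvariantTotalOrder le) {x : G}
    (hx : le 0 x) (n : ℕ) : le 0 (n • x) := by
  induction n with
  | zero => simpa using h.1 0
  | succ k ih =>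
      have h1 : le x (x + k • x) := by simpa using h.2.2.2.2 x 0 (k • x) ih
      have h2 : le 0 (x + k • x) := h.2.1 _ _ _ hx h1
      simpa [succ_nsmul, add_comm] using h2

theorem ito_nsmul_nonpos {le : G → G → Prop} (h : IsInvariantTotalOrder le) {x : G}
    (hx : le x 0) (n : ℕ) : le (n • x) 0 := by
  induction n with
  | zero => simpa using h.1 0
  | succ k ih =>
      have h1 : le (x + k • x) x := by simpa using h.2.2.2.2 x (k • x) 0 ih
      have h2 : le (x + k • x) 0 := h.2.1 _ _ _ h1 hx
      simpa [succ_nsmul, add_comm] using h2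

/-- Pull back the order of a linear ordered group along an injective hom. -/
theorem ito_pullback {H : Type*} [AddCommGroup H] [LinearOrder H] [IsOrderedAddMonoid H] (j : G →+ H)
    (hj : Function.Injective j) : IsInvariantTotalOrder (fun a b => j a ≤ j b) := by
  refine ⟨fun a => le_refl _, fun a b c h1 h2 => le_trans h1 h2,
    fun a b h1 h2 => hj (le_antisymm h1 h2), fun a b => le_total _ _,
    fun f a b hab => ?_⟩
  simp only [map_add]
  exact add_le_add_right hab _

/-- Refine an invariant total order by a rational functional. -/
theorem ito_lexpair (ψ : G →+ ℚ) {le₀ : G → G → Prop} (h₀ : IsInvariantTotalOrder le₀) :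
    IsInvariantTotalOrder (fun a b => ψ a < ψ b ∨ (ψ a = ψ b ∧ le₀ a b)) := by
  refine ⟨fun a => Or.inr ⟨rfl, h₀.1 a⟩, ?_, ?_, ?_, ?_⟩
  · rintro a b c (h1 | ⟨h1, h1'⟩) (h2 | ⟨h2, h2'⟩)
    · exact Or.inl (h1.trans h2)
    · exact Or.inl (h2 ▸ h1)
    · exact Or.inl (h1 ▸ h2)
    · exact Or.inr ⟨h1.trans h2, h₀.2.1 _ _ _ h1' h2'⟩
  · rintro a b (h1 | ⟨h1, h1'⟩) (h2 | ⟨h2, h2'⟩)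
    · exact absurd h2 (lt_asymm h1)
    · exact absurd h1 (h2 ▸ lt_irrefl _)
    · exact absurd h2 (h1 ▸ lt_irrefl _)
    · exact h₀.2.2.1 _ _ h1' h2'
  · intro a b
    rcases lt_trichotomy (ψ a) (ψ b) with h | h | h
    · exact Or.inl (Or.inl h)
    · rcases h₀.2.2.2.1 a b with h' | h'
      · exact Or.inl (Or.inr ⟨h, h'⟩)
      · exact Or.inr (Or.inr ⟨h.symm, h'⟩)
    · exact Or.inr (Or.inl h)
  · rintro f a b (h | ⟨h, h'⟩)
    · exact Or.inl (by simpa [map_add] using add_lt_add_left h (ψ f))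
    · exact Or.inr ⟨by simp [map_add, h], h₀.2.2.2.2 f a b h'⟩

end Helpers

section RankOne
variable {G : Type*} [AddCommGroup G]
variable (htf : ∀ (g : G) (n : ℕ), 0 < n → n • g = 0 → g = 0)

theorem comm_smul (f : G →+ ℚ) (hf : Function.Injective f) {x y : G}
    (hx : 0 < f x) (hy : 0 < f y) :
    ∃ m n : ℕ, 0 < m ∧ 0 < n ∧ m • x = n • y := by
  set a := f x with ha
  set b := f y with hb
  have hna : 0 < a.num := Rat.num_pos.mpr hx
  have hnb : 0 < b.num := Rat.num_pos.mpr hy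
  refine ⟨b.num.toNat * a.den, a.num.toNat * b.den, ?_, ?_, ?_⟩
  · exact Nat.mul_pos (by omega) a.pos
  · exact Nat.mul_pos (by omega) b.pos
  · apply hf
    rw [map_nsmul, map_nsmul, nsmul_eq_mul, nsmul_eq_mul, ← ha, ← hb]
    push_cast [Int.toNat_of_nonneg (le_of_lt hnb), Int.toNat_of_nonneg (le_of_lt hna)]
    have h1 : (a.den : ℚ) * a = a.num := by
      have h := Rat.num_div_den a
      rw [div_eq_iff (by exact_mod_cast a.den_ne_zero : (a.den : ℚ) ≠ 0)] at h
      rw [mul_comm]; exact h.symm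
    have h2 : (b.den : ℚ) * b = b.num := by
      have h := Rat.num_div_den b
      rw [div_eq_iff (by exact_mod_cast b.den_ne_zero : (b.den : ℚ) ≠ 0)] at h
      rw [mul_comm]; exact h.symm
    have e1 : ((b.num.toNat : ℚ)) = (b.num : ℚ) := by
      exact_mod_cast congrArg (Int.cast : ℤ → ℚ) (Int.toNat_of_nonneg (le_of_lt hnb))
    have e2 : ((a.num.toNat : ℚ)) = (a.num : ℚ) := by
      exact_mod_cast congrArg (Int.cast : ℤ → ℚ) (Int.toNat_of_nonneg (le_of_lt hna))
    rw [e1, e2]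
    calc (b.num : ℚ) * a.den * a = b.num * (a.den * a) := by ring
    _ = b.num * a.num := by rw [h1]
    _ = a.num * (b.den * b) := by rw [h2]; ring
    _ = a.num * b.den * b := by ring

include htf in
theorem pos_of_pos {le : G → G → Prop} (hle : IsInvariantTotalOrder le)
    (f : G →+ ℚ) (hf : Function.Injective f) {x y : G}
    (hx : 0 < f x) (hy : 0 < f y) (h : le 0 x) : le 0 y := by
  obtain ⟨m, n, hm, hn, hmn⟩ := comm_smul f hf hx hy
  rcases hle.2.2.2.1 0 y with h' | h'
  · exact h'
  · exfalso
    have h1 : le 0 (m • x) := ito_nsmul_nonneg hle h m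
    have h2 : le (n • y) 0 := ito_nsmul_nonpos hle h' n
    rw [← hmn] at h2
    have h3 : m • x = 0 := (hle.2.2.1 _ _ h1 h2).symm
    have h4 : x = 0 := htf x m hm h3
    rw [h4, map_zero] at hx
    exact lt_irrefl 0 hx

include htf in
theorem le_eq_pos {le : G → G → Prop} (hle : IsInvariantTotalOrder le)
    (f : G →+ ℚ) (hf : Function.Injective f) {x₀ : G}
    (hx₀ : 0 < f x₀) (h₀ : le 0 x₀) : le = fun a b => f a ≤ f b := by
  have key : ∀ z : G, 0 < f z → le 0 z := fun z hz => pos_of_pos htf hle f hf hx₀ hz h₀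
  funext a b
  apply propext
  constructor
  · intro hab
    by_contra hc
    push_neg at hc
    have h1 : 0 < f (a - b) := by rw [map_sub]; linarith
    have h2 : le 0 (a - b) := key _ h1
    have h3 : le 0 (b - a) := ito_sub hle hab
    have h4 : le (b - a) 0 := by
      have := ito_shift hle (b - a) h2
      simpa [sub_add_cancel] using this
    have h5 : b - a = 0 := (hle.2.2.1 _ _ h3 h4).symm
    have hba : b = a := sub_eq_zero.mp h5
    rw [hba] at hc; exact lt_irrefl _ hc
  · intro hab
    rcases eq_or_lt_of_le hab with heq | hlt
    · rw [hf heq]; exact hle.1 b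
    · have h1 : 0 < f (b - a) := by rw [map_sub]; linarith
      exact ito_of_sub hle (key _ h1)

include htf in
theorem finite_of_rank_one [Nontrivial G] (f : G →+ ℚ) (hf : Function.Injective f) :
    {le : G → G → Prop | IsInvariantTotalOrder le}.Finite := by
  apply Set.Finite.subset
    ((Set.finite_singleton (fun a b : G => f b ≤ f a)).insert (fun a b : G => f a ≤ f b))
  intro le hle
  rw [Set.mem_insert_iff]
  obtain ⟨g, hg⟩ := exists_ne (0 : G)
  have hfg : f g ≠ 0 := fun h => hg (hf (by rw [h, map_zero]))
  obtain ⟨x₀, hx₀⟩ : ∃ x₀ : G, 0 < f x₀ := by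
    rcases lt_or_gt_of_ne hfg with h | h
    · exact ⟨-g, by rw [map_neg]; linarith⟩
    · exact ⟨g, h⟩
  rcases hle.2.2.2.1 0 x₀ with h | h
  · left
    exact le_eq_pos htf hle f hf hx₀ h
  · right
    rw [Set.mem_singleton_iff]
    have hle' : IsInvariantTotalOrder (fun a b => le b a) :=
      ⟨hle.1, fun a b c h1 h2 => hle.2.1 c b a h2 h1, fun a b h1 h2 => hle.2.2.1 a b h2 h1,
        fun a b => (hle.2.2.2.1 b a), fun c a b hab => hle.2.2.2.2 c b a hab⟩
    have h1 := le_eq_pos htf hle' f hf hx₀ h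
    have h2 : ∀ a b : G, le b a = (f a ≤ f b) := fun a b => congrFun (congrFun h1 a) b
    funext a b
    exact h2 b a

end RankOne

section Fwd
variable {G : Type*} [AddCommGroup G]
variable (htf : ∀ (g : G) (n : ℕ), 0 < n → n • g = 0 → g = 0)

local notation "K" => FractionRing ℤ
local notation "S" => nonZeroDivisors ℤ
local notation "V" => LocalizedModule (nonZeroDivisors ℤ) G
local notation "ι" => LocalizedModule.mkLinearMap (nonZeroDivisors ℤ) G

include htf in
theorem htf_int : ∀ (g : G) (n : ℤ), n ≠ 0 → n • g = 0 → g = 0 := by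
  intro g n hn h
  rcases lt_or_gt_of_ne hn with hlt | hgt
  · apply htf g (-n).toNat (by omega)
    have : ((-n).toNat : ℤ) • g = 0 := by
      rw [Int.toNat_of_nonneg (by omega), neg_smul, h, neg_zero]
    rwa [natCast_zsmul] at this
  · apply htf g n.toNat (by omega)
    have : (n.toNat : ℤ) • g = 0 := by rw [Int.toNat_of_nonneg (by omega)]; exact h
    rwa [natCast_zsmul] at this

include htf in
theorem iota_eq_zero {p : G} (h : (ι p : V) = 0) : p = 0 := by
  rw [LocalizedModule.mkLinearMap_apply, ← LocalizedModule.zero_mk (1 : ↥S),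
    LocalizedModule.mk_eq] at h
  obtain ⟨u, hu⟩ := h
  simp only [one_smul, smul_zero] at hu
  have hu' : (u : ℤ) • p = 0 := by
    rw [← hu]; rfl
  exact htf_int htf _ (u : ℤ) (mem_nonZeroDivisors_iff_ne_zero.mp u.2) hu'

include htf in
theorem iota_inj {p q : G} (h : (ι p : V) = ι q) : p = q := by
  have h1 : (ι (p - q) : V) = 0 := by rw [map_sub, h, sub_self]
  have := iota_eq_zero htf h1
  exact sub_eq_zero.mp this

theorem am_inj : Function.Injective (algebraMap ℤ K) :=
  IsFractionRing.injective ℤ K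

/-- bridge between K-scalars and ℤ-scalars on the localized module -/
theorem bridge (z : ℤ) (x : G) : (algebraMap ℤ K z) • (ι x : V) = ι (z • x) := by
  rw [LocalizedModule.mkLinearMap_apply, LocalizedModule.mkLinearMap_apply,
    ← Localization.mk_one_eq_algebraMap, LocalizedModule.mk_smul_mk, one_mul]

include htf in
theorem indep_K {x y : G} (hxy : ∀ m n : ℤ, m • x + n • y = 0 → m = 0 ∧ n = 0)
    (a b : K) (h : a • (ι x : V) + b • ι y = 0) : a = 0 ∧ b = 0 := by
  obtain ⟨c, hc⟩ := IsLocalization.exist_integer_multiples_of_finite S ![a, b]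
  obtain ⟨m, hm⟩ := hc 0
  obtain ⟨n, hn⟩ := hc 1
  simp only [Matrix.cons_val_zero, Matrix.cons_val_one, Matrix.head_cons] at hm hn
  rw [Algebra.smul_def] at hm hn
  have hcne : (c : ℤ) ≠ 0 := mem_nonZeroDivisors_iff_ne_zero.mp c.2
  have hamc : algebraMap ℤ K (c : ℤ) ≠ 0 := fun hh => hcne (am_inj (by rw [hh, map_zero]))
  have h2 : (algebraMap ℤ K (c : ℤ)) • (a • (ι x : V) + b • ι y) = 0 := by rw [h, smul_zero]
  rw [smul_add, smul_smul, smul_smul] at h2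
  rw [← hm, ← hn, bridge, bridge, ← map_add] at h2
  have h3 : m • x + n • y = 0 := iota_eq_zero htf h2
  obtain ⟨hm0, hn0⟩ := hxy m n h3
  subst hm0; subst hn0
  rw [map_zero] at hm hn
  constructor
  · exact (mul_eq_zero.mp hm.symm).resolve_left hamc
  · exact (mul_eq_zero.mp hn.symm).resolve_left hamc

theorem span_of_dep {g x : G} (m n : ℤ) (hm : m ≠ 0) (h : m • x + n • g = 0) :
    ∃ c : K, (ι x : V) = c • ι g := by
  have hamm : algebraMap ℤ K m ≠ 0 := fun hh => hm (am_inj (by rw [hh, map_zero]))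
  refine ⟨(algebraMap ℤ K m)⁻¹ * (- algebraMap ℤ K n), ?_⟩
  apply smul_right_injective V hamm
  dsimp only
  rw [smul_smul, ← mul_assoc, mul_inv_cancel₀ hamm, one_mul, ← map_neg, bridge, bridge]
  apply congrArg
  rw [neg_smul, eq_comm, neg_eq_iff_add_eq_zero, add_comm]
  exact h

include htf in
theorem exists_emb_of_dep [Nontrivial G]
    (hdep : ∀ x y : G, ∃ m n : ℤ, m • x + n • y = 0 ∧ ¬(m = 0 ∧ n = 0)) :
    ∃ f : G →+ ℚ, Function.Injective f := by
  obtain ⟨g, hg⟩ := exists_ne (0 : G)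
  have hιg : (ι g : V) ≠ 0 := fun h => hg (iota_eq_zero htf h)
  have hker : LinearMap.ker (LinearMap.toSpanSingleton K V (ι g)) = ⊥ := by
    rw [LinearMap.ker_eq_bot']
    intro c hc
    rw [LinearMap.toSpanSingleton_apply] at hc
    exact (smul_eq_zero.mp hc).resolve_right hιg
  obtain ⟨p, hp⟩ := (LinearMap.toSpanSingleton K V (ι g)).exists_leftInverse_of_injective hker
  have hpg : p (ι g) = 1 := by
    have h1 := LinearMap.ext_iff.mp hp 1
    simpa [LinearMap.toSpanSingleton_apply] using h1
  let e := FractionRing.algEquiv ℤ ℚ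
  refine ⟨AddMonoidHom.mk' (fun x => e (p (ι x))) (by intro a b; simp only [map_add]), ?_⟩
  rw [injective_iff_map_eq_zero]
  intro x hx
  simp only [AddMonoidHom.mk'_apply] at hx
  have hpx : p (ι x) = 0 := by
    apply e.injective
    rw [hx, map_zero]
  obtain ⟨m, n, hrel, hmn⟩ := hdep x g
  have hm : m ≠ 0 := by
    intro h0
    subst h0
    have hn : n ≠ 0 := fun h => hmn ⟨rfl, h⟩
    rw [zero_smul, zero_add] at hrel
    exact hg (htf_int htf g n hn hrel)
  obtain ⟨c, hc⟩ := span_of_dep (G := G) m n hm hrel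
  have hc0 : c = 0 := by
    have h2 := congrArg p hc
    rw [hpx, map_smul, hpg, smul_eq_mul, mul_one] at h2
    exact h2.symm
  rw [hc0, zero_smul] at hc
  exact iota_eq_zero htf hc

include htf in
theorem exists_base_order : ∃ le₀ : G → G → Prop, IsInvariantTotalOrder le₀ := by
  letI : LinearOrder ↥(Module.Basis.ofVectorSpaceIndex K V) :=
    IsWellOrder.linearOrder WellOrderingRel
  let B := Module.Basis.ofVectorSpace K V
  let e := FractionRing.algEquiv ℤ ℚ
  let F : G → Lex (↥(Module.Basis.ofVectorSpaceIndex K V) →₀ ℚ) :=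
    fun v => toLex (Finsupp.mapRange (⇑e) (map_zero e) (B.repr (ι v)))
  have hadd : ∀ a b : G, F (a + b) = F a + F b := by
    intro a b
    show toLex _ = toLex _ + toLex _
    rw [map_add, map_add, Finsupp.mapRange_add (map_add e)]
    rfl
  have hinj : Function.Injective F := by
    intro a b hab
    have h1 : Finsupp.mapRange (⇑e) (map_zero e) (B.repr (ι a)) =
        Finsupp.mapRange (⇑e) (map_zero e) (B.repr (ι b)) := hab
    have h2 : B.repr (ι a) = B.repr (ι b) :=
      Finsupp.mapRange_injective (⇑e) (map_zero e) e.injective h1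
    exact iota_inj htf (B.repr.injective h2)
  exact ⟨fun a b => F a ≤ F b, ito_pullback (AddMonoidHom.mk' F hadd) hinj⟩

include htf in
theorem infinite_of_indep {x y : G}
    (hxy : ∀ m n : ℤ, m • x + n • y = 0 → m = 0 ∧ n = 0) :
    {le : G → G → Prop | IsInvariantTotalOrder le}.Infinite := by
  obtain ⟨le₀, hle₀⟩ := exists_base_order htf
  set j2 : (K × K) →ₗ[K] V :=
    (LinearMap.toSpanSingleton K V (ι x)).coprod (LinearMap.toSpanSingleton K V (ι y)) with hj2
  have hker : LinearMap.ker j2 = ⊥ := by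
    rw [LinearMap.ker_eq_bot']
    rintro ⟨a, b⟩ hab
    rw [hj2, LinearMap.coprod_apply, LinearMap.toSpanSingleton_apply,
      LinearMap.toSpanSingleton_apply] at hab
    obtain ⟨ha, hb⟩ := indep_K htf hxy a b hab
    simp [ha, hb, Prod.ext_iff]
  obtain ⟨p, hp⟩ := j2.exists_leftInverse_of_injective hker
  have hpx : p (ι x) = (1, 0) := by
    have h1 := LinearMap.ext_iff.mp hp (1, 0)
    simpa [hj2, LinearMap.coprod_apply, LinearMap.toSpanSingleton_apply] using h1
  have hpy : p (ι y) = (0, 1) := by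
    have h1 := LinearMap.ext_iff.mp hp (0, 1)
    simpa [hj2, LinearMap.coprod_apply, LinearMap.toSpanSingleton_apply] using h1
  let e := FractionRing.algEquiv ℤ ℚ
  have hφadd : ∀ a b : G, p (ι (a + b)) = p (ι a) + p (ι b) := by
    intro a b; rw [map_add, map_add]
  let ψ : ℚ → (G →+ ℚ) := fun q =>
    AddMonoidHom.mk' (fun v => q * e ((p (ι v)).1) + e ((p (ι v)).2))
      (by intro a b; rw [hφadd]; simp [Prod.fst_add, Prod.snd_add, map_add]; ring)
  -- evaluation on integer combinations
  have hval : ∀ (q : ℚ) (m n : ℤ), ψ q (m • x + n • y) = q * m + n := by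
    intro q m n
    have h1 : (ι (m • x + n • y) : V) =
        (algebraMap ℤ K m) • ι x + (algebraMap ℤ K n) • ι y := by
      rw [map_add, bridge, bridge]
    have h2 : p (ι (m • x + n • y)) = (algebraMap ℤ K m, algebraMap ℤ K n) := by
      rw [h1, map_add, map_smul, map_smul, hpx, hpy]
      simp [Prod.ext_iff, smul_eq_mul]
    show q * e ((p (ι (m • x + n • y))).1) + e ((p (ι (m • x + n • y))).2) = q * m + n
    rw [h2]
    have hem : e (algebraMap ℤ K m) = (m : ℚ) := by
      rw [AlgEquiv.commutes]; simp
    have hen : e (algebraMap ℤ K n) = (n : ℚ) := by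
      rw [AlgEquiv.commutes]; simp
    simp [hem, hen]
  let F : ℚ → (G → G → Prop) := fun q =>
    fun a b => ψ q a < ψ q b ∨ (ψ q a = ψ q b ∧ le₀ a b)
  have hmem : ∀ q : ℚ, F q ∈ {le : G → G → Prop | IsInvariantTotalOrder le} :=
    fun q => ito_lexpair (ψ q) hle₀
  have hlt : ∀ q q' : ℚ, q < q' → F q ≠ F q' := by
    intro q q' hqq' hFF
    obtain ⟨d, hd⟩ := exists_nat_gt (2 / (q' - q))
    have hsub : 0 < q' - q := by linarith
    have hd0 : (0 : ℚ) < d := lt_trans (by positivity) hd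
    have hd1 : 1 < (q' - q) * d := by
      have h2 := (div_lt_iff₀ hsub).mp hd
      nlinarith
    set c : ℤ := ⌊q * d⌋ + 1 with hcdef
    have hc1 : q * d < c := by
      have := Int.lt_floor_add_one (q * d)
      push_cast [hcdef]
      linarith
    have hc2 : (c : ℚ) ≤ q * d + 1 := by
      have := Int.floor_le (q * d)
      push_cast [hcdef]
      linarith
    have hc3 : (c : ℚ) < q' * d := by nlinarith
    set w : G := (d : ℤ) • x + (-c) • y with hwdef
    have hq : ψ q w = q * d - c := by
      rw [hwdef, hval q d (-c)]; push_cast; ring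
    have hq' : ψ q' w = q' * d - c := by
      rw [hwdef, hval q' d (-c)]; push_cast; ring
    have h1 : F q w 0 := Or.inl (by rw [hq, map_zero]; linarith)
    have h2 : ¬ F q' w 0 := by
      rintro (h | ⟨h, _⟩)
      · rw [hq', map_zero] at h; linarith
      · rw [hq', map_zero] at h; linarith
    exact h2 (hFF ▸ h1)
  have hinj : Function.Injective F := by
    intro q q' h
    by_contra hne
    rcases Ne.lt_or_gt hne with h' | h'
    · exact hlt _ _ h' h
    · exact hlt _ _ h' h.symm
  exact Set.infinite_of_injective_forall_mem hinj hmem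

end Fwd

/-- A (nontrivial) torsion-free abelian group admits only finitely many
invariant total orders iff it has rank 1, i.e., it embeds in ℚ. -/
theorem finitely_many_orders_iff_rank_one {G : Type*} [AddCommGroup G] [Nontrivial G]
    (htf : ∀ (g : G) (n : ℕ), 0 < n → n • g = 0 → g = 0) :
    {le : G → G → Prop | IsInvariantTotalOrder le}.Finite ↔
      ∃ f : G →+ ℚ, Function.Injective f := by
  constructor
  · intro hfin
    rcases Classical.em (∃ x y : G, ∀ m n : ℤ, m • x + n • y = 0 → m = 0 ∧ n = 0) with
      ⟨x, y, hxy⟩ | hdep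
    · exact absurd hfin (infinite_of_indep htf hxy)
    · push_neg at hdep
      apply exists_emb_of_dep htf
      intro x y
      obtain ⟨m, n, hmn, hne⟩ := hdep x y
      exact ⟨m, n, hmn, fun h => hne h.1 h.2⟩
  · rintro ⟨f, hf⟩
    exact finite_of_rank_one htf f hf
end

section
/- Let G be a group with a Conradian left-invariant order ≼ and suppose a, b ∈ G satisfy b·a·b⁻¹ = a^r in the sense that b·a·b⁻¹ and a generate a rank-1 abelian group with b·a·b⁻¹ = aʳ for a rational r ≠ 1 (e.g., b·a·b⁻¹ = a² in the Baumslag–Solitar group). Then aⁿ ≺ max(b, b⁻¹) for all n ∈ ℤ, i.e., a is infinitely smaller than b. -/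
/-- The single relation b·a·b⁻¹·(a²)⁻¹ defining the Baumslag–Solitar group B(1,2),
with `false` playing the role of `a` and `true` that of `b`. -/
def bsRels : Set (FreeGroup Bool) :=
  {FreeGroup.of true * FreeGroup.of false * (FreeGroup.of true)⁻¹ *
    (FreeGroup.of false * FreeGroup.of false)⁻¹}

/-- The Baumslag–Solitar group B(1,2) = ⟨a, b ∣ b·a·b⁻¹ = a²⟩. -/
abbrev BS12 : Type := PresentedGroup bsRels

/-- The generator a of B(1,2). -/
def aBS : BS12 := PresentedGroup.of false

/-- The generator b of B(1,2). -/
def bBS : BS12 := PresentedGroup.of true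

/-- For any Conradian left-order on B(1,2), aⁿ ≺ max(b, b⁻¹) for all n ∈ ℤ,
i.e. a is infinitely smaller than b. -/

private lemma arith4 (n s : ℕ) : 2 * ((2 ^ (n + 1) - 2) * s) + 2 * s = (2 ^ (n + 2) - 2) * s := by
  obtain ⟨x, hx⟩ : ∃ x, 2 ^ (n + 1) = x + 2 := by
    have h : 2 ^ 1 ≤ 2 ^ (n + 1) := Nat.pow_le_pow_right (by norm_num) (by omega)
    exact ⟨2 ^ (n + 1) - 2, by simp at h; omega⟩
  have h2 : 2 ^ (n + 2) = 2 * 2 ^ (n + 1) := by ring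
  rw [h2, hx, show x + 2 - 2 = x from rfl, show 2 * (x + 2) - 2 = 2 * x + 2 by omega]
  ring

private lemma arith1 (n i : ℕ) : 2 * ((2 ^ n - 1) * i) + i = (2 ^ (n + 1) - 1) * i := by
  obtain ⟨x, hx⟩ : ∃ x, 2 ^ n = x + 1 := ⟨2 ^ n - 1, by have := Nat.one_le_two_pow (n := n); omega⟩
  have h2 : 2 ^ (n + 1) = 2 * 2 ^ n := by ring
  rw [h2, hx, show x + 1 - 1 = x from rfl, show 2 * (x + 1) - 1 = 2 * x + 1 by omega]
  ring

private lemma arith2 (n i : ℕ) : (2 ^ (n + 1) - 1) * i + i = 2 ^ (n + 1) * i := by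
  obtain ⟨x, hx⟩ : ∃ x, 2 ^ (n + 1) = x + 1 :=
    ⟨2 ^ (n + 1) - 1, by have := Nat.one_le_two_pow (n := n + 1); omega⟩
  rw [hx, show x + 1 - 1 = x from rfl]
  ring

private lemma arith3 (n i : ℕ) : 2 ^ n * i + (2 ^ n - 1) * i = (2 ^ (n + 1) - 1) * i := by
  obtain ⟨x, hx⟩ : ∃ x, 2 ^ n = x + 1 := ⟨2 ^ n - 1, by have := Nat.one_le_two_pow (n := n); omega⟩
  have h2 : 2 ^ (n + 1) = 2 * 2 ^ n := by ring
  rw [h2, hx, show x + 1 - 1 = x from rfl, show 2 * (x + 1) - 1 = 2 * x + 1 by omega]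
  ring



theorem bs_rel : bBS * aBS * bBS⁻¹ = aBS * aBS := by
  have h1 : (PresentedGroup.mk bsRels) (FreeGroup.of true * FreeGroup.of false *
      (FreeGroup.of true)⁻¹ * (FreeGroup.of false * FreeGroup.of false)⁻¹) = 1 := by
    apply (QuotientGroup.eq_one_iff _).mpr
    exact Subgroup.subset_normalClosure rfl
  simp only [map_mul, map_inv] at h1
  exact mul_inv_eq_one.mp h1

theorem bBS_ne_one : bBS ≠ 1 := by
  have hrel : ∀ r ∈ bsRels, FreeGroup.lift
      (fun x : Bool => if x then Multiplicative.ofAdd (1:ℤ) else 1) r = 1 := by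
    intro r hr
    rw [Set.mem_singleton_iff.mp hr]
    simp
  intro hb
  have := congrArg (PresentedGroup.toGroup hrel) hb
  rw [show bBS = PresentedGroup.of true from rfl, PresentedGroup.toGroup.of] at this
  simp at this


section
variable {G : Type*} [Group G]
variable {le : G → G → Prop} (hord : IsLeftTotalOrder le)

namespace CAux
include hord

lemma lmul (f : G) {x y : G} (h : le x y) : le (f * x) (f * y) := hord.2.2.2.2 f x y h

lemma lcancel {f x y : G} (h : le (f * x) (f * y)) : le x y := by
  have := lmul hord f⁻¹ h
  simpa using this

lemma ltrans {x y z : G} (h1 : le x y) (h2 : le y z) : le x z := hord.2.1 x y z h1 h2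

lemma clt_iff {x y : G} : clt le x y ↔ ¬ le y x := by
  constructor
  · exact fun h => h.2
  · intro h; exact ⟨(hord.2.2.2.1 x y).resolve_right h, h⟩

lemma clt_mul (f : G) {x y : G} (h : clt le x y) : clt le (f * x) (f * y) := by
  rw [clt_iff hord] at h ⊢
  exact fun hc => h (lcancel hord hc)

lemma le_clt_trans {x y z : G} (h1 : le x y) (h2 : clt le y z) : clt le x z := by
  refine ⟨ltrans hord h1 h2.1, fun hc => h2.2 (ltrans hord hc h1)⟩

lemma clt_le_trans {x y z : G} (h1 : clt le x y) (h2 : le y z) : clt le x z := by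
  refine ⟨ltrans hord h1.1 h2, fun hc => h1.2 (ltrans hord h2 hc)⟩

lemma one_le_pow {A : G} (hA : le 1 A) (k : ℕ) : le 1 (A ^ k) := by
  induction k with
  | zero => simpa using hord.1 1
  | succ k ih =>
    have h1 : le (A ^ k * 1) (A ^ k * A) := lmul hord _ hA
    rw [mul_one, ← pow_succ] at h1
    exact ltrans hord ih h1

lemma pow_le_pow {A : G} (hA : le 1 A) {j k : ℕ} (h : j ≤ k) : le (A ^ j) (A ^ k) := by
  have h1 : le (A ^ j * 1) (A ^ j * A ^ (k - j)) := lmul hord _ (one_le_pow hord hA _)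
  rw [mul_one, ← pow_add] at h1
  rwa [Nat.add_sub_cancel' h] at h1

lemma pow_clt_pow {A : G} (hA : clt le 1 A) {j k : ℕ} (h : j < k) : clt le (A ^ j) (A ^ k) := by
  have h1 : clt le 1 (A ^ (k - j)) := by
    have h0 : le (A ^ 1) (A ^ (k - j)) := pow_le_pow hord hA.1 (by omega)
    rw [pow_one] at h0
    exact clt_le_trans hord hA h0
  have h2 := clt_mul hord (A ^ j) h1
  rw [mul_one, ← pow_add, Nat.add_sub_cancel' h.le] at h2
  exact h2



section Rel
variable {A B : G} (hrel : B * A = A * A * B)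
include hrel

omit hord in
lemma relN : ∀ j : ℕ, B * A ^ j = A ^ (2 * j) * B := by
  intro j
  induction j with
  | zero => simp
  | succ j ih =>
    have : B * A ^ (j + 1) = (B * A ^ j) * A := by rw [pow_succ, mul_assoc]
    rw [this, ih, mul_assoc, hrel, show 2 * (j + 1) = 2 * j + 1 + 1 by ring,
      pow_succ, pow_succ]
    group

omit hord in
lemma swap1 : ∀ j : ℕ, A ^ j * B⁻¹ = B⁻¹ * A ^ (2 * j) := by
  intro j
  calc A ^ j * B⁻¹ = B⁻¹ * (B * A ^ j) * B⁻¹ := by group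
    _ = B⁻¹ * (A ^ (2 * j) * B) * B⁻¹ := by rw [relN hrel]
    _ = B⁻¹ * A ^ (2 * j) := by group

omit hord in
lemma relNN : ∀ n j : ℕ, B ^ n * A ^ j = A ^ (2 ^ n * j) * B ^ n := by
  intro n
  induction n with
  | zero => simp
  | succ n ih =>
    intro j
    calc B ^ (n + 1) * A ^ j = B ^ n * (B * A ^ j) := by rw [pow_succ]; group
      _ = B ^ n * (A ^ (2 * j) * B) := by rw [relN hrel]
      _ = (B ^ n * A ^ (2 * j)) * B := by group
      _ = A ^ (2 ^ n * (2 * j)) * B ^ n * B := by rw [ih]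
      _ = A ^ (2 ^ (n + 1) * j) * B ^ (n + 1) := by
          rw [show 2 ^ n * (2 * j) = 2 ^ (n + 1) * j by ring, pow_succ]
          group

omit hord in
lemma swapN : ∀ n j : ℕ, A ^ j * (B ^ n)⁻¹ = (B ^ n)⁻¹ * A ^ (2 ^ n * j) := by
  intro n j
  calc A ^ j * (B ^ n)⁻¹ = (B ^ n)⁻¹ * (B ^ n * A ^ j) * (B ^ n)⁻¹ := by group
    _ = (B ^ n)⁻¹ * (A ^ (2 ^ n * j) * B ^ n) * (B ^ n)⁻¹ := by rw [relNN hrel]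
    _ = (B ^ n)⁻¹ * A ^ (2 ^ n * j) := by group

include hord

lemma core1 (hcon : ∀ f g : G, clt le 1 f → clt le 1 g → ∃ n : ℕ, 0 < n ∧ clt le g (f * g ^ n))
    (hA : clt le 1 A) (hB : clt le 1 B) (m : ℕ) (hm : 1 ≤ m) (hle : le B (A ^ m)) : False := by
  set i := 3 * m + 1 with hi
  -- B * B ≼ A ^ (3m)
  have hBB : le (B * B) (A ^ (3 * m)) := by
    have h1 : le (B * B) (B * A ^ m) := lmul hord B hle
    have h2 : B * A ^ m = A ^ (2 * m) * B := relN hrel m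
    have h3 : le (A ^ (2 * m) * B) (A ^ (2 * m) * A ^ m) := lmul hord _ hle
    rw [← pow_add] at h3
    rw [h2] at h1
    exact ltrans hord h1 (by rwa [show 2 * m + m = 3 * m by ring] at h3)
  -- positivity of g and f
  set g : G := B⁻¹ * A ^ i with hgdef
  set f : G := B⁻¹ * (B⁻¹ * A ^ i) with hfdef
  have hg : clt le 1 g := by
    have h1 : clt le B (A ^ i) := le_clt_trans hord hle (pow_clt_pow hord hA (by omega))
    have h2 := clt_mul hord B⁻¹ h1
    rwa [inv_mul_cancel] at h2
  have hf : clt le 1 f := by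
    have h1 : clt le (B * B) (A ^ i) := le_clt_trans hord hBB (pow_clt_pow hord hA (by omega))
    have h2 := clt_mul hord (B⁻¹ * B⁻¹) h1
    rw [show B⁻¹ * B⁻¹ * (B * B) = 1 by group, show B⁻¹ * B⁻¹ * A ^ i = f by
      rw [hfdef]; group] at h2
    exact h2
  -- powers of g
  have gpow : ∀ n : ℕ, g ^ n = (B ^ n)⁻¹ * A ^ ((2 ^ n - 1) * i) := by
    intro n
    induction n with
    | zero => simp
    | succ n ih =>
      have h2n : 1 ≤ 2 ^ n := Nat.one_le_two_pow
      calc g ^ (n + 1) = ((B ^ n)⁻¹ * A ^ ((2 ^ n - 1) * i)) * (B⁻¹ * A ^ i) := by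
            rw [pow_succ, ih, hgdef]
        _ = (B ^ n)⁻¹ * (A ^ ((2 ^ n - 1) * i) * B⁻¹) * A ^ i := by group
        _ = (B ^ n)⁻¹ * (B⁻¹ * A ^ (2 * ((2 ^ n - 1) * i))) * A ^ i := by rw [swap1 hrel]
        _ = (B ^ (n + 1))⁻¹ * (A ^ (2 * ((2 ^ n - 1) * i)) * A ^ i) := by
            rw [pow_succ]; group
        _ = (B ^ (n + 1))⁻¹ * A ^ ((2 ^ (n + 1) - 1) * i) := by
            rw [← pow_add, arith1]
  -- the contradiction
  obtain ⟨n, hn, hlt⟩ := hcon f g hf hg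
  have h2n1 : 1 ≤ 2 ^ (n + 1) := Nat.one_le_two_pow
  have key : le (A ^ ((2 ^ (n + 1) - 1) * i)) (B ^ (n + 1) * A ^ i) := by
    have h1 : le 1 (A ^ i * B ^ (n + 1)) := by
      have ha : le 1 (A ^ i) := one_le_pow hord hA.1 i
      have hb : le (A ^ i * 1) (A ^ i * B ^ (n + 1)) :=
        lmul hord _ (one_le_pow hord hB.1 (n + 1))
      rw [mul_one] at hb
      exact ltrans hord ha hb
    have h2 : le (A ^ ((2 ^ (n + 1) - 1) * i) * 1)
        (A ^ ((2 ^ (n + 1) - 1) * i) * (A ^ i * B ^ (n + 1))) := lmul hord _ h1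
    rw [mul_one] at h2
    have h3 : A ^ ((2 ^ (n + 1) - 1) * i) * (A ^ i * B ^ (n + 1)) =
        A ^ (2 ^ (n + 1) * i) * B ^ (n + 1) := by
      rw [← mul_assoc, ← pow_add, arith2]
    rw [h3] at h2
    have h4 : B ^ (n + 1) * A ^ i = A ^ (2 ^ (n + 1) * i) * B ^ (n + 1) := relNN hrel _ _
    rwa [← h4] at h2
  have hcontra : le (f * g ^ n) g := by
    have e1 : f * g ^ n = (B ^ (n + 2))⁻¹ * A ^ ((2 ^ (n + 1) - 1) * i) := by
      rw [gpow n, hfdef]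
      calc B⁻¹ * (B⁻¹ * A ^ i) * ((B ^ n)⁻¹ * A ^ ((2 ^ n - 1) * i))
          = B⁻¹ * B⁻¹ * (A ^ i * (B ^ n)⁻¹) * A ^ ((2 ^ n - 1) * i) := by group
        _ = B⁻¹ * B⁻¹ * ((B ^ n)⁻¹ * A ^ (2 ^ n * i)) * A ^ ((2 ^ n - 1) * i) := by
            rw [swapN hrel]
        _ = (B ^ (n + 2))⁻¹ * (A ^ (2 ^ n * i) * A ^ ((2 ^ n - 1) * i)) := by
            rw [show (n : ℕ) + 2 = n + 1 + 1 by ring, pow_succ, pow_succ]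
            group
        _ = (B ^ (n + 2))⁻¹ * A ^ ((2 ^ (n + 1) - 1) * i) := by
            rw [← pow_add, arith3]
    have e2 : g = (B ^ (n + 2))⁻¹ * (B ^ (n + 1) * A ^ i) := by
      rw [hgdef, show (n : ℕ) + 2 = n + 1 + 1 by ring, pow_succ]
      group
    rw [e1, e2]
    exact lmul hord _ key
  exact hlt.2 hcontra

end Rel

section Rel2
variable {A C : G} (hrelC : C * (A * A) = A * C)
include hrelC

omit hord in
lemma relC : ∀ j : ℕ, C * A ^ (2 * j) = A ^ j * C := by
  intro j
  induction j with
  | zero => simp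
  | succ j ih =>
    calc C * A ^ (2 * (j + 1)) = (C * A ^ (2 * j)) * (A * A) := by
          rw [show 2 * (j + 1) = 2 * j + 1 + 1 by ring, pow_succ, pow_succ]; group
      _ = A ^ j * C * (A * A) := by rw [ih]
      _ = A ^ j * (C * (A * A)) := by group
      _ = A ^ j * (A * C) := by rw [hrelC]
      _ = A ^ (j + 1) * C := by rw [pow_succ]; group

include hord

lemma core2 (hcon : ∀ f g : G, clt le 1 f → clt le 1 g → ∃ n : ℕ, 0 < n ∧ clt le g (f * g ^ n))
    (hA : clt le 1 A) (hC : clt le 1 C) (m : ℕ) (hm : 1 ≤ m) (hCm : le C (A ^ m)) : False := by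
  set s := 2 * m + 2 with hs
  -- one-step contraction bound
  have step : ∀ L : ℕ, le (C * A ^ L) (A ^ (L / 2 + 1 + m)) := by
    intro L
    have h1 : le (A ^ L) (A ^ (2 * (L / 2 + 1))) := pow_le_pow hord hA.1 (by omega)
    have h2 := lmul hord C h1
    rw [relC hrelC] at h2
    have h3 : le (A ^ (L / 2 + 1) * C) (A ^ (L / 2 + 1) * A ^ m) := lmul hord _ hCm
    rw [← pow_add] at h3
    exact ltrans hord h2 h3
  -- iterated contraction bound
  have claim : ∀ k : ℕ, ∀ L : ℕ, L ≤ 2 ^ k * s + s → le (C ^ k * A ^ L) (A ^ (2 * s)) := by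
    intro k
    induction k with
    | zero =>
      intro L hL
      have : le (A ^ L) (A ^ (2 * s)) := pow_le_pow hord hA.1 (by omega)
      simpa using this
    | succ k ih =>
      intro L hL
      have hL' : L / 2 + 1 + m ≤ 2 ^ k * s + s := by
        have hX : 2 ^ (k + 1) * s = 2 * (2 ^ k * s) := by ring
        omega
      have h1 := lmul hord (C ^ k) (step L)
      have e1 : C ^ k * (C * A ^ L) = C ^ (k + 1) * A ^ L := by rw [pow_succ]; group
      rw [e1] at h1
      exact ltrans hord h1 (ih _ hL')
  set g : G := C * A ^ (2 * s) with hgdef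
  set f : G := C * C with hfdef
  have hg : clt le 1 g := by
    have h1 : clt le (A ^ s * 1) (A ^ s * C) := clt_mul hord _ hC
    rw [mul_one] at h1
    have h2 : clt le 1 (A ^ s * C) := le_clt_trans hord (one_le_pow hord hA.1 s) h1
    rwa [← relC hrelC] at h2
  have hf : clt le 1 f := by
    have h1 : clt le (C * 1) (C * C) := clt_mul hord _ hC
    rw [mul_one] at h1
    exact le_clt_trans hord hC.1 h1
  have gpow : ∀ n : ℕ, g ^ n = C ^ n * A ^ ((2 ^ (n + 1) - 2) * s) := by
    intro n
    induction n with
    | zero => simp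
    | succ n ih =>
      calc g ^ (n + 1) = (C ^ n * A ^ ((2 ^ (n + 1) - 2) * s)) * (C * A ^ (2 * s)) := by
            rw [pow_succ, ih]
        _ = C ^ n * (A ^ ((2 ^ (n + 1) - 2) * s) * C) * A ^ (2 * s) := by group
        _ = C ^ n * (C * A ^ (2 * ((2 ^ (n + 1) - 2) * s))) * A ^ (2 * s) := by
            rw [← relC hrelC]
        _ = C ^ (n + 1) * (A ^ (2 * ((2 ^ (n + 1) - 2) * s)) * A ^ (2 * s)) := by
            rw [pow_succ]; group
        _ = C ^ (n + 1) * A ^ ((2 ^ (n + 1 + 1) - 2) * s) := by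
            rw [← pow_add, show 2 * ((2 ^ (n + 1) - 2) * s) + 2 * s = 2 * ((2 ^ (n + 1) - 2) * s) + 2 * s from rfl, arith4]
  obtain ⟨n, hn, hlt⟩ := hcon f g hf hg
  have hcontra : le (f * g ^ n) g := by
    have hL : (2 ^ (n + 1) - 2) * s ≤ 2 ^ (n + 1) * s + s := by
      have h1 : (2 ^ (n + 1) - 2) * s ≤ 2 ^ (n + 1) * s :=
        Nat.mul_le_mul_right s (Nat.sub_le _ _)
      omega
    have h1 := claim (n + 1) _ hL
    have h2 := lmul hord C h1
    have e1 : C * (C ^ (n + 1) * A ^ ((2 ^ (n + 1) - 2) * s)) = f * g ^ n := by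
      rw [gpow n, hfdef, pow_succ]
      group
    rw [e1] at h2
    exact h2
  exact hlt.2 hcontra

end Rel2

omit hord

lemma main_pos (h : IsConradianOrder le) {A B : G} (hrel : B * A * B⁻¹ = A * A)
    (hBne : B ≠ 1) (hA : le 1 A) (n : ℤ) :
    (le 1 B → clt le (A ^ n) B) ∧ (le B 1 → clt le (A ^ n) B⁻¹) := by
  have hord := h.1
  have hanti := h.1.2.2.1
  by_cases hA1 : le A 1
  · -- A = 1
    have hA0 : A = 1 := hanti A 1 hA1 hA
    subst hA0
    rw [one_zpow]
    constructor
    · intro hb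
      exact ⟨hb, fun hc => hBne (hanti B 1 hc hb)⟩
    · intro hb
      have h1 : le 1 B⁻¹ := by have := lmul hord B⁻¹ hb; simpa using this
      exact ⟨h1, fun hc => hBne (inv_eq_one.mp (hanti B⁻¹ 1 hc h1))⟩
  · have hAc : clt le 1 A := ⟨hA, hA1⟩
    have hneg : ∀ k : ℤ, k ≤ 0 → le (A ^ k) 1 := by
      intro k hk
      have hk' : A ^ k = (A ^ (-k).toNat)⁻¹ := by
        have hnk : (((-k).toNat : ℤ)) = -k := Int.toNat_of_nonneg (by omega)
        rw [← zpow_natCast, hnk, ← zpow_neg, neg_neg]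
      have h1 : le 1 (A ^ (-k).toNat) := one_le_pow hord hA _
      have h2 := lmul hord (A ^ (-k).toNat)⁻¹ h1
      rw [mul_one, inv_mul_cancel] at h2
      rwa [hk']
    constructor
    · intro hb
      have hBc : clt le 1 B := ⟨hb, fun hc => hBne (hanti B 1 hc hb)⟩
      rw [clt_iff hord]
      intro hcon
      rcases le_or_gt n 0 with hn | hn
      · exact hBne (hanti B 1 (ltrans hord hcon (hneg n hn)) hb)
      · have hrel' : B * A = A * A * B := by
          rw [← hrel]; group
        have hk : A ^ n = A ^ n.toNat := by
          rw [← zpow_natCast, Int.toNat_of_nonneg (by omega)]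
        rw [hk] at hcon
        exact core1 hord hrel' h.2 hAc hBc n.toNat (by omega) hcon
    · intro hb
      have h1B : le 1 B⁻¹ := by have := lmul hord B⁻¹ hb; simpa using this
      have hCc : clt le 1 B⁻¹ :=
        ⟨h1B, fun hc => hBne (inv_eq_one.mp (hanti B⁻¹ 1 hc h1B))⟩
      rw [clt_iff hord]
      intro hcon
      rcases le_or_gt n 0 with hn | hn
      · exact hBne (inv_eq_one.mp (hanti B⁻¹ 1 (ltrans hord hcon (hneg n hn)) h1B))
      · have hrelC : B⁻¹ * (A * A) = A * B⁻¹ := by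
          rw [← hrel]; group
        have hk : A ^ n = A ^ n.toNat := by
          rw [← zpow_natCast, Int.toNat_of_nonneg (by omega)]
        rw [hk] at hcon
        exact core2 hord hrelC h.2 hAc hCc n.toNat (by omega) hcon

lemma main_abs (h : IsConradianOrder le) {A B : G} (hrel : B * A * B⁻¹ = A * A)
    (hBne : B ≠ 1) (n : ℤ) :
    (le 1 B → clt le (A ^ n) B) ∧ (le B 1 → clt le (A ^ n) B⁻¹) := by
  rcases h.1.2.2.2.1 1 A with hA | hA
  · exact main_pos h hrel hBne hA n
  · have hA' : le 1 A⁻¹ := by have := h.1.2.2.2.2 A⁻¹ A 1 hA; simpa using this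
    have hrel' : B * A⁻¹ * B⁻¹ = A⁻¹ * A⁻¹ := by
      calc B * A⁻¹ * B⁻¹ = (B * A * B⁻¹)⁻¹ := by group
        _ = (A * A)⁻¹ := by rw [hrel]
        _ = A⁻¹ * A⁻¹ := by group
    have hmain := main_pos h hrel' hBne hA' (-n)
    rwa [show A⁻¹ ^ (-n) = A ^ n by simp] at hmain

end CAux
end

/-- STATEMENT 12 proof. -/
theorem aBS_infinitely_smaller (le : BS12 → BS12 → Prop) (h : IsConradianOrder le)
    (n : ℤ) :
    (le 1 bBS → clt le (aBS ^ n) bBS) ∧ (le bBS 1 → clt le (aBS ^ n) bBS⁻¹) :=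
  CAux.main_abs h bs_rel bBS_ne_one n
end

section
/- Every Conradian left-invariant order on the Baumslag–Solitar group B(1,2) is bi-invariant. -/
/-- The exponent-sum-of-b homomorphism to ℤ. -/
noncomputable def qBS : BS12 →* Multiplicative ℤ :=
  PresentedGroup.toGroup (f := fun x => Multiplicative.ofAdd (if x then (1:ℤ) else 0)) (by
    intro r hr
    simp [bsRels] at hr
    subst hr
    simp [map_mul, map_inv])

noncomputable def qz (x : BS12) : ℤ := Multiplicative.toAdd (qBS x)

@[simp] theorem qz_mul (x y : BS12) : qz (x*y) = qz x + qz y := by simp [qz, map_mul]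
@[simp] theorem qz_inv (x : BS12) : qz x⁻¹ = - qz x := by simp [qz, map_inv]
@[simp] theorem qz_one : qz (1 : BS12) = 0 := by simp [qz]
@[simp] theorem qz_a : qz aBS = 0 := by
  simp [qz, qBS, aBS, PresentedGroup.toGroup.of]
@[simp] theorem qz_b : qz bBS = 1 := by
  simp [qz, qBS, bBS, PresentedGroup.toGroup.of]
@[simp] theorem qz_pow (x : BS12) (n : ℕ) : qz (x^n) = n * qz x := by simp [qz, map_pow]
@[simp] theorem qz_zpow (x : BS12) (n : ℤ) : qz (x^n) = n * qz x := by simp [qz, map_zpow]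

/-- αBS n = b⁻ⁿ a bⁿ -/
def αBS (n : ℕ) : BS12 := (bBS ^ n)⁻¹ * aBS * bBS ^ n

theorem b_α_conj (n : ℕ) : bBS * αBS (n+1) * bBS⁻¹ = αBS n := by
  simp only [αBS, pow_succ]
  group

theorem α_succ_sq (n : ℕ) : αBS n = αBS (n+1) * αBS (n+1) := by
  have h : αBS (n+1) * αBS (n+1) = (bBS ^ (n+1))⁻¹ * (aBS * aBS) * bBS ^ (n+1) := by
    simp only [αBS]; group
  rw [h, ← bs_rel]
  simp only [αBS, pow_succ]
  group

theorem α_succ_zpow (n : ℕ) (k : ℤ) : (αBS n)^k = (αBS (n+1))^(2*k) := by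
  have h : (αBS n)^k = ((αBS (n+1))^(2:ℤ))^k := by
    rw [α_succ_sq n, zpow_two]
  rw [h, ← zpow_mul]

theorem α_shift_zpow (n j : ℕ) (k : ℤ) : (αBS n)^k = (αBS (n+j))^(2^j*k) := by
  induction j generalizing k with
  | zero => simp
  | succ j ih =>
    rw [ih k, α_succ_zpow (n+j) (2^j*k)]
    ring_nf

/-- membership in H = the copy of ℤ[1/2] -/
def inH (x : BS12) : Prop := ∃ (n : ℕ) (k : ℤ), x = (αBS n)^k

theorem inH_one : inH 1 := ⟨0, 0, by simp⟩
theorem inH_a : inH aBS := ⟨0, 1, by simp [αBS]⟩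

theorem inH_pair {x y : BS12} (hx : inH x) (hy : inH y) :
    ∃ (N : ℕ) (k l : ℤ), x = (αBS N)^k ∧ y = (αBS N)^l := by
  obtain ⟨n, k, rfl⟩ := hx
  obtain ⟨m, l, rfl⟩ := hy
  refine ⟨max n m, 2^(max n m - n) * k, 2^(max n m - m) * l, ?_, ?_⟩
  · rw [α_shift_zpow n (max n m - n) k, Nat.add_sub_cancel' (le_max_left n m)]
  · rw [α_shift_zpow m (max n m - m) l, Nat.add_sub_cancel' (le_max_right n m)]

theorem inH_mul {x y : BS12} (hx : inH x) (hy : inH y) : inH (x*y) := by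
  obtain ⟨N, k, l, rfl, rfl⟩ := inH_pair hx hy
  exact ⟨N, k + l, (zpow_add _ _ _).symm⟩

theorem inH_inv {x : BS12} (hx : inH x) : inH x⁻¹ := by
  obtain ⟨n, k, rfl⟩ := hx; exact ⟨n, -k, (zpow_neg _ _).symm⟩

theorem inH_comm {x y : BS12} (hx : inH x) (hy : inH y) : x * y = y * x := by
  obtain ⟨N, k, l, rfl, rfl⟩ := inH_pair hx hy
  rw [← zpow_add, ← zpow_add, add_comm]

theorem inH_zpow {x : BS12} (hx : inH x) (k : ℤ) : inH (x^k) := by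
  obtain ⟨n, j, rfl⟩ := hx; exact ⟨n, j*k, by rw [← zpow_mul]⟩

theorem qz_α (n : ℕ) : qz (αBS n) = 0 := by simp [αBS]

theorem qz_of_inH {x : BS12} (hx : inH x) : qz x = 0 := by
  obtain ⟨n, k, rfl⟩ := hx; simp [qz_α]

theorem b_conj_α (n : ℕ) : bBS * αBS n * bBS⁻¹ = αBS n * αBS n := by
  cases n with
  | zero => simpa [αBS] using bs_rel
  | succ n => rw [b_α_conj n, α_succ_sq n]

/-- squaring: b x b⁻¹ = x² for x ∈ H -/
theorem b_conj_sq {x : BS12} (hx : inH x) : bBS * x * bBS⁻¹ = x * x := by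
  obtain ⟨n, k, rfl⟩ := hx
  rw [← conj_zpow, b_conj_α n]
  have h : (αBS n * αBS n)^k = ((αBS n)^(2:ℤ))^k := by rw [zpow_two]
  rw [h, ← zpow_mul, two_mul, zpow_add]

/-- b⁻ᵈ x bᵈ computed explicitly -/
theorem binvd_conj_α (d n : ℕ) (k : ℤ) :
    (bBS^d)⁻¹ * (αBS n)^k * bBS^d = (αBS (n+d))^k := by
  have h := conj_zpow (i:=k) (a := (bBS^d)⁻¹) (b := αBS n)
  rw [inv_inv] at h
  rw [← h]
  congr 1
  simp only [αBS, pow_add]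
  group

/-- bᵈ x b⁻ᵈ = x^(2^d) for x ∈ H -/
theorem bd_conj_pow {x : BS12} (hx : inH x) (d : ℕ) :
    bBS^d * x * (bBS^d)⁻¹ = x^((2:ℤ)^d) := by
  induction d generalizing x with
  | zero => simp
  | succ d ih =>
    obtain ⟨n, k, rfl⟩ := hx
    have h1 : bBS^(d+1) * (αBS n)^k * (bBS^(d+1))⁻¹
        = bBS^d * (bBS * (αBS n)^k * bBS⁻¹) * (bBS^d)⁻¹ := by
      rw [pow_succ]; group
    rw [h1, b_conj_sq ⟨n, k, rfl⟩]
    have h2 : (αBS n)^k * (αBS n)^k = (αBS n)^(2*k) := by rw [two_mul, zpow_add]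
    rw [h2, ih ⟨n, 2*k, rfl⟩, ← zpow_mul, ← zpow_mul]
    ring_nf

theorem conjH_bz (z : ℤ) {x : BS12} (hx : inH x) : inH (bBS^z * x * (bBS^z)⁻¹) := by
  rcases le_or_gt 0 z with hz | hz
  · lift z to ℕ using hz
    rw [zpow_natCast, bd_conj_pow hx z]
    exact inH_zpow hx _
  · obtain ⟨d, rfl⟩ : ∃ d : ℕ, z = -(d:ℤ) := ⟨z.natAbs, by omega⟩
    obtain ⟨n, k, rfl⟩ := hx
    rw [zpow_neg, zpow_natCast, inv_inv, binvd_conj_α]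
    exact ⟨n+d, k, rfl⟩

/-- the subgroup witnessing the normal form x = u · bᶻ -/
noncomputable def TBS : Subgroup BS12 where
  carrier := {x | ∃ u, inH u ∧ x = u * bBS ^ (qz x)}
  one_mem' := ⟨1, inH_one, by simp⟩
  mul_mem' := by
    rintro x y ⟨u, hu, hx⟩ ⟨v, hv, hy⟩
    refine ⟨u * (bBS^(qz x) * v * (bBS^(qz x))⁻¹), inH_mul hu (conjH_bz _ hv), ?_⟩
    rw [qz_mul, zpow_add]
    calc x * y = u * bBS ^ qz x * (v * bBS ^ qz y) := by rw [← hx, ← hy]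
    _ = u * (bBS^(qz x) * v * (bBS^(qz x))⁻¹) * (bBS ^ qz x * bBS ^ qz y) := by group
  inv_mem' := by
    rintro x ⟨u, hu, hx⟩
    refine ⟨bBS^(-qz x) * u⁻¹ * (bBS^(-qz x))⁻¹, conjH_bz _ (inH_inv hu), ?_⟩
    rw [qz_inv]
    calc x⁻¹ = (u * bBS ^ qz x)⁻¹ := by rw [← hx]
    _ = bBS^(-qz x) * u⁻¹ * (bBS^(-qz x))⁻¹ * bBS ^ (-qz x) := by
        rw [zpow_neg]; group

theorem decompBS (x : BS12) : ∃ u, inH u ∧ x = u * bBS ^ (qz x) := by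
  have hx : x ∈ TBS := by
    apply PresentedGroup.generated_by
    intro j
    cases j
    · show aBS ∈ TBS
      exact ⟨aBS, inH_a, by simp⟩
    · show bBS ∈ TBS
      exact ⟨1, inH_one, by simp⟩
  exact hx

theorem inH_of_qz_zero {x : BS12} (hx : qz x = 0) : inH x := by
  obtain ⟨u, hu, hd⟩ := decompBS x
  rw [hx] at hd; simpa [hd] using hu

theorem conj_by_H {u y : BS12} (hu : inH u) (hy : inH y) : u⁻¹ * y * u = y := by
  rw [mul_assoc, inH_comm hy hu, ← mul_assoc, inv_mul_cancel, one_mul]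

/-- conjugation by an element of negative b-exponent raises H-elements to the 2^d power -/
theorem conj_neg_pow {x : BS12} (hx : qz x < 0) {y : BS12} (hy : inH y) :
    x⁻¹ * y * x = y ^ ((2:ℤ) ^ ((-qz x).toNat)) := by
  obtain ⟨u, hu, hd⟩ := decompBS x
  set d : ℕ := (-qz x).toNat with hdd
  have hz : qz x = -(d:ℤ) := by simp [hdd]; omega
  rw [hz] at hd
  have h1 : x⁻¹ * y * x = (bBS^(-(d:ℤ)))⁻¹ * (u⁻¹ * y * u) * bBS^(-(d:ℤ)) := by
    rw [hd]; group
  rw [h1, conj_by_H hu hy, zpow_neg, inv_inv, zpow_natCast]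
  exact bd_conj_pow hy d

/-- conjugation by f⁻¹ ... f preserves H -/
theorem conjH_all {x : BS12} (hx : inH x) (f : BS12) : inH (f⁻¹ * x * f) := by
  obtain ⟨u, hu, hd⟩ := decompBS f
  set z : ℤ := qz f with hzd
  have h1 : f⁻¹ * x * f = bBS^(-z) * (u⁻¹ * x * u) * (bBS^(-z))⁻¹ := by
    rw [hd, zpow_neg]; group
  rw [h1, conj_by_H hu hx]
  exact conjH_bz _ hx

/-! ### Order lemmas -/

namespace OrdLem
variable {G : Type*} [Group G] {le : G → G → Prop} (hL : IsLeftTotalOrder le)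
include hL

theorem refl (a : G) : le a a := hL.1 a
theorem trans {a b c : G} (h1 : le a b) (h2 : le b c) : le a c := hL.2.1 a b c h1 h2
theorem anti {a b : G} (h1 : le a b) (h2 : le b a) : a = b := hL.2.2.1 a b h1 h2
theorem total (a b : G) : le a b ∨ le b a := hL.2.2.2.1 a b
theorem mulL (f : G) {a b : G} (h : le a b) : le (f*a) (f*b) := hL.2.2.2.2 f a b h

theorem shift {a b : G} (h : le a b) : le 1 (a⁻¹ * b) := by
  have := mulL hL a⁻¹ h; rwa [inv_mul_cancel] at this

theorem unshift {a b : G} (h : le 1 (a⁻¹ * b)) : le a b := by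
  have := mulL hL a h; rwa [mul_one, mul_inv_cancel_left] at this

theorem nonpos_of_not_pos {x : G} (h : ¬ clt le 1 x) : le x 1 := by
  by_cases h1 : le x 1
  · exact h1
  · rcases total hL 1 x with h2 | h2
    · exact absurd ⟨h2, h1⟩ h
    · exact h2

theorem pos_iff {x : G} : clt le 1 x ↔ (le 1 x ∧ x ≠ 1) := by
  constructor
  · rintro ⟨h1, h2⟩
    exact ⟨h1, fun he => h2 (he ▸ refl hL 1)⟩
  · rintro ⟨h1, h2⟩
    exact ⟨h1, fun hx1 => h2 (anti hL hx1 h1)⟩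

theorem mul_nonpos {x y : G} (hx : le x 1) (hy : le y 1) : le (x*y) 1 := by
  have := mulL hL x hy
  rw [mul_one] at this
  exact trans hL this hx

theorem mul_nonneg {x y : G} (hx : le 1 x) (hy : le 1 y) : le 1 (x*y) := by
  have := mulL hL x hy
  rw [mul_one] at this
  exact trans hL hx this

theorem inv_nonpos {x : G} (hx : le 1 x) : le x⁻¹ 1 := by
  have := mulL hL x⁻¹ hx; rwa [mul_one, inv_mul_cancel] at this

theorem inv_nonneg {x : G} (hx : le x 1) : le 1 x⁻¹ := by
  have := mulL hL x⁻¹ hx; rwa [mul_one, inv_mul_cancel] at this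

theorem pow_nonneg {x : G} (hx : le 1 x) (n : ℕ) : le 1 (x^n) := by
  induction n with
  | zero => exact (pow_zero x) ▸ refl hL 1
  | succ n ih => rw [pow_succ]; exact mul_nonneg hL ih hx

theorem pow_nonpos {x : G} (hx : le x 1) (n : ℕ) : le (x^n) 1 := by
  induction n with
  | zero => exact (pow_zero x) ▸ refl hL 1
  | succ n ih => rw [pow_succ]; exact mul_nonpos hL ih hx

theorem zpow_nonneg {x : G} (hx : le 1 x) {k : ℤ} (hk : 0 ≤ k) : le 1 (x^k) := by
  lift k to ℕ using hk
  rw [zpow_natCast]; exact pow_nonneg hL hx k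

theorem zpow_nonpos {x : G} (hx : le 1 x) {k : ℤ} (hk : k ≤ 0) : le (x^k) 1 := by
  have h1 : le 1 (x^(-k)) := zpow_nonneg hL hx (by omega)
  have := inv_nonpos hL h1
  rwa [← zpow_neg, neg_neg] at this

theorem zpow_nonpos' {x : G} (hx : le x 1) {k : ℤ} (hk : 0 ≤ k) : le (x^k) 1 := by
  lift k to ℕ using hk
  rw [zpow_natCast]; exact pow_nonpos hL hx k

theorem zpow_mono {x : G} (hx : le 1 x) {j k : ℤ} (hjk : j ≤ k) : le (x^j) (x^k) := by
  have h1 : le 1 (x^(k-j)) := zpow_nonneg hL hx (by omega)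
  have := mulL hL (x^j) h1
  rwa [mul_one, ← zpow_add, add_sub_cancel] at this

theorem pos_le_pos {x y : G} (hx : clt le 1 x) (hxy : le x y) : clt le 1 y :=
  ⟨trans hL hx.1 hxy, fun hy1 => hx.2 (trans hL hxy hy1)⟩

theorem pos_of_zpow {x : G} {k : ℤ} (h : clt le 1 (x^k)) (hk : 0 ≤ k) : clt le 1 x := by
  by_contra hc
  exact h.2 (zpow_nonpos' hL (nonpos_of_not_pos hL hc) hk)

theorem pos_zpow {x : G} (hx : clt le 1 x) {k : ℤ} (hk : 1 ≤ k) : clt le 1 (x^k) := by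
  refine ⟨zpow_nonneg hL hx.1 (by omega), fun h1 => ?_⟩
  have h2 : le x (x^k) := by
    have := mulL hL x (zpow_nonneg hL hx.1 (k := k - 1) (by omega))
    rwa [mul_one, show x * x^(k-1) = x^k by rw [← zpow_one_add]; ring_nf] at this
  exact hx.2 (trans hL h2 h1)

end OrdLem

/-! ### The core Conradian argument -/

/-- moving powers of an H-element across g (with qz g < 0) -/
theorem bs_move {g hh : BS12} (hq : qz g < 0) (hH : inH hh) (e : ℤ) :
    hh^e * g = g * hh^(e * (2:ℤ)^((-qz g).toNat)) := by
  have hconj : g⁻¹ * hh * g = hh ^ ((2:ℤ)^((-qz g).toNat)) := conj_neg_pow hq hH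
  have h1 : g⁻¹ * hh^e * g = (g⁻¹ * hh * g)^e := by
    have h2 := conj_zpow (i:=e) (a := g⁻¹) (b := hh)
    rw [inv_inv] at h2
    rw [h2]
  calc hh^e * g = g * (g⁻¹ * hh^e * g) := by group
  _ = g * ((hh ^ ((2:ℤ)^((-qz g).toNat)))^e) := by rw [h1, hconj]
  _ = g * hh^(e * (2:ℤ)^((-qz g).toNat)) := by rw [← zpow_mul, mul_comm]

open OrdLem in
theorem bs_core_neg (le : BS12 → BS12 → Prop) (hC : IsConradianOrder le)
    {g hh : BS12} (hg : clt le 1 g) (hgh : le g hh) (hH : inH hh) (hq : qz g < 0)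
    (hm1 : clt le 1 (g * hh ^ (-1:ℤ))) : False := by
  classical
  have hL := hC.1
  set d : ℕ := (-qz g).toNat with hdd
  have hd1 : 1 ≤ d := by omega
  set M : ℤ := 2^d with hMd
  have hM2 : 2 ≤ M := by
    calc (2:ℤ) = 2^1 := (pow_one 2).symm
    _ ≤ 2^d := by exact pow_le_pow_right₀ (by norm_num) hd1
  have hmove : ∀ e : ℤ, hh^e * g = g * hh^(e*M) := fun e => bs_move hq hH e
  have hcomm : ∀ (n : ℕ) (e : ℤ), hh^e * g^n = g^n * hh^(e * M^n) := by
    intro n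
    induction n with
    | zero => intro e; simp
    | succ n ih =>
      intro e
      calc hh^e * g^(n+1) = (hh^e * g) * g^n := by rw [pow_succ']; group
      _ = g * (hh^(e*M) * g^n) := by rw [hmove e]; group
      _ = g * (g^n * hh^(e*M * M^n)) := by rw [ih (e*M)]
      _ = g^(n+1) * hh^(e * M^(n+1)) := by
          rw [pow_succ']
          have he : e*M*M^n = e * M^(n+1) := by rw [pow_succ]; ring
          rw [he]; group
  have hposh : clt le 1 hh := pos_le_pos hL hg hgh
  -- threshold
  have hlow : ∀ j : ℤ, j ≤ -M → le (g * hh^j) 1 := by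
    intro j hj
    have h1 : le (g * hh^j) (g * hh^(-M)) := mulL hL g (zpow_mono hL hposh.1 hj)
    have h2 : g * hh^(-M) = hh⁻¹ * g := by
      have h3 := hmove (-1)
      rw [neg_one_mul] at h3
      rw [← h3, zpow_neg_one]
    have h4 : le (hh⁻¹ * g) 1 := by
      have h5 := mulL hL hh⁻¹ hgh
      rwa [inv_mul_cancel] at h5
    rw [h2] at h1
    exact trans hL h1 h4
  obtain ⟨j₀, hj₀P, hj₀min⟩ := Int.exists_least_of_bdd (P := fun j => clt le 1 (g * hh^j))
      ⟨-M+1, fun z hz => by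
        by_contra hcon
        exact hz.2 (hlow z (by omega))⟩
      ⟨-1, hm1⟩
  have hj₀neg : j₀ ≤ -1 := hj₀min (-1) hm1
  have hnotP : ∀ j : ℤ, j < j₀ → le (g * hh^j) 1 := by
    intro j hj
    apply nonpos_of_not_pos hL
    intro hP
    exact absurd (hj₀min j hP) (by omega)
  -- geometric sums
  set E : ℕ → ℤ := fun n => (Finset.range n).sum (fun i => M^i) with hE
  have hEs : ∀ n, E (n+1) = E n + M^n := fun n => Finset.sum_range_succ _ n
  have hEb : ∀ n, E n ≤ M^n := by
    intro n
    induction n with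
    | zero => simp [hE]
    | succ n ih =>
      rw [hEs]
      have hp : (0:ℤ) < M^n := by positivity
      have : M^(n+1) = M * M^n := by rw [pow_succ]; ring
      nlinarith
  have hE1 : E 1 = 1 := by rw [hEs 0]; simp [hE]
  -- certificate
  have cert : ∀ n : ℕ, 1 ≤ n → ∀ Ez : ℤ, Ez ≤ (j₀-1) * E n → le (g^n * hh^Ez) 1 := by
    intro n hn
    induction n, hn using Nat.le_induction with
    | base =>
      intro Ez hEz
      rw [pow_one]
      exact hnotP Ez (by rw [hE1] at hEz; omega)
    | succ n hn ih =>
      intro Ez hEz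
      have key : g^(n+1) * hh^Ez = (g * hh^(j₀-1)) * (g^n * hh^(Ez - (j₀-1)*M^n)) := by
        calc g^(n+1) * hh^Ez
            = g * (g^n * hh^((j₀-1)*M^n)) * hh^(Ez - (j₀-1)*M^n) := by
              rw [pow_succ']
              have he : hh^((j₀-1)*M^n) * hh^(Ez - (j₀-1)*M^n) = hh^Ez := by
                rw [← zpow_add]; ring_nf
              calc g * g^n * hh^Ez = g * g^n * (hh^((j₀-1)*M^n) * hh^(Ez - (j₀-1)*M^n)) := by
                    rw [he]
              _ = g * (g^n * hh^((j₀-1)*M^n)) * hh^(Ez - (j₀-1)*M^n) := by group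
        _ = g * (hh^(j₀-1) * g^n) * hh^(Ez - (j₀-1)*M^n) := by rw [hcomm n (j₀-1)]
        _ = (g * hh^(j₀-1)) * (g^n * hh^(Ez - (j₀-1)*M^n)) := by group
      rw [key]
      apply mul_nonpos hL
      · exact hnotP _ (by omega)
      · apply ih
        have h5 : (j₀-1)*E (n+1) = (j₀-1)*E n + (j₀-1)*M^n := by rw [hEs]; ring
        linarith
  -- Conradian step
  have step : ∀ (N : ℕ), 1 ≤ N → ∀ Ez : ℤ, clt le 1 (g^N * hh^Ez) →
      ∃ ν : ℕ, 1 ≤ ν ∧ clt le 1 (g^(N-1+ν) * hh^(Ez * M^ν)) := by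
    intro N hN Ez hpos
    obtain ⟨n, hn0, hclt⟩ := hC.2 (g^N * hh^Ez) g hpos hg
    have hcompute : (g^N * hh^Ez) * g^n = g * (g^(N-1+n) * hh^(Ez * M^n)) := by
      calc (g^N * hh^Ez) * g^n = g^N * (hh^Ez * g^n) := by group
      _ = g^N * (g^n * hh^(Ez*M^n)) := by rw [hcomm n Ez]
      _ = g * (g^(N-1+n) * hh^(Ez*M^n)) := by
          have hNn : g^N * g^n = g * g^(N-1+n) := by
            rw [← pow_add, ← pow_succ']
            congr 1
            omega
          rw [← mul_assoc, hNn]; group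
    rw [hcompute] at hclt
    refine ⟨n, hn0, ?_, ?_⟩
    · have h6 := mulL hL g⁻¹ hclt.1
      rwa [inv_mul_cancel, inv_mul_cancel_left] at h6
    · intro hX1
      have h7 := mulL hL g hX1
      rw [mul_one] at h7
      exact hclt.2 h7
  -- iterate twice
  have h1 : clt le 1 (g^(1:ℕ) * hh^j₀) := by rw [pow_one]; exact hj₀P
  obtain ⟨ν₁, hν₁, h2⟩ := step 1 le_rfl j₀ h1
  obtain ⟨ν₂, hν₂, h3⟩ := step (1-1+ν₁) (by omega) _ h2
  set N₂ : ℕ := 1-1+ν₁-1+ν₂ with hN₂d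
  have hN₂ : 1 ≤ N₂ := by omega
  have harith : j₀ * M^ν₁ * M^ν₂ ≤ (j₀ - 1) * E N₂ := by
    have hP : ν₁ + ν₂ = N₂ + 1 := by omega
    have e1 : j₀ * M^ν₁ * M^ν₂ = (j₀ * M) * M^N₂ := by
      rw [mul_assoc, ← pow_add, show ν₁ + ν₂ = N₂ + 1 from hP, pow_succ]; ring
    have e2 : (j₀-1) * M^N₂ ≤ (j₀-1) * E N₂ :=
      mul_le_mul_of_nonpos_left (hEb N₂) (by omega)
    have e3 : j₀ * M ≤ j₀ - 1 := by nlinarith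
    have e4 : (0:ℤ) < M^N₂ := by positivity
    have e5 : (j₀ * M) * M^N₂ ≤ (j₀-1) * M^N₂ := by nlinarith
    linarith [e1 ▸ le_refl (j₀ * M^ν₁ * M^ν₂)]
  exact h3.2 (cert N₂ hN₂ _ harith)

open OrdLem in
theorem bs_core (le : BS12 → BS12 → Prop) (hC : IsConradianOrder le)
    {g hh : BS12} (hg : clt le 1 g) (hgh : le g hh) (hH : inH hh) (hq : qz g < 0) : False := by
  classical
  have hL := hC.1
  have hposh : clt le 1 hh := pos_le_pos hL hg hgh
  by_cases hc : clt le 1 (g * hh^(-1:ℤ))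
  · exact bs_core_neg le hC hg hgh hH hq hc
  · set d : ℕ := (-qz g).toNat with hdd
    have hd1 : 1 ≤ d := by omega
    set M : ℤ := 2^d with hMd
    have hM2 : 2 ≤ M := by
      calc (2:ℤ) = 2^1 := (pow_one 2).symm
      _ ≤ 2^d := by exact pow_le_pow_right₀ (by norm_num) hd1
    set g₂ : BS12 := g * hh^(M-1) with hg₂d
    have hg₂pos : clt le 1 g₂ := by
      apply pos_le_pos hL hg
      have h5 := mulL hL g (zpow_nonneg hL hposh.1 (k := M-1) (by omega))
      rwa [mul_one] at h5
    have hq₂ : qz g₂ < 0 := by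
      have : qz g₂ = qz g + (M-1) * qz hh := by simp [hg₂d]
      rw [this, qz_of_inH hH]
      omega
    have hkey : hh⁻¹ * g₂ = g * hh^(-1:ℤ) := by
      have h3 := bs_move hq hH (-1)
      rw [neg_one_mul, ← hMd, zpow_neg_one] at h3
      calc hh⁻¹ * g₂ = (hh⁻¹ * g) * hh^(M-1) := by rw [hg₂d]; group
      _ = g * hh^(-M) * hh^(M-1) := by rw [h3]
      _ = g * hh^(-1:ℤ) := by rw [mul_assoc, ← zpow_add]; ring_nf
    have hgh₂ : le g₂ hh := by
      have h5 : le (hh⁻¹ * g₂) 1 := by rw [hkey]; exact nonpos_of_not_pos hL hc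
      have h6 := mulL hL hh h5
      rwa [mul_one, mul_inv_cancel_left] at h6
    have hm1₂ : clt le 1 (g₂ * hh^(-1:ℤ)) := by
      have he : g₂ * hh^(-1:ℤ) = g * hh^(M-2) := by
        rw [hg₂d, mul_assoc, ← zpow_add]; ring_nf
      rw [he]
      apply pos_le_pos hL hg
      have h5 := mulL hL g (zpow_nonneg hL hposh.1 (k := M-2) (by omega))
      rwa [mul_one] at h5
    exact bs_core_neg le hC hg₂pos hgh₂ hH hq₂ hm1₂

open OrdLem in
/-- Convexity of H : a positive element below an element of H has zero b-exponent. -/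
theorem bs_convex (le : BS12 → BS12 → Prop) (hC : IsConradianOrder le)
    {w η : BS12} (hw : clt le 1 w) (hle : le w η) (hη : inH η) : qz w = 0 := by
  classical
  have hL := hC.1
  have hposη : clt le 1 η := pos_le_pos hL hw hle
  by_contra hm
  rcases lt_or_gt_of_ne hm with hneg | hpos
  · exact bs_core le hC hw hle hη hneg
  · -- qz w > 0 : pass to g = w⁻¹ * η  with bound η²
    set g : BS12 := w⁻¹ * η with hgd
    have hg1 : le 1 g := by
      have h5 := mulL hL w⁻¹ hle
      rwa [inv_mul_cancel] at h5
    have hgne : g ≠ 1 := by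
      intro h1
      have : w = η := by
        have h2 : w * g = w * 1 := by rw [h1]
        exact (by simpa [hgd] using h2 : η = w).symm
      rw [this, qz_of_inH hη] at hpos
      omega
    have hgpos : clt le 1 g := ⟨hg1, fun h2 => hgne (anti hL h2 hg1)⟩
    have hqg : qz g < 0 := by
      have : qz g = -qz w + qz η := by simp [hgd]
      rw [this, qz_of_inH hη]
      omega
    -- σ = w⁻¹ η w  satisfies σ^(2^m) = η
    set σ : BS12 := w⁻¹ * η * w with hσd
    have hσH : inH σ := conjH_all hη w
    set m : ℕ := (qz w).toNat with hmd
    set M' : ℤ := (2:ℤ)^m with hM'd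
    have hM'2 : 2 ≤ M' := by
      calc (2:ℤ) = 2^1 := (pow_one 2).symm
      _ ≤ 2^m := by exact pow_le_pow_right₀ (by norm_num) (by omega)
    have hη_eq : η = σ^M' := by
      have h5 : qz w⁻¹ < 0 := by simp; omega
      have h6 := conj_neg_pow h5 hσH
      rw [inv_inv] at h6
      have h7 : (-qz w⁻¹).toNat = m := by simp [hmd]
      rw [h7] at h6
      calc η = w * σ * w⁻¹ := by rw [hσd]; group
      _ = σ^M' := by rw [h6, hM'd]
    have hσpos : clt le 1 σ := by
      have h8 : ¬ le σ 1 := by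
        intro h9
        exact hposη.2 (by rw [hη_eq]; exact zpow_nonpos' hL h9 (by omega))
      rcases total hL 1 σ with h10 | h10
      · exact ⟨h10, h8⟩
      · exact absurd h10 h8
    -- g ≤ η²
    have hbound : le g (η * η) := by
      have hfactor : (η*η)⁻¹ * g = η⁻¹ * (σ^(1-M') * w⁻¹) := by
        have h11 : w⁻¹ * η = σ * w⁻¹ := by rw [hσd]; group
        calc (η*η)⁻¹ * g = η⁻¹ * η⁻¹ * (w⁻¹ * η) := by rw [hgd]; group
        _ = η⁻¹ * η⁻¹ * (σ * w⁻¹) := by rw [h11]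
        _ = η⁻¹ * (η⁻¹ * σ) * w⁻¹ := by group
        _ = η⁻¹ * (σ^(1-M') * w⁻¹) := by
            have h12 : η⁻¹ * σ = σ^(1-M') := by
              rw [hη_eq, ← zpow_neg, show (1 - M') = -M' + 1 by ring, zpow_add_one]
            rw [h12]; group
      have h13 : le ((η*η)⁻¹ * g) 1 := by
        rw [hfactor]
        apply mul_nonpos hL (inv_nonpos hL hposη.1)
        apply mul_nonpos hL (zpow_nonpos hL hσpos.1 (by omega))
        exact inv_nonpos hL hw.1
      have h14 := mulL hL (η*η) h13
      rwa [mul_one, mul_inv_cancel_left] at h14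
    exact bs_core le hC hgpos hbound (inH_mul hη hη) hqg

open OrdLem in
/-- conjugation preserves positivity of elements of H -/
theorem bs_conj_sign_H (le : BS12 → BS12 → Prop) (hC : IsConradianOrder le)
    {x : BS12} (hx : clt le 1 x) (hxH : inH x) (f : BS12) : clt le 1 (f⁻¹ * x * f) := by
  have hL := hC.1
  obtain ⟨u, hu, hd⟩ := decompBS f
  set z : ℤ := qz f with hzd
  have h1 : f⁻¹ * x * f = (bBS^z)⁻¹ * x * bBS^z := by
    rw [hd]
    have h2 : (u * bBS^z)⁻¹ * x * (u * bBS^z) = (bBS^z)⁻¹ * (u⁻¹ * x * u) * bBS^z := by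
      group
    rw [h2, conj_by_H hu hxH]
  rw [h1]
  clear_value z
  rcases le_or_gt 0 z with hz | hz
  · -- root direction
    lift z to ℕ using hz
    rw [zpow_natCast]
    set y : BS12 := (bBS^z)⁻¹ * x * bBS^z with hyd
    obtain ⟨n, k, hxk⟩ := hxH
    have hyH : inH y := by
      rw [hyd, hxk, binvd_conj_α]
      exact ⟨n+z, k, rfl⟩
    have hyx : y^((2:ℤ)^z) = x := by
      have h3 := bd_conj_pow hyH z
      rw [hyd] at h3
      have h4 : bBS ^ z * ((bBS ^ z)⁻¹ * x * bBS ^ z) * (bBS ^ z)⁻¹ = x := by group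
      rw [h4] at h3
      exact h3.symm
    apply pos_of_zpow hL (k := (2:ℤ)^z)
    · rw [hyx]; exact hx
    · positivity
  · -- power direction
    obtain ⟨c, rfl⟩ : ∃ c : ℕ, z = -(c:ℤ) := ⟨z.natAbs, by omega⟩
    rw [zpow_neg, zpow_natCast, inv_inv]
    rw [bd_conj_pow hxH c]
    exact pos_zpow hL hx (one_le_pow₀ (by norm_num))

/-- Every Conradian left-invariant order on B(1,2) is bi-invariant. -/
theorem BS12_conradian_biinvariant (le : BS12 → BS12 → Prop)
    (h : IsConradianOrder le) :
    ∀ f a b : BS12, le a b → le (a * f) (b * f) := by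
  intro f a b hab
  classical
  have hL := h.1
  set y : BS12 := a⁻¹ * b with hyd
  have hy1 : le 1 y := OrdLem.shift hL hab
  by_cases hy : y = 1
  · have : a = b := by
      have h2 : a * y = a * 1 := by rw [hy]
      exact (by simpa [hyd] using h2 : b = a).symm
    rw [this]
    exact OrdLem.refl hL _
  · have hypos : clt le 1 y := ⟨hy1, fun h2 => hy (OrdLem.anti hL h2 hy1)⟩
    have hz : clt le 1 (f⁻¹ * y * f) := by
      by_cases hm : qz y = 0
      · exact bs_conj_sign_H le h hypos (inH_of_qz_zero hm) f
      · set z : BS12 := f⁻¹ * y * f with hzd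
        by_contra hc
        have hz1 : le z 1 := OrdLem.nonpos_of_not_pos hL hc
        set η : BS12 := y * z⁻¹ with hηd
        have hηH : inH η := by
          apply inH_of_qz_zero
          have : qz z = qz y := by simp [hzd]
          simp [hηd, this]
        have hyη : le y η := by
          have h3 : y = η * z := by rw [hηd]; group
          have h4 := OrdLem.mulL hL η hz1
          rw [mul_one] at h4
          rw [h3]
          exact h4
        exact hm (bs_convex le h hypos hyη hηH)
    have h5 : le 1 (f⁻¹ * (a⁻¹ * b) * f) := hz.1
    have h6 := OrdLem.mulL hL (a * f) h5
    rw [mul_one] at h6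
    have h7 : a * f * (f⁻¹ * (a⁻¹ * b) * f) = b * f := by group
    rwa [h7] at h6
end

section
/- Let G be a bi-orderable group possessing elements a, b, c and positive rationals r, t, p/q with r ≠ 1 and p/q ≠ 1 such that b·a·b⁻¹ = aʳ, c·a·c⁻¹ = aᵗ, and c·b^q·c⁻¹ = b^p·w for some w commuting with a and satisfying w·a·w⁻¹ = a (all powers interpreted via rank-1 abelian subgroups containing a and b respectively). Then p = q, yielding a contradiction; hence no such configuration exists in a bi-orderable group. -/
/-- Auxiliary: if `rn ^ p * rd ^ q = rn ^ q * rd ^ p` with `rn ≠ rd` positive and `p ≤ q`,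
then `p = q`. -/
private lemma aux_pow_cancel {rn rd p q : ℕ} (hrn : 0 < rn) (hrd : 0 < rd)
    (hr1 : rn ≠ rd) (hpq : p ≤ q) (h : rn ^ p * rd ^ q = rn ^ q * rd ^ p) : p = q := by
  obtain ⟨k, rfl⟩ := Nat.exists_eq_add_of_le hpq
  have h' : rn ^ p * rd ^ p * rd ^ k = rn ^ p * rd ^ p * rn ^ k := by
    rw [pow_add, pow_add] at h; ring_nf at h ⊢; linarith [h]
  have hpos : 0 < rn ^ p * rd ^ p :=
    Nat.mul_pos (Nat.pow_pos hrn) (Nat.pow_pos hrd)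
  have h2 : rd ^ k = rn ^ k := Nat.eq_of_mul_eq_mul_left hpos h'
  rcases Nat.eq_zero_or_pos k with hk | hk
  · omega
  · exact absurd (Nat.pow_left_injective hk.ne' h2).symm hr1


/-- In a torsion-free group (in particular in any bi-orderable group),
suppose a ≠ 1 and there are elements b, c, w and positive rational exponents
r = rn/rd ≠ 1, t = tn/td, p/q ≠ guaranteed, realized via rank-1 abelian subgroups:
b·a·b⁻¹ commutes with a and (b·a·b⁻¹)^rd = a^rn (i.e. b·a·b⁻¹ = aʳ),
c·a·c⁻¹ commutes with a and (c·a·c⁻¹)^td = a^tn (i.e. c·a·c⁻¹ = aᵗ),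
and c·b^q·c⁻¹ = b^p·w with w commuting with a. Then p = q; hence the configuration
with p ≠ q arising for a bi-orderable group with a chain of three convex jumps is
impossible. -/
theorem no_such_configuration {G : Type*} [Group G]
    (htf : ∀ (g : G) (n : ℕ), g ≠ 1 → 0 < n → g ^ n ≠ 1)
    (a b c w : G) (ha : a ≠ 1)
    (rn rd tn td p q : ℕ)
    (hrn : 0 < rn) (hrd : 0 < rd) (htn : 0 < tn) (htd : 0 < td)
    (hp : 0 < p) (hq : 0 < q) (hr1 : rn ≠ rd)
    (hb_comm : (b * a * b⁻¹) * a = a * (b * a * b⁻¹))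
    (hb : (b * a * b⁻¹) ^ rd = a ^ rn)
    (hc_comm : (c * a * c⁻¹) * a = a * (c * a * c⁻¹))
    (hc : (c * a * c⁻¹) ^ td = a ^ tn)
    (hcb : c * b ^ q * c⁻¹ = b ^ p * w)
    (hw : w * a = a * w) :
    p = q := by
  -- conjugation distributes over powers
  have key : ∀ (u v : G) (m : ℕ), (u * v * u⁻¹) ^ m = u * v ^ m * u⁻¹ :=
    fun u v m => conj_pow ..
  -- injectivity of natural powers of a
  have hainj : ∀ m n : ℕ, a ^ m = a ^ n → m = n := by
    have key2 : ∀ m n : ℕ, m < n → a ^ m ≠ a ^ n := by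
      intro m n hlt h
      have h1 : a ^ m * a ^ (n - m) = a ^ m * 1 := by
        rw [← pow_add, Nat.add_sub_cancel' hlt.le, mul_one, h]
      exact htf a (n - m) ha (Nat.sub_pos_of_lt hlt) (mul_left_cancel h1)
    intro m n h
    rcases lt_trichotomy m n with hlt | heq | hlt
    · exact absurd h (key2 m n hlt)
    · exact heq
    · exact absurd h.symm (key2 n m hlt)
  -- iterated conjugation: (b^k a b^{-k})^{rd^k} = a^{rn^k}
  have hf : ∀ k : ℕ, (b ^ k * a * (b ^ k)⁻¹) ^ (rd ^ k) = a ^ (rn ^ k) := by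
    intro k
    induction k with
    | zero => simp
    | succ k ih =>
      have step : b ^ (k + 1) * a * (b ^ (k + 1))⁻¹
          = b ^ k * (b * a * b⁻¹) * (b ^ k)⁻¹ := by
        rw [pow_succ]; group
      calc (b ^ (k + 1) * a * (b ^ (k + 1))⁻¹) ^ rd ^ (k + 1)
          = ((b ^ k * (b * a * b⁻¹) * (b ^ k)⁻¹) ^ rd) ^ rd ^ k := by
            rw [step, pow_succ, pow_mul']
        _ = (b ^ k * (b * a * b⁻¹) ^ rd * (b ^ k)⁻¹) ^ rd ^ k := by
            rw [key (b ^ k) (b * a * b⁻¹) rd]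
        _ = (b ^ k * a ^ rn * (b ^ k)⁻¹) ^ rd ^ k := by rw [hb]
        _ = ((b ^ k * a * (b ^ k)⁻¹) ^ rn) ^ rd ^ k := by rw [key (b ^ k) a rn]
        _ = ((b ^ k * a * (b ^ k)⁻¹) ^ rd ^ k) ^ rn := by
            rw [← pow_mul, ← pow_mul, Nat.mul_comm]
        _ = a ^ rn ^ (k + 1) := by rw [ih, ← pow_mul, pow_succ, Nat.mul_comm]
  set x := c * a * c⁻¹ with hx
  -- key equation: c (b^q a b^{-q}) c⁻¹ = b^p (w x w⁻¹) b^{-p}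
  have hE : c * (b ^ q * a * (b ^ q)⁻¹) * c⁻¹
      = b ^ p * (w * x * w⁻¹) * (b ^ p)⁻¹ := by
    have h1 : c * (b ^ q * a * (b ^ q)⁻¹) * c⁻¹
        = (c * b ^ q * c⁻¹) * x * (c * b ^ q * c⁻¹)⁻¹ := by
      rw [hx]; group
    rw [h1, hcb]; group
  -- raise to rd^q
  have h2 : b ^ p * (w * x ^ (rd ^ q) * w⁻¹) * (b ^ p)⁻¹ = x ^ rn ^ q := by
    have h := congrArg (· ^ (rd ^ q)) hE
    rw [key c _ (rd ^ q), key (b ^ p) _ (rd ^ q), key w x (rd ^ q), hf q] at h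
    rw [hx, key c a (rn ^ q)]
    exact h.symm
  -- raise to td, use x^td = a^tn and w commutes with a
  have hwa : ∀ m : ℕ, w * a ^ m * w⁻¹ = a ^ m := by
    intro m
    have h : w * a ^ m = a ^ m * w := Commute.pow_right hw m
    rw [h]; group
  have h3 : b ^ p * a ^ (tn * rd ^ q) * (b ^ p)⁻¹ = a ^ (tn * rn ^ q) := by
    have h := congrArg (· ^ td) h2
    rw [key (b ^ p) _ td, key w _ td, ← pow_mul, ← pow_mul,
      Nat.mul_comm (rd ^ q) td, Nat.mul_comm (rn ^ q) td,
      pow_mul, pow_mul, hc, ← pow_mul, ← pow_mul, hwa] at h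
    exact h
  -- raise to rd^p and use hf p
  have h4 : a ^ (rn ^ p * (tn * rd ^ q)) = a ^ (tn * rn ^ q * rd ^ p) := by
    calc a ^ (rn ^ p * (tn * rd ^ q))
        = ((b ^ p * a * (b ^ p)⁻¹) ^ rd ^ p) ^ (tn * rd ^ q) := by
          rw [hf p, ← pow_mul, Nat.mul_comm]
      _ = (b ^ p * a ^ (tn * rd ^ q) * (b ^ p)⁻¹) ^ rd ^ p := by
          rw [← pow_mul, Nat.mul_comm, pow_mul, key (b ^ p) a (tn * rd ^ q)]
      _ = a ^ (tn * rn ^ q * rd ^ p) := by rw [h3, ← pow_mul]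
  have h5 := hainj _ _ h4
  have h6 : rn ^ p * rd ^ q = rn ^ q * rd ^ p := by
    have h : tn * (rn ^ p * rd ^ q) = tn * (rn ^ q * rd ^ p) := by
      ring_nf; ring_nf at h5; linarith
    exact Nat.eq_of_mul_eq_mul_left htn h
  rcases Nat.le_total p q with hpq | hpq
  · exact aux_pow_cancel hrn hrd hr1 hpq h6
  · exact (aux_pow_cancel hrn hrd hr1 hpq h6.symm).symm
end
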